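/- arXiv:0802.0563 — 10 statements merged into one kernel-verified Lean document; each statement's English description precedes it below -/
import Mathlib

section
/- Let q = (√3 − 1)/2 and let f : ℝ → ℝ be a solution of Schilling's problem for q. Then f(x) = 0 for every x in the set ℤ + qℤ = {m + nq : m, n ∈ ℤ}. -/
set_option maxHeartbeats 2000000 in
theorem schilling_sqrt3 (q : ℝ) (hq : q = (Real.sqrt 3 - 1) / 2)
    (f : ℝ → ℝ)
    (hfe : ∀ x : ℝ, f (q * x) = (1 / (4 * q)) * (f (x - 1) + f (x + 1) + 2 * f x))
    (hfv : ∀ x : ℝ, |x| > q / (1 - q) → f x = 0) :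
    ∀ m n : ℤ, f ((m : ℝ) + (n : ℝ) * q) = 0 := by
  have h3 : Real.sqrt 3 ^ 2 = 3 := Real.sq_sqrt (by norm_num)
  have h3n : 0 ≤ Real.sqrt 3 := Real.sqrt_nonneg 3
  have hsa : 1.7320 < Real.sqrt 3 := by nlinarith
  have hsb : Real.sqrt 3 < 1.7321 := by nlinarith
  have hqa : 0.3660 < q := by rw [hq]; linarith
  have hqb : q < 0.36605 := by rw [hq]; linarith
  have hq2 : 2*q^2 + 2*q = 1 := by rw [hq]; linear_combination h3/2
  have h1q : (0:ℝ) < 1 - q := by linarith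
  have hq0 : q ≠ 0 := by intro h; rw [h] at hqa; norm_num at hqa
  clear hq h3 h3n hsa hsb
  have hfe' : ∀ x : ℝ, 4*q*f (q*x) = f (x-1) + f (x+1) + 2*f x := by
    intro x
    rw [hfe x]
    field_simp
  have hsolve : ∀ t : ℝ, 4*q*t = 0 → t = 0 := by
    intro t ht
    rcases mul_eq_zero.mp ht with h | h
    · exfalso; linarith
    · exact h
  have hzP : ∀ y : ℝ, 0 < y → q < y*(1-q) → f y = 0 := by
    intro y hy h
    apply hfv
    rw [gt_iff_lt, abs_of_pos hy, div_lt_iff₀ h1q]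
    exact h
  have hzN : ∀ y : ℝ, y < 0 → q < -(y*(1-q)) → f y = 0 := by
    intro y hy h
    apply hfv
    rw [gt_iff_lt, abs_of_neg hy, div_lt_iff₀ h1q]
    nlinarith
  -- zero values outside the interval
  have z1 : f 1 = 0 := hzP 1 (by norm_num) (by nlinarith)
  have z2 : f 2 = 0 := hzP 2 (by norm_num) (by nlinarith)
  have zn1 : f (-1) = 0 := hzN (-1) (by norm_num) (by nlinarith)
  have zn2 : f (-2) = 0 := hzN (-2) (by norm_num) (by nlinarith)
  have zq2 : f (2*q) = 0 := hzP (2*q) (by nlinarith) (by nlinarith)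
  have zm2q : f (-(2*q)) = 0 := hzN (-(2*q)) (by nlinarith) (by nlinarith)
  have zq2p1 : f (2*q+1) = 0 := hzP (2*q+1) (by nlinarith) (by nlinarith)
  have zm2qm1 : f (-(2*q)-1) = 0 := hzN (-(2*q)-1) (by nlinarith) (by nlinarith)
  have z2m2q : f (2-2*q) = 0 := hzP (2-2*q) (by nlinarith) (by nlinarith)
  have z2qm2 : f (2*q-2) = 0 := hzN (2*q-2) (by nlinarith) (by nlinarith)
  have z3m2q : f (3-2*q) = 0 := hzP (3-2*q) (by nlinarith) (by nlinarith)
  have z2qm3 : f (2*q-3) = 0 := hzN (2*q-3) (by nlinarith) (by nlinarith)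
  have z4q : f (4*q) = 0 := hzP (4*q) (by nlinarith) (by nlinarith)
  have zm4q : f (-(4*q)) = 0 := hzN (-(4*q)) (by nlinarith) (by nlinarith)
  have z4qp1 : f (4*q+1) = 0 := hzP (4*q+1) (by nlinarith) (by nlinarith)
  have zm4qm1 : f (-(4*q)-1) = 0 := hzN (-(4*q)-1) (by nlinarith) (by nlinarith)
  -- core lattice values
  have c0 : f 0 = 0 := by
    have e := hfe' 0
    rw [mul_zero, show (0:ℝ)-1 = -1 by norm_num, show (0:ℝ)+1 = 1 by norm_num,
      zn1, z1] at e
    have h' : (4*q - 2) * f 0 = 0 := by linear_combination e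
    rcases mul_eq_zero.mp h' with h | h
    · exfalso; linarith
    · exact h
  have eP := hfe' (2*q)
  rw [show q*(2*q) = 1-2*q by linear_combination hq2, zq2p1, zq2] at eP
  have eM := hfe' (-(2*q))
  rw [show q*(-(2*q)) = 2*q-1 by linear_combination (-1)*hq2,
    show -(2*q)+1 = 1-2*q by ring, zm2qm1, zm2q] at eM
  have h16 : (16*q^2 - 1) * f (1-2*q) = 0 := by linear_combination (4*q)*eP + eM
  have cP : f (1-2*q) = 0 := by
    rcases mul_eq_zero.mp h16 with h | h
    · exfalso; nlinarith
    · exact h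
  have cM : f (2*q-1) = 0 := by rw [cP] at eP; linarith
  have cq : f q = 0 := by
    have e := hfe' 1
    rw [mul_one, show (1:ℝ)-1 = 0 by norm_num, show (1:ℝ)+1 = 2 by norm_num,
      c0, z2, z1] at e
    exact hsolve _ (by linarith)
  have cmq : f (-q) = 0 := by
    have e := hfe' (-1)
    rw [show q*(-1) = -q by ring, show (-1:ℝ)-1 = -2 by norm_num,
      show (-1:ℝ)+1 = 0 by norm_num, zn2, c0, zn1] at e
    exact hsolve _ (by linarith)
  have c13 : f (1-3*q) = 0 := by
    have e := hfe' (2*q-1)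
    rw [show q*(2*q-1) = 1-3*q by linear_combination hq2,
      show 2*q-1-1 = 2*q-2 by ring, show 2*q-1+1 = 2*q by ring,
      z2qm2, zq2, cM] at e
    exact hsolve _ (by linarith)
  have cm13 : f (3*q-1) = 0 := by
    have e := hfe' (1-2*q)
    rw [show q*(1-2*q) = 3*q-1 by linear_combination (-1)*hq2,
      show 1-2*q-1 = -(2*q) by ring, show 1-2*q+1 = 2-2*q by ring,
      zm2q, z2m2q, cP] at e
    exact hsolve _ (by linarith)
  have c14 : f (4*q-1) = 0 := by
    have e := hfe' (2-2*q)
    rw [show q*(2-2*q) = 4*q-1 by linear_combination (-1)*hq2,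
      show 2-2*q-1 = 1-2*q by ring, show 2-2*q+1 = 3-2*q by ring,
      cP, z3m2q, z2m2q] at e
    exact hsolve _ (by linarith)
  have cm14 : f (1-4*q) = 0 := by
    have e := hfe' (2*q-2)
    rw [show q*(2*q-2) = 1-4*q by linear_combination hq2,
      show 2*q-2-1 = 2*q-3 by ring, show 2*q-2+1 = 2*q-1 by ring,
      z2qm3, cM, z2qm2] at e
    exact hsolve _ (by linarith)
  have c24 : f (4*q-2) = 0 := by
    have e := hfe' (-(4*q))
    rw [show q*(-(4*q)) = 4*q-2 by linear_combination (-2)*hq2,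
      show -(4*q)+1 = 1-4*q by ring, zm4qm1, cm14, zm4q] at e
    exact hsolve _ (by linarith)
  have cm24 : f (2-4*q) = 0 := by
    have e := hfe' (4*q)
    rw [show q*(4*q) = 2-4*q by linear_combination 2*hq2,
      c14, z4qp1, z4q] at e
    exact hsolve _ (by linarith)
  clear hzP hzN z1 z2 zn1 zn2 zq2 zm2q zq2p1 zm2qm1
  clear z2m2q z2qm2 z3m2q z2qm3 z4q zm4q z4qp1 zm4qm1 eP eM h16 hfe
  have main : ∀ N : ℕ, ∀ m n : ℤ, n.natAbs = N → f ((m:ℝ) + (n:ℝ)*q) = 0 := by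
    intro N
    induction N using Nat.strong_induction_on with
    | _ N ih =>
      intro m n hN
      by_cases hbig : |(m:ℝ) + (n:ℝ)*q| > q/(1-q)
      · exact hfv _ hbig
      push_neg at hbig
      have hyU := (abs_le.mp hbig).2
      have hyL := (abs_le.mp hbig).1
      have hQb : q/(1-q) < 0.58 := by rw [div_lt_iff₀ h1q]; nlinarith
      have hq0' : (0:ℝ) ≤ q := by linarith
      by_cases hN5 : 5 ≤ N
      · -- inductive step
        have hnr : |(n:ℝ)| = (N:ℝ) := by
          rw [← hN, Nat.cast_natAbs, Int.cast_abs]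
        have hnU : (n:ℝ) ≤ N := by
          have := le_abs_self ((n:ℝ)); linarith
        have hnL : -(N:ℝ) ≤ (n:ℝ) := by
          have := neg_abs_le ((n:ℝ)); linarith
        have hp1 := mul_le_mul_of_nonneg_right hnU hq0'
        have hp2 := mul_le_mul_of_nonneg_right hnL hq0'
        have hN5' : (5:ℝ) ≤ (N:ℝ) := by exact_mod_cast hN5
        have hprod : (0:ℝ) ≤ ((N:ℝ) - 5) * (1 - 2*q) := by
          apply mul_nonneg <;> linarith
        have habs : |((2*m:ℤ):ℝ)| < (N:ℝ) := by
          push_cast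
          rw [abs_lt]
          constructor <;> nlinarith
        have hlt : (2*m).natAbs < N := by
          have h' : ((2*m).natAbs : ℝ) < (N:ℝ) := by
            rw [Nat.cast_natAbs, Int.cast_abs]; exact habs
          exact_mod_cast h'
        have w1 := ih _ hlt (2*m+n-1) (2*m) rfl
        have w2 := ih _ hlt (2*m+n+1) (2*m) rfl
        have w3 := ih _ hlt (2*m+n) (2*m) rfl
        have e := hfe' (2*(m:ℝ)+(n:ℝ) + 2*(m:ℝ)*q)
        rw [show q*(2*(m:ℝ)+(n:ℝ) + 2*(m:ℝ)*q) = (m:ℝ)+(n:ℝ)*q by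
            linear_combination (m:ℝ)*hq2] at e
        rw [show 2*(m:ℝ)+(n:ℝ) + 2*(m:ℝ)*q - 1
              = ((2*m+n-1:ℤ):ℝ) + ((2*m:ℤ):ℝ)*q by push_cast; ring] at e
        rw [show 2*(m:ℝ)+(n:ℝ) + 2*(m:ℝ)*q + 1
              = ((2*m+n+1:ℤ):ℝ) + ((2*m:ℤ):ℝ)*q by push_cast; ring] at e
        rw [show 2*(m:ℝ)+(n:ℝ) + 2*(m:ℝ)*q
              = ((2*m+n:ℤ):ℝ) + ((2*m:ℤ):ℝ)*q by push_cast; ring] at e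
        rw [w1, w2, w3] at e
        exact hsolve _ (by linarith)
      · -- base case
        push_neg at hN5
        have hn1 : -4 ≤ n := by omega
        have hn2 : n ≤ 4 := by omega
        have hn1' : (-4:ℝ) ≤ (n:ℝ) := by exact_mod_cast hn1
        have hn2' : (n:ℝ) ≤ 4 := by exact_mod_cast hn2
        have hp1 := mul_le_mul_of_nonneg_right hn1' hq0'
        have hp2 := mul_le_mul_of_nonneg_right hn2' hq0'
        have hmU : m < 3 := by
          have h' : (m:ℝ) < 3 := by linarith
          exact_mod_cast h'
        have hmL : -3 < m := by
          have h' : (-3:ℝ) < (m:ℝ) := by linarith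
          exact_mod_cast h'
        have hyU2 : ((m:ℝ)+(n:ℝ)*q)*(1-q) ≤ q := by
          rw [← le_div_iff₀ h1q]; exact hyU
        have hyL2 : -q ≤ ((m:ℝ)+(n:ℝ)*q)*(1-q) := by
          have h' := mul_le_mul_of_nonneg_right hyL (le_of_lt h1q)
          have h2 : q/(1-q)*(1-q) = q := div_mul_cancel₀ q (ne_of_gt h1q)
          nlinarith
        clear hfv hfe' hsolve
        clear hbig hyU hyL ih hN hN5 hQb hq0' hp1 hp2 hn1' hn2' hq0
        interval_cases m <;> interval_cases n <;>
          first
            | (convert c0 using 2; push_cast; ring1)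
            | (convert cP using 2; push_cast; ring1)
            | (convert cM using 2; push_cast; ring1)
            | (convert cq using 2; push_cast; ring1)
            | (convert cmq using 2; push_cast; ring1)
            | (convert c13 using 2; push_cast; ring1)
            | (convert cm13 using 2; push_cast; ring1)
            | (convert c14 using 2; push_cast; ring1)
            | (convert cm14 using 2; push_cast; ring1)
            | (convert c24 using 2; push_cast; ring1)
            | (convert cm24 using 2; push_cast; ring1)
            | (exfalso; push_cast at hyU2 hyL2; linarith)
  intro m n
  exact main n.natAbs m n rfl
end

section
/- Let q = (3 − √5)/2 and let f : ℝ → ℝ be a solution of Schilling's problem for q. Then f(x) = 0 for every x in the set ℤ + qℤ = {m + nq : m, n ∈ ℤ}. -/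
theorem schilling_35 (q : ℝ) (hq : q = (3 - Real.sqrt 5) / 2)
    (f : ℝ → ℝ)
    (hfe : ∀ x : ℝ, f (q * x) = (1 / (4 * q)) * (f (x - 1) + f (x + 1) + 2 * f x))
    (hfv : ∀ x : ℝ, |x| > q / (1 - q) → f x = 0) :
    ∀ m n : ℤ, f ((m : ℝ) + (n : ℝ) * q) = 0 := by
  have hs5 : Real.sqrt 5 ^ 2 = 5 := Real.sq_sqrt (by norm_num)
  have hsnn : (0:ℝ) ≤ Real.sqrt 5 := Real.sqrt_nonneg 5
  have hs2 : 2 < Real.sqrt 5 := by nlinarith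
  have hs3 : Real.sqrt 5 < 5/2 := by nlinarith
  have hq0 : 0 < q := by rw [hq]; linarith
  have hq12 : q < 1/2 := by rw [hq]; linarith
  have hq14 : 1/4 < q := by rw [hq]; linarith
  have hqq : q^2 = 3*q - 1 := by rw [hq]; linear_combination (1/4 : ℝ) * hs5
  have hQ : q / (1 - q) = 1 - q := by
    rw [div_eq_iff (by linarith : (1:ℝ) - q ≠ 0)]
    linear_combination (-1 : ℝ) * hqq
  have hfv' : ∀ x : ℝ, |x| > 1 - q → f x = 0 := fun x hx => hfv x (by rw [hQ]; exact hx)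
  -- base values
  have h1 : f 1 = 0 := hfv' 1 (by rw [abs_one]; linarith)
  have h1' : f (-1) = 0 := hfv' (-1) (by rw [abs_neg, abs_one]; linarith)
  have h2 : f 2 = 0 := hfv' 2 (by rw [abs_of_pos (by norm_num : (0:ℝ) < 2)]; linarith)
  have h2' : f (-2) = 0 := hfv' (-2) (by rw [abs_neg, abs_of_pos (by norm_num : (0:ℝ) < 2)]; linarith)
  have hf0 : f 0 = 0 := by
    have h := hfe 0
    rw [mul_zero, zero_sub, zero_add, h1, h1'] at h
    have h4 : (4*q - 2) * f 0 = 0 := by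
      have hne : (4:ℝ)*q ≠ 0 := by positivity
      field_simp at h
      linarith
    rcases mul_eq_zero.mp h4 with h' | h'
    · linarith
    · exact h'
  have hfq : f q = 0 := by
    have h := hfe 1
    rw [mul_one] at h
    norm_num at h
    rw [hf0, h2, h1] at h
    simpa using h
  have hfq' : f (-q) = 0 := by
    have h := hfe (-1)
    have e : q * (-1) = -q := by ring
    rw [e] at h
    norm_num at h
    rw [h2', hf0, h1'] at h
    simpa using h
  have hfQ : f (1 - q) = 0 := by
    have h := hfe (2 - q)
    have e : q * (2 - q) = 1 - q := by linear_combination (-1:ℝ) * hqq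
    have e1 : (2 - q) - 1 = 1 - q := by ring
    rw [e, e1] at h
    have z1 : f (2 - q + 1) = 0 := hfv' _ (by rw [abs_of_pos (by linarith)]; linarith)
    have z2 : f (2 - q) = 0 := hfv' _ (by rw [abs_of_pos (by linarith)]; linarith)
    rw [z1, z2] at h
    have h4 : (4*q - 1) * f (1 - q) = 0 := by
      have hne : (4:ℝ)*q ≠ 0 := by positivity
      field_simp at h
      linarith
    rcases mul_eq_zero.mp h4 with h' | h'
    · linarith
    · exact h'
  have hfQ' : f (q - 1) = 0 := by
    have h := hfe (q - 2)
    have e : q * (q - 2) = q - 1 := by linear_combination hqq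
    have e1 : (q - 2) + 1 = q - 1 := by ring
    rw [e, e1] at h
    have z1 : f (q - 2 - 1) = 0 := hfv' _ (by
      rw [abs_of_neg (by linarith)]; linarith)
    have z2 : f (q - 2) = 0 := hfv' _ (by
      rw [abs_of_neg (by linarith)]; linarith)
    rw [z1, z2] at h
    have h4 : (4*q - 1) * f (q - 1) = 0 := by
      have hne : (4:ℝ)*q ≠ 0 := by positivity
      field_simp at h
      linarith
    rcases mul_eq_zero.mp h4 with h' | h'
    · linarith
    · exact h'
  -- main induction on |n|
  have key : ∀ k : ℕ, ∀ n : ℤ, n.natAbs ≤ k → ∀ m : ℤ, f ((m : ℝ) + (n : ℝ) * q) = 0 := by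
    intro k
    induction k with
    | zero =>
      intro n hn m
      have hn0 : n = 0 := Int.natAbs_eq_zero.mp (Nat.le_zero.mp hn)
      subst hn0
      simp only [Int.cast_zero, zero_mul, add_zero]
      by_cases hm : m = 0
      · subst hm; simpa using hf0
      · apply hfv'
        have h1m : (1:ℝ) ≤ |(m:ℝ)| := by
          have : (1:ℤ) ≤ |m| := Int.one_le_abs hm
          calc (1:ℝ) ≤ ((|m| : ℤ) : ℝ) := by exact_mod_cast this
          _ = |(m:ℝ)| := by push_cast; ring
        linarith
    | succ k ih =>
      intro n hn m
      by_cases hnk : n.natAbs ≤ k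
      · exact ih n hnk m
      have hnab : n.natAbs = k + 1 := le_antisymm hn (by omega)
      by_cases hk0 : k = 0
      · -- |n| = 1
        have hn1 : n = 1 ∨ n = -1 := by omega
        rcases hn1 with h | h <;> subst h
        · -- n = 1
          simp only [Int.cast_one, one_mul]
          by_cases hm : m = 0
          · subst hm; simpa using hfq
          by_cases hm1 : m = -1
          · subst hm1
            have e : ((-1:ℤ):ℝ) + q = q - 1 := by push_cast; ring
            rw [e]; exact hfQ'
          apply hfv'
          have : 1 ≤ m ∨ m ≤ -2 := by omega
          rcases this with h | h
          · have : (1:ℝ) ≤ (m:ℝ) := by exact_mod_cast h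
            have hlt : 1 - q < (m:ℝ) + q := by linarith
            exact lt_of_lt_of_le hlt (le_abs_self _)
          · have : (m:ℝ) ≤ -2 := by exact_mod_cast h
            have hlt : 1 - q < -((m:ℝ) + q) := by linarith
            exact lt_of_lt_of_le hlt (neg_le_abs _)
        · -- n = -1
          simp only [Int.cast_neg, Int.cast_one, neg_one_mul]
          by_cases hm : m = 0
          · subst hm; simpa using hfq'
          by_cases hm1 : m = 1
          · subst hm1
            have e : ((1:ℤ):ℝ) + -q = 1 - q := by push_cast; ring
            rw [e]; exact hfQ
          apply hfv'
          have : 2 ≤ m ∨ m ≤ -1 := by omega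
          rcases this with h | h
          · have : (2:ℝ) ≤ (m:ℝ) := by exact_mod_cast h
            have hlt : 1 - q < (m:ℝ) + -q := by linarith
            exact lt_of_lt_of_le hlt (le_abs_self _)
          · have : (m:ℝ) ≤ -1 := by exact_mod_cast h
            have hlt : 1 - q < -((m:ℝ) + -q) := by linarith
            exact lt_of_lt_of_le hlt (neg_le_abs _)
      · -- |n| = k+1 ≥ 2
        have hn2 : 2 ≤ n.natAbs := by omega
        by_cases hbig : |(m:ℝ) + (n:ℝ) * q| > 1 - q
        · exact hfv' _ hbig
        push_neg at hbig
        have hnr : ((n.natAbs : ℕ) : ℝ) = |(n:ℝ)| := by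
          simp [Nat.cast_natAbs]
        have hmr : ((m.natAbs : ℕ) : ℝ) = |(m:ℝ)| := by
          simp [Nat.cast_natAbs]
        have t2 : (2:ℝ) ≤ |(n:ℝ)| := by
          rw [← hnr]; exact_mod_cast hn2
        have t1 : |(m:ℝ)| ≤ |(m:ℝ) + (n:ℝ)*q| + |(n:ℝ)| * q := by
          have h := abs_add_le ((m:ℝ) + (n:ℝ)*q) (-((n:ℝ)*q))
          rw [add_neg_cancel_right] at h
          rwa [abs_neg, abs_mul, abs_of_pos hq0] at h
        have hmn : m.natAbs < n.natAbs := by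
          have hr : |(m:ℝ)| < |(n:ℝ)| := by
            nlinarith [mul_nonneg (by linarith : (0:ℝ) ≤ |(n:ℝ)| - 2) (by linarith : (0:ℝ) ≤ 1 - q)]
          rw [← hmr, ← hnr] at hr
          exact_mod_cast hr
        have hm' : m.natAbs ≤ k := by omega
        have hmabs : (-m).natAbs ≤ k := by rw [Int.natAbs_neg]; exact hm'
        have hx := hfe (((3*m+n : ℤ):ℝ) + ((-m : ℤ):ℝ)*q)
        have e : q * (((3*m+n : ℤ):ℝ) + ((-m:ℤ):ℝ)*q) = (m:ℝ) + (n:ℝ)*q := by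
          push_cast
          linear_combination (-(m:ℝ)) * hqq
        have e1 : ((3*m+n:ℤ):ℝ) + ((-m:ℤ):ℝ)*q - 1 = ((3*m+n-1:ℤ):ℝ) + ((-m:ℤ):ℝ)*q := by
          push_cast; ring
        have e2 : ((3*m+n:ℤ):ℝ) + ((-m:ℤ):ℝ)*q + 1 = ((3*m+n+1:ℤ):ℝ) + ((-m:ℤ):ℝ)*q := by
          push_cast; ring
        rw [e, e1, e2, ih (-m) hmabs (3*m+n-1), ih (-m) hmabs (3*m+n+1),
          ih (-m) hmabs (3*m+n)] at hx
        simpa using hx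
  intro m n
  exact key n.natAbs n le_rfl m
end

section
/- Let q = √2 − 1 and let f : ℝ → ℝ be a solution of Schilling's problem for q. Then f(x) = 0 for every x in the set ℤ + qℤ = {m + nq : m, n ∈ ℤ}. -/
set_option maxHeartbeats 1000000

theorem schilling_sqrt2 (q : ℝ) (hq : q = Real.sqrt 2 - 1)
    (f : ℝ → ℝ)
    (hfe : ∀ x : ℝ, f (q * x) = (1 / (4 * q)) * (f (x - 1) + f (x + 1) + 2 * f x))
    (hfv : ∀ x : ℝ, |x| > q / (1 - q) → f x = 0) :
    ∀ m n : ℤ, f ((m : ℝ) + (n : ℝ) * q) = 0 := by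
  set s := Real.sqrt 2 with hs
  have hs2 : s ^ 2 = 2 := Real.sq_sqrt (by norm_num)
  have hspos : 0 < s := Real.sqrt_pos.mpr (by norm_num)
  have hslb : 1.414 < s := by nlinarith
  have hsub : s < 1.415 := by nlinarith
  have hqpos : 0 < q := by rw [hq]; nlinarith
  have hQ : q / (1 - q) = 1 / s := by
    rw [hq, div_eq_div_iff (by nlinarith : (1:ℝ) - (s-1) ≠ 0) hspos.ne']
    nlinarith
  have hfv' : ∀ x : ℝ, 1 / s < |x| → f x = 0 := fun x h => hfv x (by rw [hQ]; exact h)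
  have hs1 : 1 / s < 1 := by
    rw [div_lt_one hspos]; nlinarith
  have f0 : f 0 = 0 := by
    have h := hfe 0
    rw [mul_zero] at h
    rw [hfv' (0 - 1) (by rw [show (0:ℝ) - 1 = -1 by norm_num, abs_neg, abs_one]; exact hs1),
        hfv' (0 + 1) (by rw [show (0:ℝ) + 1 = 1 by norm_num, abs_one]; exact hs1)] at h
    have h2 : f 0 * (4 * q - 2) = 0 := by
      field_simp at h
      linarith
    rcases mul_eq_zero.mp h2 with h3 | h3
    · exact h3
    · exfalso; rw [hq] at h3; nlinarith
  have key : ∀ k : ℕ, ∀ m n : ℤ,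
      |(m : ℝ) + (n : ℝ) * (-1 - s)| ≤ 2 + k * (3 - 2 * s) →
      f ((m : ℝ) + (n : ℝ) * q) = 0 := by
    intro k
    induction k with
    | zero =>
      intro m n hb
      simp only [Nat.cast_zero, zero_mul, add_zero] at hb
      by_cases hx : 1 / s < |(m : ℝ) + (n : ℝ) * q|
      · exact hfv' _ hx
      · push_neg at hx
        have hn : n = 0 := by
          by_contra hne
          have h1 : (1 : ℝ) ≤ |(n : ℝ)| := by
            have := Int.one_le_abs hne
            calc (1:ℝ) ≤ (|n| : ℤ) := by exact_mod_cast this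
              _ = |(n : ℝ)| := by push_cast; ring
          have h2 : |(n : ℝ) * (2 * s)| ≤ |(m : ℝ) + (n : ℝ) * q| + |(m : ℝ) + (n : ℝ) * (-1 - s)| := by
            have : (n : ℝ) * (2 * s) = ((m : ℝ) + (n : ℝ) * q) - ((m : ℝ) + (n : ℝ) * (-1 - s)) := by
              rw [hq]; ring
            rw [this]
            exact abs_sub _ _
          rw [abs_mul] at h2
          have h3 : |(2 : ℝ) * s| = 2 * s := abs_of_pos (by linarith)
          rw [h3] at h2
          have h4 : 1 / s ≤ s / 2 := by
            rw [div_le_div_iff₀ hspos (by norm_num)]; nlinarith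
          nlinarith
        subst hn
        have hm : m = 0 := by
          by_contra hme
          have h1 : (1 : ℝ) ≤ |(m : ℝ)| := by
            have := Int.one_le_abs hme
            calc (1:ℝ) ≤ (|m| : ℤ) := by exact_mod_cast this
              _ = |(m : ℝ)| := by push_cast; ring
          simp only [Int.cast_zero, zero_mul, add_zero] at hx
          linarith
        subst hm
        simpa using f0
    | succ k ih =>
      intro m n hb
      by_cases hx : 1 / s < |(m : ℝ) + (n : ℝ) * q|
      · exact hfv' _ hx
      · push_neg at hx
        have hy := hfe ((n : ℝ) + 2 * (m : ℝ) + (m : ℝ) * q)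
        have harg : q * ((n : ℝ) + 2 * (m : ℝ) + (m : ℝ) * q) = (m : ℝ) + (n : ℝ) * q := by
          rw [hq]; linear_combination (m : ℝ) * hs2
        rw [harg] at hy
        -- bound on the conjugate of the parent point
        have hxstar : |(m : ℝ) + (n : ℝ) * (-1 - s)| ≤ 2 + (k + 1 : ℕ) * (3 - 2 * s) := hb
        have hcb : ∀ e : ℤ, |e| ≤ 1 →
            |((n + 2 * m + e : ℤ) : ℝ) + (m : ℝ) * (-1 - s)| ≤ 2 + (k : ℝ) * (3 - 2 * s) := by
          intro e he
          have hid : ((n + 2 * m + e : ℤ) : ℝ) + (m : ℝ) * (-1 - s)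
              = -(q * ((m : ℝ) + (n : ℝ) * (-1 - s))) + (e : ℝ) := by
            push_cast
            rw [hq]; linear_combination (-(n : ℝ)) * hs2
          rw [hid]
          have h1 : |(-(q * ((m : ℝ) + (n : ℝ) * (-1 - s))) + (e : ℝ))|
              ≤ q * |(m : ℝ) + (n : ℝ) * (-1 - s)| + 1 := by
            calc |(-(q * ((m : ℝ) + (n : ℝ) * (-1 - s))) + (e : ℝ))|
                ≤ |(-(q * ((m : ℝ) + (n : ℝ) * (-1 - s))))| + |(e : ℝ)| := abs_add_le _ _
              _ = q * |(m : ℝ) + (n : ℝ) * (-1 - s)| + |(e : ℝ)| := by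
                  rw [abs_neg, abs_mul, abs_of_pos hqpos]
              _ ≤ q * |(m : ℝ) + (n : ℝ) * (-1 - s)| + 1 := by
                  have : |(e : ℝ)| ≤ 1 := by
                    calc |(e : ℝ)| = ((|e| : ℤ) : ℝ) := by push_cast; ring
                      _ ≤ 1 := by exact_mod_cast he
                  linarith
          have hkc : (((k + 1 : ℕ)) : ℝ) = (k : ℝ) + 1 := by push_cast; ring
          rw [hkc] at hxstar
          have hknn : (0 : ℝ) ≤ (k : ℝ) := Nat.cast_nonneg k
          have habs : 0 ≤ |(m : ℝ) + (n : ℝ) * (-1 - s)| := abs_nonneg _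
          rw [hq] at h1 ⊢
          nlinarith [mul_nonneg (by nlinarith : (0:ℝ) ≤ 10 - 7 * s) (by linarith : (0:ℝ) ≤ (k:ℝ) + 1)]
        have c1 := ih (n + 2 * m - 1) m (hcb (-1) (by norm_num))
        have c2 := ih (n + 2 * m + 1) m (hcb 1 (by norm_num))
        have c3 := ih (n + 2 * m) m (by simpa using hcb 0 (by norm_num))
        rw [show ((n : ℝ) + 2 * (m : ℝ) + (m : ℝ) * q - 1) = ((n + 2 * m - 1 : ℤ) : ℝ) + (m : ℝ) * q by push_cast; ring] at hy
        rw [show ((n : ℝ) + 2 * (m : ℝ) + (m : ℝ) * q + 1) = ((n + 2 * m + 1 : ℤ) : ℝ) + (m : ℝ) * q by push_cast; ring] at hy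
        rw [show ((n : ℝ) + 2 * (m : ℝ) + (m : ℝ) * q) = ((n + 2 * m : ℤ) : ℝ) + (m : ℝ) * q by push_cast; ring] at hy
        rw [c1, c2, c3] at hy
        simpa using hy
  intro m n
  obtain ⟨k, hk⟩ := exists_nat_ge (|(m : ℝ) + (n : ℝ) * (-1 - s)| / (3 - 2 * s))
  apply key k
  have h32 : (0 : ℝ) < 3 - 2 * s := by linarith
  rw [div_le_iff₀ h32] at hk
  linarith
end

section
/- Let q ∈ (0,1), Q = q/(1−q), and let f : ℝ → ℝ be a solution of Schilling's problem for q. If there exists δ > 0 such that f vanishes on the interval (Q − δ, Q], then f vanishes everywhere on ℝ. -/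
theorem schilling_vanish_right (q : ℝ) (hq : q ∈ Set.Ioo (0 : ℝ) 1)
    (f : ℝ → ℝ)
    (hfe : ∀ x : ℝ, f (q * x) = (1 / (4 * q)) * (f (x - 1) + f (x + 1) + 2 * f x))
    (hfv : ∀ x : ℝ, |x| > q / (1 - q) → f x = 0)
    (hδ : ∃ δ > (0 : ℝ), ∀ x ∈ Set.Ioc (q / (1 - q) - δ) (q / (1 - q)), f x = 0) :
    ∀ x : ℝ, f x = 0 := by
  obtain ⟨hq0, hq1⟩ := hq
  obtain ⟨δ₀, hδ₀, h0⟩ := hδ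
  set Q := q / (1 - q) with hQ
  have h1q : (0:ℝ) < 1 - q := by linarith
  have hQpos : 0 < Q := div_pos hq0 h1q
  have hqQ : q * (Q + 1) = Q := by
    rw [hQ, div_add_one h1q.ne', mul_div_assoc']; congr 1; ring
  -- base case
  have base : ∀ z : ℝ, Q - δ₀ < z → f z = 0 := by
    intro z hz
    rcases le_or_gt z Q with h | h
    · exact h0 z ⟨hz, h⟩
    · exact hfv z (by rw [abs_of_pos (lt_trans hQpos h)]; exact h)
  -- propagation step
  have step : ∀ δ : ℝ, (∀ z : ℝ, Q - δ < z → f z = 0) →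
      ∀ z : ℝ, Q - min (δ / q) (1 + δ) < z → f z = 0 := by
    intro δ hP z hz
    have hmr := min_le_right (δ / q) (1 + δ)
    have h1 : f (z + 1) = 0 := by apply hP; linarith
    have h2 : f (z + 2) = 0 := by apply hP; linarith
    have h3 : f (q * (z + 1)) = 0 := by
      apply hP
      have hm : q * min (δ / q) (1 + δ) ≤ δ := by
        calc q * min (δ / q) (1 + δ) ≤ q * (δ / q) :=
              mul_le_mul_of_nonneg_left (min_le_left _ _) hq0.le
          _ = δ := by field_simp
      nlinarith [hqQ]
    have he := (hfe (z + 1)).symm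
    rw [h3] at he
    have hne : (1 : ℝ) / (4 * q) ≠ 0 := by positivity
    rcases mul_eq_zero.mp he with h | h
    · exact absurd h hne
    · have hz1 : z + 1 - 1 = z := by ring
      have hz2 : z + 1 + 1 = z + 2 := by ring
      rw [hz1, hz2, h1, h2] at h
      linarith
  -- iterate
  set c : ℝ := min (δ₀ * (1 - q) / q) 1 with hc
  have hcpos : 0 < c := lt_min (by positivity) one_pos
  have hc1 : c ≤ 1 := min_le_right _ _
  have main : ∀ n : ℕ, ∀ z : ℝ, Q - (δ₀ + n * c) < z → f z = 0 := by
    intro n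
    induction n with
    | zero => intro z hz; exact base z (by push_cast at hz; linarith)
    | succ n ih =>
      intro z hz
      set δ := δ₀ + n * c with hδdef
      have hδpos : δ₀ ≤ δ := by
        have : (0:ℝ) ≤ n * c := by positivity
        linarith
      have key : δ + c ≤ min (δ / q) (1 + δ) := by
        apply le_min
        · have hcle : c ≤ δ₀ * (1 - q) / q := min_le_left _ _
          have : δ / q = δ + δ * (1 - q) / q := by field_simp; ring
          rw [this]
          have : δ₀ * (1 - q) / q ≤ δ * (1 - q) / q := by
            gcongr
          linarith
        · linarith
      apply step δ ih z
      have : (↑(n + 1) : ℝ) * c = n * c + c := by push_cast; ring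
      rw [this] at hz
      linarith
  intro x
  rcases lt_or_ge x (-Q) with h | h
  · exact hfv x (by rw [abs_of_neg (by linarith)]; linarith)
  · obtain ⟨n, hn⟩ := exists_nat_gt ((Q - x - δ₀) / c)
    apply main n
    have : Q - x - δ₀ < n * c := by
      rw [div_lt_iff₀ hcpos] at hn; linarith
    linarith
end

section
/- Let q ∈ (0,1), Q = q/(1−q), and let f : ℝ → ℝ be a solution of Schilling's problem for q. If there exists δ > 0 such that f vanishes on the interval [−Q, −Q + δ), then f vanishes everywhere on ℝ. -/
theorem schilling_vanish_left (q : ℝ) (hq : q ∈ Set.Ioo (0 : ℝ) 1)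
    (f : ℝ → ℝ)
    (hfe : ∀ x : ℝ, f (q * x) = (1 / (4 * q)) * (f (x - 1) + f (x + 1) + 2 * f x))
    (hfv : ∀ x : ℝ, |x| > q / (1 - q) → f x = 0)
    (hδ : ∃ δ > (0 : ℝ), ∀ x ∈ Set.Ico (-(q / (1 - q))) (-(q / (1 - q)) + δ), f x = 0) :
    ∀ x : ℝ, f x = 0 := by
  obtain ⟨hq0, hq1⟩ := hq
  obtain ⟨δ, hδ0, hδv⟩ := hδ
  set Q : ℝ := q / (1 - q) with hQdef
  have h1q : 0 < 1 - q := by linarith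
  have hQ0 : 0 < Q := div_pos hq0 h1q
  set P : ℝ → Prop := fun t => ∀ x, x < t → f x = 0 with hP
  have mono : ∀ s t : ℝ, s ≤ t → P t → P s :=
    fun s t hst h x hx => h x (lt_of_lt_of_le hx hst)
  have base : P (-Q + δ) := by
    intro x hx
    rcases lt_or_ge x (-Q) with h | h
    · exact hfv x (by rw [abs_of_neg (by linarith)]; linarith)
    · exact hδv x ⟨h, hx⟩
  have step : ∀ t : ℝ, P t → P (min (t + 1) (t / q + 1)) := by
    intro t ht y hy
    have h1 : y - 1 < t := by
      have := lt_of_lt_of_le hy (min_le_left _ _); linarith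
    have h2 : y - 2 < t := by linarith
    have h3 : q * (y - 1) < t := by
      have h := lt_of_lt_of_le hy (min_le_right _ _)
      have h' : y - 1 < t / q := by linarith
      calc q * (y - 1) < q * (t / q) := (mul_lt_mul_iff_right₀ hq0).2 h'
        _ = t := by field_simp
    have heq := hfe (y - 1)
    rw [show y - 1 - 1 = y - 2 by ring, show y - 1 + 1 = y by ring] at heq
    rw [ht _ h3, ht _ h2, ht _ h1] at heq
    have h4q : (4 : ℝ) * q ≠ 0 := by positivity
    field_simp at heq
    linarith [heq]
  have grow : ∀ n : ℕ, P (-Q + δ / q ^ n) ∨ ∃ t, 0 < t ∧ P t := by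
    intro n
    induction n with
    | zero => left; simpa using base
    | succ n ih =>
      rcases ih with h | h
      · rcases le_or_gt (-Q + δ / q ^ n) 0 with ht | ht
        · left
          set t := -Q + δ / q ^ n with htdef
          have hdiv : t / q ≤ t := by
            rw [div_le_iff₀ hq0]
            nlinarith
          have hmin : t / q + 1 ≤ t + 1 := by linarith
          have hst := step t h
          rw [min_eq_right hmin] at hst
          have hqn : (q : ℝ) ^ n ≠ 0 := by positivity
          have hqne : (q : ℝ) ≠ 0 := ne_of_gt hq0
          have heq : t / q + 1 = -Q + δ / q ^ (n + 1) := by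
            rw [htdef, hQdef]
            field_simp
            ring
          rwa [heq] at hst
        · right; exact ⟨_, ht, h⟩
      · right; exact h
  obtain ⟨t, ht0, htP⟩ : ∃ t, 0 < t ∧ P t := by
    obtain ⟨n, hn⟩ := exists_pow_lt_of_lt_one (div_pos hδ0 hQ0) hq1
    rcases grow n with h | h
    · refine ⟨_, ?_, h⟩
      have hqn : (0 : ℝ) < q ^ n := by positivity
      have : Q * q ^ n < δ := by
        rw [mul_comm]; exact (lt_div_iff₀ hQ0).1 hn
      have : Q < δ / q ^ n := (lt_div_iff₀ hqn).2 (by linarith)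
      linarith
    · exact h
  have steps : ∀ n : ℕ, P (t + n) := by
    intro n
    induction n with
    | zero => simpa using htP
    | succ n ih =>
      have hpos : 0 < t + n := by positivity
      have hdiv : t + n ≤ (t + n) / q := by
        rw [le_div_iff₀ hq0]; nlinarith
      have hst := step (t + n) ih
      rw [min_eq_left (by linarith)] at hst
      have : (t : ℝ) + (n + 1 : ℕ) = t + n + 1 := by push_cast; ring
      rwa [this]
  intro x
  rcases le_or_gt (|x|) Q with h | h
  · obtain ⟨n, hn⟩ := exists_nat_gt (Q - t)
    exact steps n x (by have := le_abs_self x; linarith)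
  · exact hfv x h
end

section
/- Let q be one of the numbers (√3 − 1)/2, (3 − √5)/2, √2 − 1, (√5 − 1)/2, set Q = q/(1−q), and let f : ℝ → ℝ be a solution of Schilling's problem for q. If there exists δ > 0 such that f is right-hand-side continuous at each point of the interval (Q − δ, Q), or f is left-hand-side continuous at each point of the interval (Q − δ, Q), then f is identically zero. -/
open Set Filter


theorem dense_pair (θ : ℝ) (hirr : ∀ m n : ℤ, (m:ℝ) * θ = (n:ℝ) → m = 0)
    {u v : ℝ} (huv : u < v) :
    ∃ a b : ℤ, u < (a:ℝ) + (b:ℝ)*θ ∧ (a:ℝ) + (b:ℝ)*θ < v := by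
  rcases (AddSubgroup.closure ({1, θ} : Set ℝ)).dense_or_cyclic with hD | ⟨c, hc⟩
  · obtain ⟨x, hxS, hx1, hx2⟩ := hD.exists_between huv
    obtain ⟨m, n, hmn⟩ := AddSubgroup.mem_closure_pair.mp hxS
    have hx : (m:ℝ) + (n:ℝ)*θ = x := by simpa [zsmul_eq_mul] using hmn
    exact ⟨m, n, by rw [hx]; exact hx1, by rw [hx]; exact hx2⟩
  · exfalso
    have h1 : (1:ℝ) ∈ AddSubgroup.closure ({1, θ} : Set ℝ) :=
      AddSubgroup.subset_closure (by simp)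
    have hθ : θ ∈ AddSubgroup.closure ({1, θ} : Set ℝ) :=
      AddSubgroup.subset_closure (by simp)
    rw [hc] at h1 hθ
    obtain ⟨m, hm⟩ := AddSubgroup.mem_closure_singleton.mp h1
    obtain ⟨n, hn⟩ := AddSubgroup.mem_closure_singleton.mp hθ
    rw [zsmul_eq_mul] at hm hn
    have key : (m:ℝ) * θ = (n:ℝ) := by
      calc (m:ℝ) * θ = (m:ℝ) * ((n:ℝ)*c) := by rw [hn]
        _ = (n:ℝ) * ((m:ℝ)*c) := by ring
        _ = (n:ℝ) := by rw [hm]; ring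
    have := hirr m n key
    subst this
    simp at hm


set_option maxHeartbeats 2000000 in
theorem schilling_generic (q θ θc Q C : ℝ) (p r : ℤ)
    (hq0 : 0 < q) (hq1 : q < 1)
    (hθq : θ * q = 1)
    (hθ2 : θ^2 = (p:ℝ)*θ + (r:ℝ))
    (hθc2 : θc^2 = (p:ℝ)*θc + (r:ℝ))
    (hθcabs : |θc| < 1)
    (hQdef : Q * (1 - q) = q)
    (hCdef : (1 - |θc|) * C = 3)
    (hirr : ∀ m n : ℤ, (m:ℝ) * θ = (n:ℝ) → m = 0)
    (f : ℝ → ℝ)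
    (hfe : ∀ x : ℝ, f (q * x) = (1 / (4 * q)) * (f (x - 1) + f (x + 1) + 2 * f x))
    (hfv : ∀ x : ℝ, |x| > q / (1 - q) → f x = 0)
    (hδ : ∃ δ > (0 : ℝ),
        (∀ x ∈ Set.Ioo (q / (1 - q) - δ) (q / (1 - q)),
            Filter.Tendsto f (nhdsWithin x (Set.Ioi x)) (nhds (f x))) ∨
        (∀ x ∈ Set.Ioo (q / (1 - q) - δ) (q / (1 - q)),
            Filter.Tendsto f (nhdsWithin x (Set.Iio x)) (nhds (f x))))
    (hcore : ∀ g : ℝ → ℝ,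
        (∀ x : ℝ, 4 * g x = θ * (g (θ*x) + 2 * g (θ*x - 1) + g (θ*x - 2))) →
        (∀ t : ℝ, t < 0 → g t = 0) →
        (∀ t : ℝ, 2*Q < t → g t = 0) →
        ∀ a b : ℤ, |(a:ℝ) + (b:ℝ)*θc| ≤ C → 0 ≤ (a:ℝ) + (b:ℝ)*θ →
          (a:ℝ) + (b:ℝ)*θ ≤ 2*Q → g ((a:ℝ) + (b:ℝ)*θ) = 0) :
    ∀ x : ℝ, f x = 0 := by
  have h1q : (0:ℝ) < 1 - q := by linarith
  have hQq : q / (1 - q) = Q := by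
    field_simp
    linarith [hQdef]
  have hQpos : 0 < Q := by nlinarith [hQdef]
  have hθpos : 0 < θ := by nlinarith [hθq]
  have hθ1 : 1 < θ := by nlinarith [hθq]
  have habs1 : (0:ℝ) < 1 - |θc| := by linarith
  have hCpos : 0 < C := by nlinarith [hCdef]
  rw [hQq] at hfv hδ
  set g : ℝ → ℝ := fun t => f (Q - t) with hgdef
  have hgneg : ∀ t : ℝ, t < 0 → g t = 0 := by
    intro t ht
    show f (Q - t) = 0
    apply hfv
    rw [abs_of_pos (by linarith)]
    linarith
  have hgtop : ∀ t : ℝ, 2*Q < t → g t = 0 := by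
    intro t ht
    show f (Q - t) = 0
    apply hfv
    rw [abs_of_neg (by linarith)]
    linarith
  have hg : ∀ x : ℝ, 4 * g x = θ * (g (θ*x) + 2 * g (θ*x - 1) + g (θ*x - 2)) := by
    intro x
    have h := hfe (Q + 1 - θ*x)
    have e1 : q * (Q + 1 - θ*x) = Q - x := by
      linear_combination (-1 : ℝ) * hQdef - x * hθq
    have e2 : Q + 1 - θ*x - 1 = Q - θ*x := by ring
    have e3 : Q + 1 - θ*x + 1 = Q - (θ*x - 2) := by ring
    rw [e1, e2, e3] at h
    have e4 : Q + 1 - θ*x = Q - (θ*x - 1) := by ring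
    rw [e4] at h
    have hq4 : (1:ℝ)/(4*q) = θ/4 := by
      rw [div_eq_div_iff (by positivity) (by norm_num : (4:ℝ) ≠ 0)]
      linarith [hθq]
    rw [hq4] at h
    show 4 * f (Q - x) = θ * (f (Q - θ*x) + 2 * f (Q - (θ*x - 1)) + f (Q - (θ*x - 2)))
    linear_combination (4:ℝ) * h
  have key : ∀ n : ℕ, ∀ a b : ℤ, |(a:ℝ) + (b:ℝ)*θc| ≤ C + n →
      0 ≤ (a:ℝ) + (b:ℝ)*θ → (a:ℝ) + (b:ℝ)*θ ≤ 2*Q → g ((a:ℝ) + (b:ℝ)*θ) = 0 := by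
    intro n
    induction n with
    | zero =>
      intro a b h1 h2 h3
      exact hcore g hg hgneg hgtop a b (by simpa using h1) h2 h3
    | succ n ih =>
      intro a b h1 h2 h3
      rcases le_or_gt (|(a:ℝ) + (b:ℝ)*θc|) (C + n) with hle | hgt
      · exact ih a b hle h2 h3
      · have hterm : ∀ k : ℤ, 0 ≤ k → k ≤ 2 →
            g (θ*((a:ℝ) + (b:ℝ)*θ) - (k:ℝ)) = 0 := by
          intro k hk0 hk2
          have hyid : θ*((a:ℝ) + (b:ℝ)*θ) - (k:ℝ)
              = ((b*r - k : ℤ):ℝ) + ((a + b*p : ℤ):ℝ)*θ := by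
            push_cast
            linear_combination (b:ℝ) * hθ2
          have hycid : θc*((a:ℝ) + (b:ℝ)*θc) - (k:ℝ)
              = ((b*r - k : ℤ):ℝ) + ((a + b*p : ℤ):ℝ)*θc := by
            push_cast
            linear_combination (b:ℝ) * hθc2
          rw [hyid]
          by_cases hy0 : 0 ≤ ((b*r - k : ℤ):ℝ) + ((a + b*p : ℤ):ℝ)*θ
          · by_cases hy2 : ((b*r - k : ℤ):ℝ) + ((a + b*p : ℤ):ℝ)*θ ≤ 2*Q
            · apply ih _ _ ?_ hy0 hy2
              rw [← hycid]
              push_cast at h1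
              have htri : |θc*((a:ℝ) + (b:ℝ)*θc) - (k:ℝ)|
                  ≤ |θc*((a:ℝ) + (b:ℝ)*θc)| + |(k:ℝ)| := by
                rw [sub_eq_add_neg]
                calc |θc*((a:ℝ) + (b:ℝ)*θc) + -(k:ℝ)|
                    ≤ |θc*((a:ℝ) + (b:ℝ)*θc)| + |(-(k:ℝ))| := abs_add_le _ _
                  _ = |θc*((a:ℝ) + (b:ℝ)*θc)| + |(k:ℝ)| := by rw [abs_neg]
              have hkabs : |(k:ℝ)| ≤ 2 := by
                rw [abs_le]
                refine ⟨?_, ?_⟩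
                · exact_mod_cast (by omega : (-2:ℤ) ≤ k)
                · exact_mod_cast hk2
              have hm : |θc*((a:ℝ) + (b:ℝ)*θc)| = |θc| * |(a:ℝ) + (b:ℝ)*θc| := abs_mul _ _
              have hmb : |θc| * |(a:ℝ) + (b:ℝ)*θc| ≤ |θc| * (C + (n+1)) :=
                mul_le_mul_of_nonneg_left h1 (abs_nonneg θc)
              have hnn : (0:ℝ) ≤ (n:ℝ) := n.cast_nonneg
              nlinarith [hCdef, hθcabs.le, htri, hkabs, hm, hmb]
            · exact hgtop _ (by push_neg at hy2; exact hy2)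
          · exact hgneg _ (by push_neg at hy0; exact hy0)
        have hx := hg ((a:ℝ) + (b:ℝ)*θ)
        have h0 := hterm 0 (by norm_num) (by norm_num)
        have h1' := hterm 1 (by norm_num) (by norm_num)
        have h2' := hterm 2 (by norm_num) (by norm_num)
        norm_num at h0 h1' h2'
        rw [h0, h1', h2'] at hx
        norm_num at hx
        linarith
  have hlat : ∀ a b : ℤ, 0 ≤ (a:ℝ) + (b:ℝ)*θ → (a:ℝ) + (b:ℝ)*θ ≤ 2*Q →
      g ((a:ℝ) + (b:ℝ)*θ) = 0 := by
    intro a b h2 h3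
    refine key ⌈|(a:ℝ) + (b:ℝ)*θc|⌉₊ a b ?_ h2 h3
    have := Nat.le_ceil (|(a:ℝ) + (b:ℝ)*θc|)
    linarith
  obtain ⟨δ, hδ0, hδc⟩ := hδ
  set δ' : ℝ := min δ Q with hδ'def
  have hδ'0 : 0 < δ' := lt_min hδ0 hQpos
  have hδ'Q : δ' ≤ Q := min_le_right _ _
  have hδ'δ : δ' ≤ δ := min_le_left _ _
  have hIoo : ∀ x₀ ∈ Set.Ioo (Q - δ') Q, x₀ ∈ Set.Ioo (Q - δ) Q := by
    intro x₀ hx₀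
    exact ⟨by linarith [hx₀.1], hx₀.2⟩
  have hzero' : ∀ x₀ ∈ Set.Ioo (Q - δ') Q, f x₀ = 0 := by
    intro x₀ hx₀
    have ht₀1 : 0 < Q - x₀ := by linarith [hx₀.2]
    have ht₀2 : Q - x₀ < δ' := by linarith [hx₀.1]
    rcases hδc with hright | hleft
    · have H : ∀ n : ℕ, ∃ z : ℝ, f z = 0 ∧ x₀ < z ∧ z < x₀ + 1/((n:ℝ)+1) := by
        intro n
        have hpos : (0:ℝ) < 1/((n:ℝ)+1) := by positivity
        have hu : max 0 (Q - x₀ - 1/((n:ℝ)+1)) < Q - x₀ := by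
          rw [max_lt_iff]
          exact ⟨ht₀1, by linarith⟩
        obtain ⟨a, b, hw1, hw2⟩ := dense_pair θ hirr hu
        have hw0 : 0 ≤ (a:ℝ) + (b:ℝ)*θ := le_trans (le_max_left _ _) (le_of_lt hw1)
        have hw2Q : (a:ℝ) + (b:ℝ)*θ ≤ 2*Q := by linarith
        have hz := hlat a b hw0 hw2Q
        refine ⟨Q - ((a:ℝ) + (b:ℝ)*θ), hz, by linarith, ?_⟩
        have := le_max_right (0:ℝ) (Q - x₀ - 1/((n:ℝ)+1))
        linarith
      choose z hz0 hz1 hz2 using H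
      have hlim : Filter.Tendsto z Filter.atTop (nhds x₀) := by
        have hub : Filter.Tendsto (fun n : ℕ => x₀ + 1/((n:ℝ)+1)) Filter.atTop (nhds x₀) := by
          have h1 := tendsto_one_div_add_atTop_nhds_zero_nat (𝕜 := ℝ)
          have h2 := Filter.Tendsto.const_add x₀ h1
          simpa using h2
        exact tendsto_of_tendsto_of_tendsto_of_le_of_le tendsto_const_nhds hub
          (fun n => (hz1 n).le) (fun n => (hz2 n).le)
      have hlim' : Filter.Tendsto z Filter.atTop (nhdsWithin x₀ (Set.Ioi x₀)) := by
        rw [tendsto_nhdsWithin_iff]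
        exact ⟨hlim, Filter.Eventually.of_forall (fun n => hz1 n)⟩
      have hcomp := (hright x₀ (hIoo x₀ hx₀)).comp hlim'
      have hzerolim : Filter.Tendsto (fun n => f (z n)) Filter.atTop (nhds 0) := by
        have he : (fun n => f (z n)) = fun _ => (0:ℝ) := funext fun n => hz0 n
        rw [he]
        exact tendsto_const_nhds
      exact tendsto_nhds_unique hcomp hzerolim
    · have H : ∀ n : ℕ, ∃ z : ℝ, f z = 0 ∧ z < x₀ ∧ x₀ - 1/((n:ℝ)+1) < z := by
        intro n
        have hpos : (0:ℝ) < 1/((n:ℝ)+1) := by positivity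
        have hu : Q - x₀ < min (2*Q) (Q - x₀ + 1/((n:ℝ)+1)) := by
          rw [lt_min_iff]
          constructor
          · linarith
          · linarith
        obtain ⟨a, b, hw1, hw2⟩ := dense_pair θ hirr hu
        have hw0 : 0 ≤ (a:ℝ) + (b:ℝ)*θ := by linarith
        have hw2Q : (a:ℝ) + (b:ℝ)*θ ≤ 2*Q :=
          le_of_lt (lt_of_lt_of_le hw2 (min_le_left _ _))
        have hz := hlat a b hw0 hw2Q
        refine ⟨Q - ((a:ℝ) + (b:ℝ)*θ), hz, by linarith, ?_⟩
        have := lt_of_lt_of_le hw2 (min_le_right (2*Q) (Q - x₀ + 1/((n:ℝ)+1)))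
        linarith
      choose z hz0 hz1 hz2 using H
      have hlim : Filter.Tendsto z Filter.atTop (nhds x₀) := by
        have hlb : Filter.Tendsto (fun n : ℕ => x₀ - 1/((n:ℝ)+1)) Filter.atTop (nhds x₀) := by
          have h1 := tendsto_one_div_add_atTop_nhds_zero_nat (𝕜 := ℝ)
          have h2 := Filter.Tendsto.const_sub x₀ h1
          simpa using h2
        exact tendsto_of_tendsto_of_tendsto_of_le_of_le hlb tendsto_const_nhds
          (fun n => (hz2 n).le) (fun n => (hz1 n).le)
      have hlim' : Filter.Tendsto z Filter.atTop (nhdsWithin x₀ (Set.Iio x₀)) := by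
        rw [tendsto_nhdsWithin_iff]
        exact ⟨hlim, Filter.Eventually.of_forall (fun n => hz1 n)⟩
      have hcomp := (hleft x₀ (hIoo x₀ hx₀)).comp hlim'
      have hzerolim : Filter.Tendsto (fun n => f (z n)) Filter.atTop (nhds 0) := by
        have he : (fun n => f (z n)) = fun _ => (0:ℝ) := funext fun n => hz0 n
        rw [he]
        exact tendsto_const_nhds
      exact tendsto_nhds_unique hcomp hzerolim
  have hgsmall : ∀ t : ℝ, t < δ' → g t = 0 := by
    intro t ht
    rcases lt_trichotomy t 0 with h | h | h
    · exact hgneg t h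
    · subst h
      have h00 := hlat 0 0 (by norm_num) (by norm_num; linarith)
      norm_num at h00
      exact h00
    · exact hzero' (Q - t) ⟨by linarith, by linarith⟩
  set η : ℝ := min 1 (δ'*(1-q)/q) with hηdef
  have hη0 : 0 < η := lt_min (by norm_num) (div_pos (mul_pos hδ'0 h1q) hq0)
  have hη1 : η ≤ 1 := min_le_left _ _
  have hη2 : q * η ≤ (1-q) * δ' := by
    have hm := min_le_right (1:ℝ) (δ'*(1-q)/q)
    calc q * η ≤ q * (δ'*(1-q)/q) := mul_le_mul_of_nonneg_left hm hq0.le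
      _ = (1-q) * δ' := by field_simp
  have hprop : ∀ n : ℕ, ∀ t : ℝ, t < δ' + n*η → g t = 0 := by
    intro n
    induction n with
    | zero => intro t ht; norm_num at ht; exact hgsmall t ht
    | succ n ih =>
      intro t ht
      rcases lt_or_ge t δ' with h | h
      · exact hgsmall t h
      · have hq1t := hg (q*t)
        have hqq : θ * (q * t) = t := by
          calc θ * (q*t) = (θ*q)*t := by ring
            _ = t := by rw [hθq]; ring
        rw [hqq] at hq1t
        have hz1 : g (q*t) = 0 := by
          apply ih
          push_cast at ht ⊢
          have a1 : q*t < q*(δ' + ((n:ℝ)+1)*η) := by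
            exact mul_lt_mul_of_pos_left ht hq0
          have a3 : (n:ℝ)*(q*η) ≤ (n:ℝ)*η := by
            apply mul_le_mul_of_nonneg_left _ n.cast_nonneg
            nlinarith [hη0, hq1]
          nlinarith [a1, a3, hη2]
        have hz2 : g (t - 1) = 0 := by
          apply ih
          push_cast at ht ⊢
          nlinarith [hη0, hη1]
        have hz3 : g (t - 2) = 0 := by
          apply ih
          push_cast at ht ⊢
          nlinarith [hη0, hη1]
        rw [hz1, hz2, hz3] at hq1t
        norm_num at hq1t
        rcases hq1t with h' | h'
        · linarith
        · exact h'
  intro x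
  obtain ⟨n, hn⟩ := exists_nat_gt ((Q - x - δ')/η)
  have hlt : Q - x < δ' + n*η := by
    have h2 : (Q - x - δ') < n * η := by
      rw [div_lt_iff₀ hη0] at hn
      linarith
    linarith
  have h := hprop n (Q - x) hlt
  have h2 : f (Q - (Q - x)) = 0 := h
  simpa using h2


set_option maxHeartbeats 3000000 in
theorem core1 : ∀ g : ℝ → ℝ,
    (∀ x : ℝ, 4 * g x = (1 + Real.sqrt 3) * (g ((1 + Real.sqrt 3)*x) + 2 * g ((1 + Real.sqrt 3)*x - 1) + g ((1 + Real.sqrt 3)*x - 2))) →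
    (∀ t : ℝ, t < 0 → g t = 0) →
    (∀ t : ℝ, 2*(Real.sqrt 3/3) < t → g t = 0) →
    ∀ a b : ℤ, |(a:ℝ) + (b:ℝ)*(1 - Real.sqrt 3)| ≤ (3/(2 - Real.sqrt 3)) → 0 ≤ (a:ℝ) + (b:ℝ)*(1 + Real.sqrt 3) →
      (a:ℝ) + (b:ℝ)*(1 + Real.sqrt 3) ≤ 2*(Real.sqrt 3/3) → g ((a:ℝ) + (b:ℝ)*(1 + Real.sqrt 3)) = 0 := by
  intro g hg hgneg hgtop a b h1 h2 h3
  set s : ℝ := Real.sqrt 3 with hsdef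
  have hs0 : 0 ≤ s := by rw [hsdef]; exact Real.sqrt_nonneg 3
  have hs2 : s^2 = 3 := by rw [hsdef]; exact Real.sq_sqrt (by norm_num)
  have hsL : (1.7320508:ℝ) < s := by nlinarith [hs2, hs0]
  have hsU : s < (1.7320509:ℝ) := by nlinarith [hs2, hs0]
  have hC : (3:ℝ)/(2 - s) < ((117:ℝ)/10) := by
    rw [div_lt_iff₀ (by linarith)]
    linarith
  obtain ⟨h1a, h1b⟩ := abs_le.mp h1
  have h1a' : -((117:ℝ)/10) < (a:ℝ) + (b:ℝ)*(1 - s) := by linarith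
  have h1b' : (a:ℝ) + (b:ℝ)*(1 - s) < ((117:ℝ)/10) := by linarith
  have hx0 := hg ((9:ℝ) + (-3:ℝ)*(1 + s))
  have e0_2 : (1 + s)*((9:ℝ) + (-3:ℝ)*(1 + s)) - 2 = ((-8:ℝ) + (3:ℝ)*(1 + s)) := by
    push_cast; linear_combination (-3) * hs2
  have e0_1 : (1 + s)*((9:ℝ) + (-3:ℝ)*(1 + s)) - 1 = ((-7:ℝ) + (3:ℝ)*(1 + s)) := by
    push_cast; linear_combination (-3) * hs2
  have e0_0 : (1 + s)*((9:ℝ) + (-3:ℝ)*(1 + s)) = ((-6:ℝ) + (3:ℝ)*(1 + s)) := by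
    push_cast; linear_combination (-3) * hs2
  rw [e0_2, e0_1, e0_0] at hx0
  rw [hgtop ((-6:ℝ) + (3:ℝ)*(1 + s)) (by push_cast; linarith)] at hx0
  rw [hgtop ((-7:ℝ) + (3:ℝ)*(1 + s)) (by push_cast; linarith)] at hx0
  have hx1 := hg ((6:ℝ) + (-2:ℝ)*(1 + s))
  have e1_2 : (1 + s)*((6:ℝ) + (-2:ℝ)*(1 + s)) - 2 = ((-6:ℝ) + (2:ℝ)*(1 + s)) := by
    push_cast; linear_combination (-2) * hs2
  have e1_1 : (1 + s)*((6:ℝ) + (-2:ℝ)*(1 + s)) - 1 = ((-5:ℝ) + (2:ℝ)*(1 + s)) := by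
    push_cast; linear_combination (-2) * hs2
  have e1_0 : (1 + s)*((6:ℝ) + (-2:ℝ)*(1 + s)) = ((-4:ℝ) + (2:ℝ)*(1 + s)) := by
    push_cast; linear_combination (-2) * hs2
  rw [e1_2, e1_1, e1_0] at hx1
  rw [hgtop ((-4:ℝ) + (2:ℝ)*(1 + s)) (by push_cast; linarith)] at hx1
  rw [hgneg ((-6:ℝ) + (2:ℝ)*(1 + s)) (by push_cast; linarith)] at hx1
  have hx2 := hg ((3:ℝ) + (-1:ℝ)*(1 + s))
  have e2_2 : (1 + s)*((3:ℝ) + (-1:ℝ)*(1 + s)) - 2 = ((-4:ℝ) + (1:ℝ)*(1 + s)) := by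
    push_cast; linear_combination (-1) * hs2
  have e2_1 : (1 + s)*((3:ℝ) + (-1:ℝ)*(1 + s)) - 1 = ((-3:ℝ) + (1:ℝ)*(1 + s)) := by
    push_cast; linear_combination (-1) * hs2
  have e2_0 : (1 + s)*((3:ℝ) + (-1:ℝ)*(1 + s)) = ((-2:ℝ) + (1:ℝ)*(1 + s)) := by
    push_cast; linear_combination (-1) * hs2
  rw [e2_2, e2_1, e2_0] at hx2
  rw [hgneg ((-3:ℝ) + (1:ℝ)*(1 + s)) (by push_cast; linarith)] at hx2
  rw [hgneg ((-4:ℝ) + (1:ℝ)*(1 + s)) (by push_cast; linarith)] at hx2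
  have hx3 := hg ((0:ℝ) + (0:ℝ)*(1 + s))
  have e3_2 : (1 + s)*((0:ℝ) + (0:ℝ)*(1 + s)) - 2 = ((-2:ℝ) + (0:ℝ)*(1 + s)) := by
    push_cast; ring
  have e3_1 : (1 + s)*((0:ℝ) + (0:ℝ)*(1 + s)) - 1 = ((-1:ℝ) + (0:ℝ)*(1 + s)) := by
    push_cast; ring
  have e3_0 : (1 + s)*((0:ℝ) + (0:ℝ)*(1 + s)) = ((0:ℝ) + (0:ℝ)*(1 + s)) := by
    push_cast; ring
  rw [e3_2, e3_1, e3_0] at hx3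
  rw [hgneg ((-1:ℝ) + (0:ℝ)*(1 + s)) (by push_cast; linarith)] at hx3
  rw [hgneg ((-2:ℝ) + (0:ℝ)*(1 + s)) (by push_cast; linarith)] at hx3
  have hx4 := hg ((1:ℝ) + (0:ℝ)*(1 + s))
  have e4_2 : (1 + s)*((1:ℝ) + (0:ℝ)*(1 + s)) - 2 = ((-2:ℝ) + (1:ℝ)*(1 + s)) := by
    push_cast; ring
  have e4_1 : (1 + s)*((1:ℝ) + (0:ℝ)*(1 + s)) - 1 = ((-1:ℝ) + (1:ℝ)*(1 + s)) := by
    push_cast; ring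
  have e4_0 : (1 + s)*((1:ℝ) + (0:ℝ)*(1 + s)) = ((0:ℝ) + (1:ℝ)*(1 + s)) := by
    push_cast; ring
  rw [e4_2, e4_1, e4_0] at hx4
  rw [hgtop ((0:ℝ) + (1:ℝ)*(1 + s)) (by push_cast; linarith)] at hx4
  rw [hgtop ((-1:ℝ) + (1:ℝ)*(1 + s)) (by push_cast; linarith)] at hx4
  have hx5 := hg ((-2:ℝ) + (1:ℝ)*(1 + s))
  have e5_2 : (1 + s)*((-2:ℝ) + (1:ℝ)*(1 + s)) - 2 = ((0:ℝ) + (0:ℝ)*(1 + s)) := by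
    push_cast; linear_combination (1) * hs2
  have e5_1 : (1 + s)*((-2:ℝ) + (1:ℝ)*(1 + s)) - 1 = ((1:ℝ) + (0:ℝ)*(1 + s)) := by
    push_cast; linear_combination (1) * hs2
  have e5_0 : (1 + s)*((-2:ℝ) + (1:ℝ)*(1 + s)) = ((2:ℝ) + (0:ℝ)*(1 + s)) := by
    push_cast; linear_combination (1) * hs2
  rw [e5_2, e5_1, e5_0] at hx5
  rw [hgtop ((2:ℝ) + (0:ℝ)*(1 + s)) (by push_cast; linarith)] at hx5
  have hx6 := hg ((-5:ℝ) + (2:ℝ)*(1 + s))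
  have e6_2 : (1 + s)*((-5:ℝ) + (2:ℝ)*(1 + s)) - 2 = ((2:ℝ) + (-1:ℝ)*(1 + s)) := by
    push_cast; linear_combination (2) * hs2
  have e6_1 : (1 + s)*((-5:ℝ) + (2:ℝ)*(1 + s)) - 1 = ((3:ℝ) + (-1:ℝ)*(1 + s)) := by
    push_cast; linear_combination (2) * hs2
  have e6_0 : (1 + s)*((-5:ℝ) + (2:ℝ)*(1 + s)) = ((4:ℝ) + (-1:ℝ)*(1 + s)) := by
    push_cast; linear_combination (2) * hs2
  rw [e6_2, e6_1, e6_0] at hx6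
  rw [hgtop ((4:ℝ) + (-1:ℝ)*(1 + s)) (by push_cast; linarith)] at hx6
  rw [hgneg ((2:ℝ) + (-1:ℝ)*(1 + s)) (by push_cast; linarith)] at hx6
  have hx7 := hg ((-8:ℝ) + (3:ℝ)*(1 + s))
  have e7_2 : (1 + s)*((-8:ℝ) + (3:ℝ)*(1 + s)) - 2 = ((4:ℝ) + (-2:ℝ)*(1 + s)) := by
    push_cast; linear_combination (3) * hs2
  have e7_1 : (1 + s)*((-8:ℝ) + (3:ℝ)*(1 + s)) - 1 = ((5:ℝ) + (-2:ℝ)*(1 + s)) := by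
    push_cast; linear_combination (3) * hs2
  have e7_0 : (1 + s)*((-8:ℝ) + (3:ℝ)*(1 + s)) = ((6:ℝ) + (-2:ℝ)*(1 + s)) := by
    push_cast; linear_combination (3) * hs2
  rw [e7_2, e7_1, e7_0] at hx7
  rw [hgneg ((5:ℝ) + (-2:ℝ)*(1 + s)) (by push_cast; linarith)] at hx7
  rw [hgneg ((4:ℝ) + (-2:ℝ)*(1 + s)) (by push_cast; linarith)] at hx7
  have hp0 : ∀ x : ℝ, x = ((9:ℝ) + (-3:ℝ)*(1 + s)) → g x = 0 := by
    intro x hx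
    rw [hx]
    linear_combination ((1:ℝ)/4) * hx0 + (((1:ℝ)/16) + ((1:ℝ)/32)*s) * hx1 + (((7:ℝ)/64) + ((1:ℝ)/16)*s) * hx2 + (((153:ℝ)/64) + ((265:ℝ)/192)*s) * hx3 + (((97:ℝ)/64) + ((7:ℝ)/8)*s) * hx4 + (((71:ℝ)/64) + ((41:ℝ)/64)*s) * hx5 + (((5:ℝ)/64) + ((3:ℝ)/64)*s) * hx6 + (((1:ℝ)/16) + ((1:ℝ)/16)*s) * hx7 + (((1:ℝ)/16)*(g ((-5:ℝ) + (2:ℝ)*(1 + s))) + ((15:ℝ)/16)*(g ((-2:ℝ) + (1:ℝ)*(1 + s))) + ((97:ℝ)/48)*(g ((0:ℝ) + (0:ℝ)*(1 + s))) + ((41:ℝ)/32)*(g ((1:ℝ) + (0:ℝ)*(1 + s))) + ((3:ℝ)/32)*(g ((3:ℝ) + (-1:ℝ)*(1 + s))) + ((1:ℝ)/16)*(g ((6:ℝ) + (-2:ℝ)*(1 + s)))) * hs2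
  have hp1 : ∀ x : ℝ, x = ((6:ℝ) + (-2:ℝ)*(1 + s)) → g x = 0 := by
    intro x hx
    rw [hx]
    linear_combination ((1:ℝ)/4) * hx1 + (((1:ℝ)/4) + ((1:ℝ)/8)*s) * hx2 + (((41:ℝ)/8) + ((71:ℝ)/24)*s) * hx3 + (((13:ℝ)/4) + ((15:ℝ)/8)*s) * hx4 + (((19:ℝ)/8) + ((11:ℝ)/8)*s) * hx5 + (((1:ℝ)/8) + ((1:ℝ)/8)*s) * hx6 + ((2)*(g ((-2:ℝ) + (1:ℝ)*(1 + s))) + ((13:ℝ)/3)*(g ((0:ℝ) + (0:ℝ)*(1 + s))) + ((11:ℝ)/4)*(g ((1:ℝ) + (0:ℝ)*(1 + s))) + ((1:ℝ)/4)*(g ((3:ℝ) + (-1:ℝ)*(1 + s)))) * hs2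
  have hp2 : ∀ x : ℝ, x = ((3:ℝ) + (-1:ℝ)*(1 + s)) → g x = 0 := by
    intro x hx
    rw [hx]
    linear_combination ((1:ℝ)/4) * hx2 + (((11:ℝ)/4) + ((19:ℝ)/12)*s) * hx3 + (((7:ℝ)/4) + (1)*s) * hx4 + (((5:ℝ)/4) + ((3:ℝ)/4)*s) * hx5 + (((7:ℝ)/3)*(g ((0:ℝ) + (0:ℝ)*(1 + s))) + (1)*(g ((-2:ℝ) + (1:ℝ)*(1 + s))) + ((3:ℝ)/2)*(g ((1:ℝ) + (0:ℝ)*(1 + s)))) * hs2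
  have hp3 : ∀ x : ℝ, x = ((0:ℝ) + (0:ℝ)*(1 + s)) → g x = 0 := by
    intro x hx
    rw [hx]
    linear_combination (((1:ℝ)/2) + ((1:ℝ)/6)*s) * hx3 + (((1:ℝ)/6)*(g ((0:ℝ) + (0:ℝ)*(1 + s)))) * hs2
  have hp4 : ∀ x : ℝ, x = ((1:ℝ) + (0:ℝ)*(1 + s)) → g x = 0 := by
    intro x hx
    rw [hx]
    linear_combination (((11:ℝ)/4) + ((19:ℝ)/12)*s) * hx3 + ((2) + (1)*s) * hx4 + (((5:ℝ)/4) + ((3:ℝ)/4)*s) * hx5 + (((7:ℝ)/3)*(g ((0:ℝ) + (0:ℝ)*(1 + s))) + (1)*(g ((-2:ℝ) + (1:ℝ)*(1 + s))) + ((3:ℝ)/2)*(g ((1:ℝ) + (0:ℝ)*(1 + s)))) * hs2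
  have hp5 : ∀ x : ℝ, x = ((-2:ℝ) + (1:ℝ)*(1 + s)) → g x = 0 := by
    intro x hx
    rw [hx]
    linear_combination ((4) + ((7:ℝ)/3)*s) * hx3 + (((5:ℝ)/2) + ((3:ℝ)/2)*s) * hx4 + ((2) + (1)*s) * hx5 + (((10:ℝ)/3)*(g ((0:ℝ) + (0:ℝ)*(1 + s))) + ((3:ℝ)/2)*(g ((-2:ℝ) + (1:ℝ)*(1 + s))) + (2)*(g ((1:ℝ) + (0:ℝ)*(1 + s)))) * hs2
  have hp6 : ∀ x : ℝ, x = ((-5:ℝ) + (2:ℝ)*(1 + s)) → g x = 0 := by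
    intro x hx
    rw [hx]
    linear_combination (((1:ℝ)/8) + ((1:ℝ)/8)*s) * hx2 + (((15:ℝ)/4) + ((13:ℝ)/6)*s) * hx3 + (((19:ℝ)/8) + ((11:ℝ)/8)*s) * hx4 + (((7:ℝ)/4) + (1)*s) * hx5 + ((1:ℝ)/4) * hx6 + (((3:ℝ)/2)*(g ((-2:ℝ) + (1:ℝ)*(1 + s))) + ((19:ℝ)/6)*(g ((0:ℝ) + (0:ℝ)*(1 + s))) + (2)*(g ((1:ℝ) + (0:ℝ)*(1 + s)))) * hs2
  have hp7 : ∀ x : ℝ, x = ((-8:ℝ) + (3:ℝ)*(1 + s)) → g x = 0 := by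
    intro x hx
    rw [hx]
    linear_combination (((1:ℝ)/16) + ((1:ℝ)/16)*s) * hx1 + (((5:ℝ)/32) + ((3:ℝ)/32)*s) * hx2 + (((7:ℝ)/2) + ((97:ℝ)/48)*s) * hx3 + (((71:ℝ)/32) + ((41:ℝ)/32)*s) * hx4 + (((13:ℝ)/8) + ((15:ℝ)/16)*s) * hx5 + (((1:ℝ)/8) + ((1:ℝ)/16)*s) * hx6 + ((1:ℝ)/4) * hx7 + (((1:ℝ)/8)*(g ((-5:ℝ) + (2:ℝ)*(1 + s))) + ((11:ℝ)/8)*(g ((-2:ℝ) + (1:ℝ)*(1 + s))) + ((71:ℝ)/24)*(g ((0:ℝ) + (0:ℝ)*(1 + s))) + ((15:ℝ)/8)*(g ((1:ℝ) + (0:ℝ)*(1 + s))) + ((1:ℝ)/8)*(g ((3:ℝ) + (-1:ℝ)*(1 + s)))) * hs2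
  have hbU : b ≤ 3 := by
    by_contra hcon
    push_neg at hcon
    have hc0 : (3:ℤ) + 1 ≤ b := Int.lt_iff_add_one_le.mp hcon
    have hc1 : ((3:ℝ)) + 1 ≤ (b:ℝ) := by exact_mod_cast hc0
    have hc2 : ((3:ℝ) + 1)*s ≤ (b:ℝ)*s := mul_le_mul_of_nonneg_right hc1 hs0
    linarith
  have hbL : (-3:ℤ) ≤ b := by
    by_contra hcon
    push_neg at hcon
    have hc0 : b + 1 ≤ (-3:ℤ) := Int.lt_iff_add_one_le.mp hcon
    have hc1 : (b:ℝ) + 1 ≤ ((-3:ℝ)) := by exact_mod_cast hc0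
    have hc2 : (b:ℝ)*s ≤ (((-3:ℝ)) - 1)*s := mul_le_mul_of_nonneg_right (by linarith) hs0
    linarith
  interval_cases b
  · -- b = -3
    have haL : (9:ℤ) ≤ a := by
      by_contra hcon
      push_neg at hcon
      have hc0 : a + 1 ≤ (9:ℤ) := Int.lt_iff_add_one_le.mp hcon
      have hc1 : (a:ℝ) + 1 ≤ (9:ℝ) := by exact_mod_cast hc0
      push_cast at h2
      linarith
    have haU : a ≤ (9:ℤ) := by
      by_contra hcon
      push_neg at hcon
      have hc0 : (9:ℤ) + 1 ≤ a := Int.lt_iff_add_one_le.mp hcon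
      have hc1 : (9:ℝ) + 1 ≤ (a:ℝ) := by exact_mod_cast hc0
      push_cast at h3
      linarith
    interval_cases a
    · exact hp0 _ (by push_cast; ring)
  · -- b = -2
    have haL : (6:ℤ) ≤ a := by
      by_contra hcon
      push_neg at hcon
      have hc0 : a + 1 ≤ (6:ℤ) := Int.lt_iff_add_one_le.mp hcon
      have hc1 : (a:ℝ) + 1 ≤ (6:ℝ) := by exact_mod_cast hc0
      push_cast at h2
      linarith
    have haU : a ≤ (6:ℤ) := by
      by_contra hcon
      push_neg at hcon
      have hc0 : (6:ℤ) + 1 ≤ a := Int.lt_iff_add_one_le.mp hcon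
      have hc1 : (6:ℝ) + 1 ≤ (a:ℝ) := by exact_mod_cast hc0
      push_cast at h3
      linarith
    interval_cases a
    · exact hp1 _ (by push_cast; ring)
  · -- b = -1
    have haL : (3:ℤ) ≤ a := by
      by_contra hcon
      push_neg at hcon
      have hc0 : a + 1 ≤ (3:ℤ) := Int.lt_iff_add_one_le.mp hcon
      have hc1 : (a:ℝ) + 1 ≤ (3:ℝ) := by exact_mod_cast hc0
      push_cast at h2
      linarith
    have haU : a ≤ (3:ℤ) := by
      by_contra hcon
      push_neg at hcon
      have hc0 : (3:ℤ) + 1 ≤ a := Int.lt_iff_add_one_le.mp hcon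
      have hc1 : (3:ℝ) + 1 ≤ (a:ℝ) := by exact_mod_cast hc0
      push_cast at h3
      linarith
    interval_cases a
    · exact hp2 _ (by push_cast; ring)
  · -- b = 0
    have haL : (0:ℤ) ≤ a := by
      by_contra hcon
      push_neg at hcon
      have hc0 : a + 1 ≤ (0:ℤ) := Int.lt_iff_add_one_le.mp hcon
      have hc1 : (a:ℝ) + 1 ≤ (0:ℝ) := by exact_mod_cast hc0
      push_cast at h2
      linarith
    have haU : a ≤ (1:ℤ) := by
      by_contra hcon
      push_neg at hcon
      have hc0 : (1:ℤ) + 1 ≤ a := Int.lt_iff_add_one_le.mp hcon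
      have hc1 : (1:ℝ) + 1 ≤ (a:ℝ) := by exact_mod_cast hc0
      push_cast at h3
      linarith
    interval_cases a
    · exact hp3 _ (by push_cast; ring)
    · exact hp4 _ (by push_cast; ring)
  · -- b = 1
    have haL : (-2:ℤ) ≤ a := by
      by_contra hcon
      push_neg at hcon
      have hc0 : a + 1 ≤ (-2:ℤ) := Int.lt_iff_add_one_le.mp hcon
      have hc1 : (a:ℝ) + 1 ≤ (-2:ℝ) := by exact_mod_cast hc0
      push_cast at h2
      linarith
    have haU : a ≤ (-2:ℤ) := by
      by_contra hcon
      push_neg at hcon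
      have hc0 : (-2:ℤ) + 1 ≤ a := Int.lt_iff_add_one_le.mp hcon
      have hc1 : (-2:ℝ) + 1 ≤ (a:ℝ) := by exact_mod_cast hc0
      push_cast at h3
      linarith
    interval_cases a
    · exact hp5 _ (by push_cast; ring)
  · -- b = 2
    have haL : (-5:ℤ) ≤ a := by
      by_contra hcon
      push_neg at hcon
      have hc0 : a + 1 ≤ (-5:ℤ) := Int.lt_iff_add_one_le.mp hcon
      have hc1 : (a:ℝ) + 1 ≤ (-5:ℝ) := by exact_mod_cast hc0
      push_cast at h2
      linarith
    have haU : a ≤ (-5:ℤ) := by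
      by_contra hcon
      push_neg at hcon
      have hc0 : (-5:ℤ) + 1 ≤ a := Int.lt_iff_add_one_le.mp hcon
      have hc1 : (-5:ℝ) + 1 ≤ (a:ℝ) := by exact_mod_cast hc0
      push_cast at h3
      linarith
    interval_cases a
    · exact hp6 _ (by push_cast; ring)
  · -- b = 3
    have haL : (-8:ℤ) ≤ a := by
      by_contra hcon
      push_neg at hcon
      have hc0 : a + 1 ≤ (-8:ℤ) := Int.lt_iff_add_one_le.mp hcon
      have hc1 : (a:ℝ) + 1 ≤ (-8:ℝ) := by exact_mod_cast hc0
      push_cast at h2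
      linarith
    have haU : a ≤ (-8:ℤ) := by
      by_contra hcon
      push_neg at hcon
      have hc0 : (-8:ℤ) + 1 ≤ a := Int.lt_iff_add_one_le.mp hcon
      have hc1 : (-8:ℝ) + 1 ≤ (a:ℝ) := by exact_mod_cast hc0
      push_cast at h3
      linarith
    interval_cases a
    · exact hp7 _ (by push_cast; ring)



set_option maxHeartbeats 3000000 in
theorem core2 : ∀ g : ℝ → ℝ,
    (∀ x : ℝ, 4 * g x = ((3 + Real.sqrt 5)/2) * (g (((3 + Real.sqrt 5)/2)*x) + 2 * g (((3 + Real.sqrt 5)/2)*x - 1) + g (((3 + Real.sqrt 5)/2)*x - 2))) →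
    (∀ t : ℝ, t < 0 → g t = 0) →
    (∀ t : ℝ, 2*((Real.sqrt 5 - 1)/2) < t → g t = 0) →
    ∀ a b : ℤ, |(a:ℝ) + (b:ℝ)*((3 - Real.sqrt 5)/2)| ≤ (6/(Real.sqrt 5 - 1)) → 0 ≤ (a:ℝ) + (b:ℝ)*((3 + Real.sqrt 5)/2) →
      (a:ℝ) + (b:ℝ)*((3 + Real.sqrt 5)/2) ≤ 2*((Real.sqrt 5 - 1)/2) → g ((a:ℝ) + (b:ℝ)*((3 + Real.sqrt 5)/2)) = 0 := by
  intro g hg hgneg hgtop a b h1 h2 h3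
  set s : ℝ := Real.sqrt 5 with hsdef
  have hs0 : 0 ≤ s := by rw [hsdef]; exact Real.sqrt_nonneg 5
  have hs2 : s^2 = 5 := by rw [hsdef]; exact Real.sq_sqrt (by norm_num)
  have hsL : (2.2360679:ℝ) < s := by nlinarith [hs2, hs0]
  have hsU : s < (2.2360680:ℝ) := by nlinarith [hs2, hs0]
  have hC : (6:ℝ)/(s - 1) < ((101:ℝ)/20) := by
    rw [div_lt_iff₀ (by linarith)]
    linarith
  obtain ⟨h1a, h1b⟩ := abs_le.mp h1
  have h1a' : -((101:ℝ)/20) < (a:ℝ) + (b:ℝ)*((3 - s)/2) := by linarith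
  have h1b' : (a:ℝ) + (b:ℝ)*((3 - s)/2) < ((101:ℝ)/20) := by linarith
  have hx0 := hg ((3:ℝ) + (-1:ℝ)*((3 + s)/2))
  have e0_2 : ((3 + s)/2)*((3:ℝ) + (-1:ℝ)*((3 + s)/2)) - 2 = ((-1:ℝ) + (0:ℝ)*((3 + s)/2)) := by
    push_cast; linear_combination ((-1:ℝ)/4) * hs2
  have e0_1 : ((3 + s)/2)*((3:ℝ) + (-1:ℝ)*((3 + s)/2)) - 1 = ((0:ℝ) + (0:ℝ)*((3 + s)/2)) := by
    push_cast; linear_combination ((-1:ℝ)/4) * hs2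
  have e0_0 : ((3 + s)/2)*((3:ℝ) + (-1:ℝ)*((3 + s)/2)) = ((1:ℝ) + (0:ℝ)*((3 + s)/2)) := by
    push_cast; linear_combination ((-1:ℝ)/4) * hs2
  rw [e0_2, e0_1, e0_0] at hx0
  rw [hgneg ((-1:ℝ) + (0:ℝ)*((3 + s)/2)) (by push_cast; linarith)] at hx0
  have hx1 := hg ((0:ℝ) + (0:ℝ)*((3 + s)/2))
  have e1_2 : ((3 + s)/2)*((0:ℝ) + (0:ℝ)*((3 + s)/2)) - 2 = ((-2:ℝ) + (0:ℝ)*((3 + s)/2)) := by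
    push_cast; ring
  have e1_1 : ((3 + s)/2)*((0:ℝ) + (0:ℝ)*((3 + s)/2)) - 1 = ((-1:ℝ) + (0:ℝ)*((3 + s)/2)) := by
    push_cast; ring
  have e1_0 : ((3 + s)/2)*((0:ℝ) + (0:ℝ)*((3 + s)/2)) = ((0:ℝ) + (0:ℝ)*((3 + s)/2)) := by
    push_cast; ring
  rw [e1_2, e1_1, e1_0] at hx1
  rw [hgneg ((-1:ℝ) + (0:ℝ)*((3 + s)/2)) (by push_cast; linarith)] at hx1
  rw [hgneg ((-2:ℝ) + (0:ℝ)*((3 + s)/2)) (by push_cast; linarith)] at hx1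
  have hx2 := hg ((1:ℝ) + (0:ℝ)*((3 + s)/2))
  have e2_2 : ((3 + s)/2)*((1:ℝ) + (0:ℝ)*((3 + s)/2)) - 2 = ((-2:ℝ) + (1:ℝ)*((3 + s)/2)) := by
    push_cast; ring
  have e2_1 : ((3 + s)/2)*((1:ℝ) + (0:ℝ)*((3 + s)/2)) - 1 = ((-1:ℝ) + (1:ℝ)*((3 + s)/2)) := by
    push_cast; ring
  have e2_0 : ((3 + s)/2)*((1:ℝ) + (0:ℝ)*((3 + s)/2)) = ((0:ℝ) + (1:ℝ)*((3 + s)/2)) := by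
    push_cast; ring
  rw [e2_2, e2_1, e2_0] at hx2
  rw [hgtop ((0:ℝ) + (1:ℝ)*((3 + s)/2)) (by push_cast; linarith)] at hx2
  rw [hgtop ((-1:ℝ) + (1:ℝ)*((3 + s)/2)) (by push_cast; linarith)] at hx2
  have hx3 := hg ((-2:ℝ) + (1:ℝ)*((3 + s)/2))
  have e3_2 : ((3 + s)/2)*((-2:ℝ) + (1:ℝ)*((3 + s)/2)) - 2 = ((-3:ℝ) + (1:ℝ)*((3 + s)/2)) := by
    push_cast; linear_combination ((1:ℝ)/4) * hs2
  have e3_1 : ((3 + s)/2)*((-2:ℝ) + (1:ℝ)*((3 + s)/2)) - 1 = ((-2:ℝ) + (1:ℝ)*((3 + s)/2)) := by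
    push_cast; linear_combination ((1:ℝ)/4) * hs2
  have e3_0 : ((3 + s)/2)*((-2:ℝ) + (1:ℝ)*((3 + s)/2)) = ((-1:ℝ) + (1:ℝ)*((3 + s)/2)) := by
    push_cast; linear_combination ((1:ℝ)/4) * hs2
  rw [e3_2, e3_1, e3_0] at hx3
  rw [hgtop ((-1:ℝ) + (1:ℝ)*((3 + s)/2)) (by push_cast; linarith)] at hx3
  rw [hgneg ((-3:ℝ) + (1:ℝ)*((3 + s)/2)) (by push_cast; linarith)] at hx3
  have hx4 := hg ((-5:ℝ) + (2:ℝ)*((3 + s)/2))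
  have e4_2 : ((3 + s)/2)*((-5:ℝ) + (2:ℝ)*((3 + s)/2)) - 2 = ((-4:ℝ) + (1:ℝ)*((3 + s)/2)) := by
    push_cast; linear_combination ((1:ℝ)/2) * hs2
  have e4_1 : ((3 + s)/2)*((-5:ℝ) + (2:ℝ)*((3 + s)/2)) - 1 = ((-3:ℝ) + (1:ℝ)*((3 + s)/2)) := by
    push_cast; linear_combination ((1:ℝ)/2) * hs2
  have e4_0 : ((3 + s)/2)*((-5:ℝ) + (2:ℝ)*((3 + s)/2)) = ((-2:ℝ) + (1:ℝ)*((3 + s)/2)) := by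
    push_cast; linear_combination ((1:ℝ)/2) * hs2
  rw [e4_2, e4_1, e4_0] at hx4
  rw [hgneg ((-3:ℝ) + (1:ℝ)*((3 + s)/2)) (by push_cast; linarith)] at hx4
  rw [hgneg ((-4:ℝ) + (1:ℝ)*((3 + s)/2)) (by push_cast; linarith)] at hx4
  have hx5 := hg ((-4:ℝ) + (2:ℝ)*((3 + s)/2))
  have e5_2 : ((3 + s)/2)*((-4:ℝ) + (2:ℝ)*((3 + s)/2)) - 2 = ((-4:ℝ) + (2:ℝ)*((3 + s)/2)) := by
    push_cast; linear_combination ((1:ℝ)/2) * hs2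
  have e5_1 : ((3 + s)/2)*((-4:ℝ) + (2:ℝ)*((3 + s)/2)) - 1 = ((-3:ℝ) + (2:ℝ)*((3 + s)/2)) := by
    push_cast; linear_combination ((1:ℝ)/2) * hs2
  have e5_0 : ((3 + s)/2)*((-4:ℝ) + (2:ℝ)*((3 + s)/2)) = ((-2:ℝ) + (2:ℝ)*((3 + s)/2)) := by
    push_cast; linear_combination ((1:ℝ)/2) * hs2
  rw [e5_2, e5_1, e5_0] at hx5
  rw [hgtop ((-2:ℝ) + (2:ℝ)*((3 + s)/2)) (by push_cast; linarith)] at hx5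
  rw [hgtop ((-3:ℝ) + (2:ℝ)*((3 + s)/2)) (by push_cast; linarith)] at hx5
  have hp0 : ∀ x : ℝ, x = ((3:ℝ) + (-1:ℝ)*((3 + s)/2)) → g x = 0 := by
    intro x hx
    rw [hx]
    linear_combination ((1:ℝ)/4) * hx0 + (((1:ℝ)/2) + ((1:ℝ)/5)*s) * hx1 + (((3:ℝ)/32) + ((1:ℝ)/32)*s) * hx2 + (((-11:ℝ)/64) + ((-5:ℝ)/64)*s) * hx3 + (((1:ℝ)/10)*(g ((0:ℝ) + (0:ℝ)*((3 + s)/2))) + ((-1:ℝ)/16)*(g ((-2:ℝ) + (1:ℝ)*((3 + s)/2)))) * hs2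
  have hp1 : ∀ x : ℝ, x = ((0:ℝ) + (0:ℝ)*((3 + s)/2)) → g x = 0 := by
    intro x hx
    rw [hx]
    linear_combination (((1:ℝ)/2) + ((1:ℝ)/10)*s) * hx1 + (((1:ℝ)/20)*(g ((0:ℝ) + (0:ℝ)*((3 + s)/2)))) * hs2
  have hp2 : ∀ x : ℝ, x = ((1:ℝ) + (0:ℝ)*((3 + s)/2)) → g x = 0 := by
    intro x hx
    rw [hx]
    linear_combination ((1:ℝ)/4) * hx2 + (((-1:ℝ)/4) + ((-1:ℝ)/8)*s) * hx3 + (((-1:ℝ)/8)*(g ((-2:ℝ) + (1:ℝ)*((3 + s)/2)))) * hs2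
  have hp3 : ∀ x : ℝ, x = ((-2:ℝ) + (1:ℝ)*((3 + s)/2)) → g x = 0 := by
    intro x hx
    rw [hx]
    linear_combination (((-1:ℝ)/4) + ((-1:ℝ)/4)*s) * hx3 + (((-1:ℝ)/4)*(g ((-2:ℝ) + (1:ℝ)*((3 + s)/2)))) * hs2
  have hp4 : ∀ x : ℝ, x = ((-5:ℝ) + (2:ℝ)*((3 + s)/2)) → g x = 0 := by
    intro x hx
    rw [hx]
    linear_combination (((-1:ℝ)/4) + ((-1:ℝ)/8)*s) * hx3 + ((1:ℝ)/4) * hx4 + (((-1:ℝ)/8)*(g ((-2:ℝ) + (1:ℝ)*((3 + s)/2)))) * hs2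
  have hp5 : ∀ x : ℝ, x = ((-4:ℝ) + (2:ℝ)*((3 + s)/2)) → g x = 0 := by
    intro x hx
    rw [hx]
    linear_combination (((1:ℝ)/2) + ((1:ℝ)/10)*s) * hx5 + (((1:ℝ)/20)*(g ((-4:ℝ) + (2:ℝ)*((3 + s)/2)))) * hs2
  have hbU : b ≤ 2 := by
    by_contra hcon
    push_neg at hcon
    have hc0 : (2:ℤ) + 1 ≤ b := Int.lt_iff_add_one_le.mp hcon
    have hc1 : ((2:ℝ)) + 1 ≤ (b:ℝ) := by exact_mod_cast hc0
    have hc2 : ((2:ℝ) + 1)*s ≤ (b:ℝ)*s := mul_le_mul_of_nonneg_right hc1 hs0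
    linarith
  have hbL : (-2:ℤ) ≤ b := by
    by_contra hcon
    push_neg at hcon
    have hc0 : b + 1 ≤ (-2:ℤ) := Int.lt_iff_add_one_le.mp hcon
    have hc1 : (b:ℝ) + 1 ≤ ((-2:ℝ)) := by exact_mod_cast hc0
    have hc2 : (b:ℝ)*s ≤ (((-2:ℝ)) - 1)*s := mul_le_mul_of_nonneg_right (by linarith) hs0
    linarith
  interval_cases b
  · -- b = -2
    have haL : (6:ℤ) ≤ a := by
      by_contra hcon
      push_neg at hcon
      have hc0 : a + 1 ≤ (6:ℤ) := Int.lt_iff_add_one_le.mp hcon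
      have hc1 : (a:ℝ) + 1 ≤ (6:ℝ) := by exact_mod_cast hc0
      push_cast at h2
      linarith
    have haU : a ≤ (6:ℤ) := by
      by_contra hcon
      push_neg at hcon
      have hc0 : (6:ℤ) + 1 ≤ a := Int.lt_iff_add_one_le.mp hcon
      have hc1 : (6:ℝ) + 1 ≤ (a:ℝ) := by exact_mod_cast hc0
      push_cast at h3
      linarith
    interval_cases a
    · exfalso
      push_cast at h1a' h1b'
      linarith
  · -- b = -1
    have haL : (3:ℤ) ≤ a := by
      by_contra hcon
      push_neg at hcon
      have hc0 : a + 1 ≤ (3:ℤ) := Int.lt_iff_add_one_le.mp hcon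
      have hc1 : (a:ℝ) + 1 ≤ (3:ℝ) := by exact_mod_cast hc0
      push_cast at h2
      linarith
    have haU : a ≤ (3:ℤ) := by
      by_contra hcon
      push_neg at hcon
      have hc0 : (3:ℤ) + 1 ≤ a := Int.lt_iff_add_one_le.mp hcon
      have hc1 : (3:ℝ) + 1 ≤ (a:ℝ) := by exact_mod_cast hc0
      push_cast at h3
      linarith
    interval_cases a
    · exact hp0 _ (by push_cast; ring)
  · -- b = 0
    have haL : (0:ℤ) ≤ a := by
      by_contra hcon
      push_neg at hcon
      have hc0 : a + 1 ≤ (0:ℤ) := Int.lt_iff_add_one_le.mp hcon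
      have hc1 : (a:ℝ) + 1 ≤ (0:ℝ) := by exact_mod_cast hc0
      push_cast at h2
      linarith
    have haU : a ≤ (1:ℤ) := by
      by_contra hcon
      push_neg at hcon
      have hc0 : (1:ℤ) + 1 ≤ a := Int.lt_iff_add_one_le.mp hcon
      have hc1 : (1:ℝ) + 1 ≤ (a:ℝ) := by exact_mod_cast hc0
      push_cast at h3
      linarith
    interval_cases a
    · exact hp1 _ (by push_cast; ring)
    · exact hp2 _ (by push_cast; ring)
  · -- b = 1
    have haL : (-2:ℤ) ≤ a := by
      by_contra hcon
      push_neg at hcon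
      have hc0 : a + 1 ≤ (-2:ℤ) := Int.lt_iff_add_one_le.mp hcon
      have hc1 : (a:ℝ) + 1 ≤ (-2:ℝ) := by exact_mod_cast hc0
      push_cast at h2
      linarith
    have haU : a ≤ (-2:ℤ) := by
      by_contra hcon
      push_neg at hcon
      have hc0 : (-2:ℤ) + 1 ≤ a := Int.lt_iff_add_one_le.mp hcon
      have hc1 : (-2:ℝ) + 1 ≤ (a:ℝ) := by exact_mod_cast hc0
      push_cast at h3
      linarith
    interval_cases a
    · exact hp3 _ (by push_cast; ring)
  · -- b = 2
    have haL : (-5:ℤ) ≤ a := by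
      by_contra hcon
      push_neg at hcon
      have hc0 : a + 1 ≤ (-5:ℤ) := Int.lt_iff_add_one_le.mp hcon
      have hc1 : (a:ℝ) + 1 ≤ (-5:ℝ) := by exact_mod_cast hc0
      push_cast at h2
      linarith
    have haU : a ≤ (-4:ℤ) := by
      by_contra hcon
      push_neg at hcon
      have hc0 : (-4:ℤ) + 1 ≤ a := Int.lt_iff_add_one_le.mp hcon
      have hc1 : (-4:ℝ) + 1 ≤ (a:ℝ) := by exact_mod_cast hc0
      push_cast at h3
      linarith
    interval_cases a
    · exact hp4 _ (by push_cast; ring)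
    · exact hp5 _ (by push_cast; ring)



set_option maxHeartbeats 3000000 in
theorem core3 : ∀ g : ℝ → ℝ,
    (∀ x : ℝ, 4 * g x = (1 + Real.sqrt 2) * (g ((1 + Real.sqrt 2)*x) + 2 * g ((1 + Real.sqrt 2)*x - 1) + g ((1 + Real.sqrt 2)*x - 2))) →
    (∀ t : ℝ, t < 0 → g t = 0) →
    (∀ t : ℝ, 2*(Real.sqrt 2/2) < t → g t = 0) →
    ∀ a b : ℤ, |(a:ℝ) + (b:ℝ)*(1 - Real.sqrt 2)| ≤ (3/(2 - Real.sqrt 2)) → 0 ≤ (a:ℝ) + (b:ℝ)*(1 + Real.sqrt 2) →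
      (a:ℝ) + (b:ℝ)*(1 + Real.sqrt 2) ≤ 2*(Real.sqrt 2/2) → g ((a:ℝ) + (b:ℝ)*(1 + Real.sqrt 2)) = 0 := by
  intro g hg hgneg hgtop a b h1 h2 h3
  set s : ℝ := Real.sqrt 2 with hsdef
  have hs0 : 0 ≤ s := by rw [hsdef]; exact Real.sqrt_nonneg 2
  have hs2 : s^2 = 2 := by rw [hsdef]; exact Real.sq_sqrt (by norm_num)
  have hsL : (1.4142135:ℝ) < s := by nlinarith [hs2, hs0]
  have hsU : s < (1.4142136:ℝ) := by nlinarith [hs2, hs0]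
  have hC : (3:ℝ)/(2 - s) < ((547:ℝ)/100) := by
    rw [div_lt_iff₀ (by linarith)]
    linarith
  obtain ⟨h1a, h1b⟩ := abs_le.mp h1
  have h1a' : -((547:ℝ)/100) < (a:ℝ) + (b:ℝ)*(1 - s) := by linarith
  have h1b' : (a:ℝ) + (b:ℝ)*(1 - s) < ((547:ℝ)/100) := by linarith
  have hx0 := hg ((3:ℝ) + (-1:ℝ)*(1 + s))
  have e0_2 : (1 + s)*((3:ℝ) + (-1:ℝ)*(1 + s)) - 2 = ((-3:ℝ) + (1:ℝ)*(1 + s)) := by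
    push_cast; linear_combination (-1) * hs2
  have e0_1 : (1 + s)*((3:ℝ) + (-1:ℝ)*(1 + s)) - 1 = ((-2:ℝ) + (1:ℝ)*(1 + s)) := by
    push_cast; linear_combination (-1) * hs2
  have e0_0 : (1 + s)*((3:ℝ) + (-1:ℝ)*(1 + s)) = ((-1:ℝ) + (1:ℝ)*(1 + s)) := by
    push_cast; linear_combination (-1) * hs2
  rw [e0_2, e0_1, e0_0] at hx0
  rw [hgneg ((-3:ℝ) + (1:ℝ)*(1 + s)) (by push_cast; linarith)] at hx0
  have hx1 := hg ((0:ℝ) + (0:ℝ)*(1 + s))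
  have e1_2 : (1 + s)*((0:ℝ) + (0:ℝ)*(1 + s)) - 2 = ((-2:ℝ) + (0:ℝ)*(1 + s)) := by
    push_cast; ring
  have e1_1 : (1 + s)*((0:ℝ) + (0:ℝ)*(1 + s)) - 1 = ((-1:ℝ) + (0:ℝ)*(1 + s)) := by
    push_cast; ring
  have e1_0 : (1 + s)*((0:ℝ) + (0:ℝ)*(1 + s)) = ((0:ℝ) + (0:ℝ)*(1 + s)) := by
    push_cast; ring
  rw [e1_2, e1_1, e1_0] at hx1
  rw [hgneg ((-1:ℝ) + (0:ℝ)*(1 + s)) (by push_cast; linarith)] at hx1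
  rw [hgneg ((-2:ℝ) + (0:ℝ)*(1 + s)) (by push_cast; linarith)] at hx1
  have hx2 := hg ((1:ℝ) + (0:ℝ)*(1 + s))
  have e2_2 : (1 + s)*((1:ℝ) + (0:ℝ)*(1 + s)) - 2 = ((-2:ℝ) + (1:ℝ)*(1 + s)) := by
    push_cast; ring
  have e2_1 : (1 + s)*((1:ℝ) + (0:ℝ)*(1 + s)) - 1 = ((-1:ℝ) + (1:ℝ)*(1 + s)) := by
    push_cast; ring
  have e2_0 : (1 + s)*((1:ℝ) + (0:ℝ)*(1 + s)) = ((0:ℝ) + (1:ℝ)*(1 + s)) := by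
    push_cast; ring
  rw [e2_2, e2_1, e2_0] at hx2
  rw [hgtop ((0:ℝ) + (1:ℝ)*(1 + s)) (by push_cast; linarith)] at hx2
  have hx3 := hg ((-2:ℝ) + (1:ℝ)*(1 + s))
  have e3_2 : (1 + s)*((-2:ℝ) + (1:ℝ)*(1 + s)) - 2 = ((-1:ℝ) + (0:ℝ)*(1 + s)) := by
    push_cast; linear_combination (1) * hs2
  have e3_1 : (1 + s)*((-2:ℝ) + (1:ℝ)*(1 + s)) - 1 = ((0:ℝ) + (0:ℝ)*(1 + s)) := by
    push_cast; linear_combination (1) * hs2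
  have e3_0 : (1 + s)*((-2:ℝ) + (1:ℝ)*(1 + s)) = ((1:ℝ) + (0:ℝ)*(1 + s)) := by
    push_cast; linear_combination (1) * hs2
  rw [e3_2, e3_1, e3_0] at hx3
  rw [hgneg ((-1:ℝ) + (0:ℝ)*(1 + s)) (by push_cast; linarith)] at hx3
  have hx4 := hg ((-1:ℝ) + (1:ℝ)*(1 + s))
  have e4_2 : (1 + s)*((-1:ℝ) + (1:ℝ)*(1 + s)) - 2 = ((-1:ℝ) + (1:ℝ)*(1 + s)) := by
    push_cast; linear_combination (1) * hs2
  have e4_1 : (1 + s)*((-1:ℝ) + (1:ℝ)*(1 + s)) - 1 = ((0:ℝ) + (1:ℝ)*(1 + s)) := by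
    push_cast; linear_combination (1) * hs2
  have e4_0 : (1 + s)*((-1:ℝ) + (1:ℝ)*(1 + s)) = ((1:ℝ) + (1:ℝ)*(1 + s)) := by
    push_cast; linear_combination (1) * hs2
  rw [e4_2, e4_1, e4_0] at hx4
  rw [hgtop ((1:ℝ) + (1:ℝ)*(1 + s)) (by push_cast; linarith)] at hx4
  rw [hgtop ((0:ℝ) + (1:ℝ)*(1 + s)) (by push_cast; linarith)] at hx4
  have hx5 := hg ((-4:ℝ) + (2:ℝ)*(1 + s))
  have e5_2 : (1 + s)*((-4:ℝ) + (2:ℝ)*(1 + s)) - 2 = ((0:ℝ) + (0:ℝ)*(1 + s)) := by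
    push_cast; linear_combination (2) * hs2
  have e5_1 : (1 + s)*((-4:ℝ) + (2:ℝ)*(1 + s)) - 1 = ((1:ℝ) + (0:ℝ)*(1 + s)) := by
    push_cast; linear_combination (2) * hs2
  have e5_0 : (1 + s)*((-4:ℝ) + (2:ℝ)*(1 + s)) = ((2:ℝ) + (0:ℝ)*(1 + s)) := by
    push_cast; linear_combination (2) * hs2
  rw [e5_2, e5_1, e5_0] at hx5
  rw [hgtop ((2:ℝ) + (0:ℝ)*(1 + s)) (by push_cast; linarith)] at hx5
  have hp0 : ∀ x : ℝ, x = ((3:ℝ) + (-1:ℝ)*(1 + s)) → g x = 0 := by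
    intro x hx
    rw [hx]
    linear_combination ((1:ℝ)/4) * hx0 + (((820:ℝ)/1127) + ((572:ℝ)/1127)*s) * hx1 + (((47:ℝ)/322) + ((16:ℝ)/161)*s) * hx2 + (((34:ℝ)/161) + ((30:ℝ)/161)*s) * hx3 + (((2769:ℝ)/4508) + ((509:ℝ)/1127)*s) * hx4 + (((992:ℝ)/1127)*(g ((0:ℝ) + (0:ℝ)*(1 + s))) + ((733:ℝ)/1127)*(g ((-1:ℝ) + (1:ℝ)*(1 + s))) + ((16:ℝ)/161)*(g ((-2:ℝ) + (1:ℝ)*(1 + s))) + ((30:ℝ)/161)*(g ((1:ℝ) + (0:ℝ)*(1 + s)))) * hs2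
  have hp1 : ∀ x : ℝ, x = ((0:ℝ) + (0:ℝ)*(1 + s)) → g x = 0 := by
    intro x hx
    rw [hx]
    linear_combination (((3:ℝ)/7) + ((1:ℝ)/7)*s) * hx1 + (((1:ℝ)/7)*(g ((0:ℝ) + (0:ℝ)*(1 + s)))) * hs2
  have hp2 : ∀ x : ℝ, x = ((1:ℝ) + (0:ℝ)*(1 + s)) → g x = 0 := by
    intro x hx
    rw [hx]
    linear_combination (((410:ℝ)/1127) + ((286:ℝ)/1127)*s) * hx1 + (((52:ℝ)/161) + ((8:ℝ)/161)*s) * hx2 + (((17:ℝ)/161) + ((15:ℝ)/161)*s) * hx3 + (((648:ℝ)/1127) + ((496:ℝ)/1127)*s) * hx4 + (((496:ℝ)/1127)*(g ((0:ℝ) + (0:ℝ)*(1 + s))) + ((608:ℝ)/1127)*(g ((-1:ℝ) + (1:ℝ)*(1 + s))) + ((8:ℝ)/161)*(g ((-2:ℝ) + (1:ℝ)*(1 + s))) + ((15:ℝ)/161)*(g ((1:ℝ) + (0:ℝ)*(1 + s)))) * hs2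
  have hp3 : ∀ x : ℝ, x = ((-2:ℝ) + (1:ℝ)*(1 + s)) → g x = 0 := by
    intro x hx
    rw [hx]
    linear_combination (((648:ℝ)/1127) + ((496:ℝ)/1127)*s) * hx1 + (((17:ℝ)/161) + ((15:ℝ)/161)*s) * hx2 + (((52:ℝ)/161) + ((8:ℝ)/161)*s) * hx3 + (((410:ℝ)/1127) + ((286:ℝ)/1127)*s) * hx4 + (((608:ℝ)/1127)*(g ((0:ℝ) + (0:ℝ)*(1 + s))) + ((496:ℝ)/1127)*(g ((-1:ℝ) + (1:ℝ)*(1 + s))) + ((15:ℝ)/161)*(g ((-2:ℝ) + (1:ℝ)*(1 + s))) + ((8:ℝ)/161)*(g ((1:ℝ) + (0:ℝ)*(1 + s)))) * hs2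
  have hp4 : ∀ x : ℝ, x = ((-1:ℝ) + (1:ℝ)*(1 + s)) → g x = 0 := by
    intro x hx
    rw [hx]
    linear_combination (((3:ℝ)/7) + ((1:ℝ)/7)*s) * hx4 + (((1:ℝ)/7)*(g ((-1:ℝ) + (1:ℝ)*(1 + s)))) * hs2
  have hp5 : ∀ x : ℝ, x = ((-4:ℝ) + (2:ℝ)*(1 + s)) → g x = 0 := by
    intro x hx
    rw [hx]
    linear_combination (((2769:ℝ)/4508) + ((509:ℝ)/1127)*s) * hx1 + (((34:ℝ)/161) + ((30:ℝ)/161)*s) * hx2 + (((47:ℝ)/322) + ((16:ℝ)/161)*s) * hx3 + (((820:ℝ)/1127) + ((572:ℝ)/1127)*s) * hx4 + ((1:ℝ)/4) * hx5 + (((733:ℝ)/1127)*(g ((0:ℝ) + (0:ℝ)*(1 + s))) + ((992:ℝ)/1127)*(g ((-1:ℝ) + (1:ℝ)*(1 + s))) + ((30:ℝ)/161)*(g ((-2:ℝ) + (1:ℝ)*(1 + s))) + ((16:ℝ)/161)*(g ((1:ℝ) + (0:ℝ)*(1 + s)))) * hs2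
  have hbU : b ≤ 2 := by
    by_contra hcon
    push_neg at hcon
    have hc0 : (2:ℤ) + 1 ≤ b := Int.lt_iff_add_one_le.mp hcon
    have hc1 : ((2:ℝ)) + 1 ≤ (b:ℝ) := by exact_mod_cast hc0
    have hc2 : ((2:ℝ) + 1)*s ≤ (b:ℝ)*s := mul_le_mul_of_nonneg_right hc1 hs0
    linarith
  have hbL : (-1:ℤ) ≤ b := by
    by_contra hcon
    push_neg at hcon
    have hc0 : b + 1 ≤ (-1:ℤ) := Int.lt_iff_add_one_le.mp hcon
    have hc1 : (b:ℝ) + 1 ≤ ((-1:ℝ)) := by exact_mod_cast hc0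
    have hc2 : (b:ℝ)*s ≤ (((-1:ℝ)) - 1)*s := mul_le_mul_of_nonneg_right (by linarith) hs0
    linarith
  interval_cases b
  · -- b = -1
    have haL : (3:ℤ) ≤ a := by
      by_contra hcon
      push_neg at hcon
      have hc0 : a + 1 ≤ (3:ℤ) := Int.lt_iff_add_one_le.mp hcon
      have hc1 : (a:ℝ) + 1 ≤ (3:ℝ) := by exact_mod_cast hc0
      push_cast at h2
      linarith
    have haU : a ≤ (3:ℤ) := by
      by_contra hcon
      push_neg at hcon
      have hc0 : (3:ℤ) + 1 ≤ a := Int.lt_iff_add_one_le.mp hcon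
      have hc1 : (3:ℝ) + 1 ≤ (a:ℝ) := by exact_mod_cast hc0
      push_cast at h3
      linarith
    interval_cases a
    · exact hp0 _ (by push_cast; ring)
  · -- b = 0
    have haL : (0:ℤ) ≤ a := by
      by_contra hcon
      push_neg at hcon
      have hc0 : a + 1 ≤ (0:ℤ) := Int.lt_iff_add_one_le.mp hcon
      have hc1 : (a:ℝ) + 1 ≤ (0:ℝ) := by exact_mod_cast hc0
      push_cast at h2
      linarith
    have haU : a ≤ (1:ℤ) := by
      by_contra hcon
      push_neg at hcon
      have hc0 : (1:ℤ) + 1 ≤ a := Int.lt_iff_add_one_le.mp hcon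
      have hc1 : (1:ℝ) + 1 ≤ (a:ℝ) := by exact_mod_cast hc0
      push_cast at h3
      linarith
    interval_cases a
    · exact hp1 _ (by push_cast; ring)
    · exact hp2 _ (by push_cast; ring)
  · -- b = 1
    have haL : (-2:ℤ) ≤ a := by
      by_contra hcon
      push_neg at hcon
      have hc0 : a + 1 ≤ (-2:ℤ) := Int.lt_iff_add_one_le.mp hcon
      have hc1 : (a:ℝ) + 1 ≤ (-2:ℝ) := by exact_mod_cast hc0
      push_cast at h2
      linarith
    have haU : a ≤ (-1:ℤ) := by
      by_contra hcon
      push_neg at hcon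
      have hc0 : (-1:ℤ) + 1 ≤ a := Int.lt_iff_add_one_le.mp hcon
      have hc1 : (-1:ℝ) + 1 ≤ (a:ℝ) := by exact_mod_cast hc0
      push_cast at h3
      linarith
    interval_cases a
    · exact hp3 _ (by push_cast; ring)
    · exact hp4 _ (by push_cast; ring)
  · -- b = 2
    have haL : (-4:ℤ) ≤ a := by
      by_contra hcon
      push_neg at hcon
      have hc0 : a + 1 ≤ (-4:ℤ) := Int.lt_iff_add_one_le.mp hcon
      have hc1 : (a:ℝ) + 1 ≤ (-4:ℝ) := by exact_mod_cast hc0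
      push_cast at h2
      linarith
    have haU : a ≤ (-4:ℤ) := by
      by_contra hcon
      push_neg at hcon
      have hc0 : (-4:ℤ) + 1 ≤ a := Int.lt_iff_add_one_le.mp hcon
      have hc1 : (-4:ℝ) + 1 ≤ (a:ℝ) := by exact_mod_cast hc0
      push_cast at h3
      linarith
    interval_cases a
    · exact hp5 _ (by push_cast; ring)



set_option maxHeartbeats 12000000 in
theorem core4 : ∀ g : ℝ → ℝ,
    (∀ x : ℝ, 4 * g x = ((1 + Real.sqrt 5)/2) * (g (((1 + Real.sqrt 5)/2)*x) + 2 * g (((1 + Real.sqrt 5)/2)*x - 1) + g (((1 + Real.sqrt 5)/2)*x - 2))) →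
    (∀ t : ℝ, t < 0 → g t = 0) →
    (∀ t : ℝ, 2*((1 + Real.sqrt 5)/2) < t → g t = 0) →
    ∀ a b : ℤ, |(a:ℝ) + (b:ℝ)*((1 - Real.sqrt 5)/2)| ≤ (6/(3 - Real.sqrt 5)) → 0 ≤ (a:ℝ) + (b:ℝ)*((1 + Real.sqrt 5)/2) →
      (a:ℝ) + (b:ℝ)*((1 + Real.sqrt 5)/2) ≤ 2*((1 + Real.sqrt 5)/2) → g ((a:ℝ) + (b:ℝ)*((1 + Real.sqrt 5)/2)) = 0 := by
  intro g hg hgneg hgtop a b h1 h2 h3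
  set s : ℝ := Real.sqrt 5 with hsdef
  have hs0 : 0 ≤ s := by rw [hsdef]; exact Real.sqrt_nonneg 5
  have hs2 : s^2 = 5 := by rw [hsdef]; exact Real.sq_sqrt (by norm_num)
  have hsL : (2.2360679:ℝ) < s := by nlinarith [hs2, hs0]
  have hsU : s < (2.2360680:ℝ) := by nlinarith [hs2, hs0]
  have hC : (6:ℝ)/(3 - s) < ((797:ℝ)/100) := by
    rw [div_lt_iff₀ (by linarith)]
    linarith
  obtain ⟨h1a, h1b⟩ := abs_le.mp h1
  have h1a' : -((797:ℝ)/100) < (a:ℝ) + (b:ℝ)*((1 - s)/2) := by linarith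
  have h1b' : (a:ℝ) + (b:ℝ)*((1 - s)/2) < ((797:ℝ)/100) := by linarith
  have hx0 := hg ((5:ℝ) + (-3:ℝ)*((1 + s)/2))
  have e0_2 : ((1 + s)/2)*((5:ℝ) + (-3:ℝ)*((1 + s)/2)) - 2 = ((-5:ℝ) + (2:ℝ)*((1 + s)/2)) := by
    push_cast; linear_combination ((-3:ℝ)/4) * hs2
  have e0_1 : ((1 + s)/2)*((5:ℝ) + (-3:ℝ)*((1 + s)/2)) - 1 = ((-4:ℝ) + (2:ℝ)*((1 + s)/2)) := by
    push_cast; linear_combination ((-3:ℝ)/4) * hs2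
  have e0_0 : ((1 + s)/2)*((5:ℝ) + (-3:ℝ)*((1 + s)/2)) = ((-3:ℝ) + (2:ℝ)*((1 + s)/2)) := by
    push_cast; linear_combination ((-3:ℝ)/4) * hs2
  rw [e0_2, e0_1, e0_0] at hx0
  rw [hgneg ((-4:ℝ) + (2:ℝ)*((1 + s)/2)) (by push_cast; linarith)] at hx0
  rw [hgneg ((-5:ℝ) + (2:ℝ)*((1 + s)/2)) (by push_cast; linarith)] at hx0
  have hx1 := hg ((6:ℝ) + (-3:ℝ)*((1 + s)/2))
  have e1_2 : ((1 + s)/2)*((6:ℝ) + (-3:ℝ)*((1 + s)/2)) - 2 = ((-5:ℝ) + (3:ℝ)*((1 + s)/2)) := by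
    push_cast; linear_combination ((-3:ℝ)/4) * hs2
  have e1_1 : ((1 + s)/2)*((6:ℝ) + (-3:ℝ)*((1 + s)/2)) - 1 = ((-4:ℝ) + (3:ℝ)*((1 + s)/2)) := by
    push_cast; linear_combination ((-3:ℝ)/4) * hs2
  have e1_0 : ((1 + s)/2)*((6:ℝ) + (-3:ℝ)*((1 + s)/2)) = ((-3:ℝ) + (3:ℝ)*((1 + s)/2)) := by
    push_cast; linear_combination ((-3:ℝ)/4) * hs2
  rw [e1_2, e1_1, e1_0] at hx1
  rw [hgneg ((-5:ℝ) + (3:ℝ)*((1 + s)/2)) (by push_cast; linarith)] at hx1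
  have hx2 := hg ((4:ℝ) + (-2:ℝ)*((1 + s)/2))
  have e2_2 : ((1 + s)/2)*((4:ℝ) + (-2:ℝ)*((1 + s)/2)) - 2 = ((-4:ℝ) + (2:ℝ)*((1 + s)/2)) := by
    push_cast; linear_combination ((-1:ℝ)/2) * hs2
  have e2_1 : ((1 + s)/2)*((4:ℝ) + (-2:ℝ)*((1 + s)/2)) - 1 = ((-3:ℝ) + (2:ℝ)*((1 + s)/2)) := by
    push_cast; linear_combination ((-1:ℝ)/2) * hs2
  have e2_0 : ((1 + s)/2)*((4:ℝ) + (-2:ℝ)*((1 + s)/2)) = ((-2:ℝ) + (2:ℝ)*((1 + s)/2)) := by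
    push_cast; linear_combination ((-1:ℝ)/2) * hs2
  rw [e2_2, e2_1, e2_0] at hx2
  rw [hgneg ((-4:ℝ) + (2:ℝ)*((1 + s)/2)) (by push_cast; linarith)] at hx2
  have hx3 := hg ((5:ℝ) + (-2:ℝ)*((1 + s)/2))
  have e3_2 : ((1 + s)/2)*((5:ℝ) + (-2:ℝ)*((1 + s)/2)) - 2 = ((-4:ℝ) + (3:ℝ)*((1 + s)/2)) := by
    push_cast; linear_combination ((-1:ℝ)/2) * hs2
  have e3_1 : ((1 + s)/2)*((5:ℝ) + (-2:ℝ)*((1 + s)/2)) - 1 = ((-3:ℝ) + (3:ℝ)*((1 + s)/2)) := by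
    push_cast; linear_combination ((-1:ℝ)/2) * hs2
  have e3_0 : ((1 + s)/2)*((5:ℝ) + (-2:ℝ)*((1 + s)/2)) = ((-2:ℝ) + (3:ℝ)*((1 + s)/2)) := by
    push_cast; linear_combination ((-1:ℝ)/2) * hs2
  rw [e3_2, e3_1, e3_0] at hx3
  have hx4 := hg ((6:ℝ) + (-2:ℝ)*((1 + s)/2))
  have e4_2 : ((1 + s)/2)*((6:ℝ) + (-2:ℝ)*((1 + s)/2)) - 2 = ((-4:ℝ) + (4:ℝ)*((1 + s)/2)) := by
    push_cast; linear_combination ((-1:ℝ)/2) * hs2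
  have e4_1 : ((1 + s)/2)*((6:ℝ) + (-2:ℝ)*((1 + s)/2)) - 1 = ((-3:ℝ) + (4:ℝ)*((1 + s)/2)) := by
    push_cast; linear_combination ((-1:ℝ)/2) * hs2
  have e4_0 : ((1 + s)/2)*((6:ℝ) + (-2:ℝ)*((1 + s)/2)) = ((-2:ℝ) + (4:ℝ)*((1 + s)/2)) := by
    push_cast; linear_combination ((-1:ℝ)/2) * hs2
  rw [e4_2, e4_1, e4_0] at hx4
  rw [hgtop ((-2:ℝ) + (4:ℝ)*((1 + s)/2)) (by push_cast; linarith)] at hx4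
  rw [hgtop ((-3:ℝ) + (4:ℝ)*((1 + s)/2)) (by push_cast; linarith)] at hx4
  have hx5 := hg ((2:ℝ) + (-1:ℝ)*((1 + s)/2))
  have e5_2 : ((1 + s)/2)*((2:ℝ) + (-1:ℝ)*((1 + s)/2)) - 2 = ((-3:ℝ) + (1:ℝ)*((1 + s)/2)) := by
    push_cast; linear_combination ((-1:ℝ)/4) * hs2
  have e5_1 : ((1 + s)/2)*((2:ℝ) + (-1:ℝ)*((1 + s)/2)) - 1 = ((-2:ℝ) + (1:ℝ)*((1 + s)/2)) := by
    push_cast; linear_combination ((-1:ℝ)/4) * hs2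
  have e5_0 : ((1 + s)/2)*((2:ℝ) + (-1:ℝ)*((1 + s)/2)) = ((-1:ℝ) + (1:ℝ)*((1 + s)/2)) := by
    push_cast; linear_combination ((-1:ℝ)/4) * hs2
  rw [e5_2, e5_1, e5_0] at hx5
  rw [hgneg ((-2:ℝ) + (1:ℝ)*((1 + s)/2)) (by push_cast; linarith)] at hx5
  rw [hgneg ((-3:ℝ) + (1:ℝ)*((1 + s)/2)) (by push_cast; linarith)] at hx5
  have hx6 := hg ((3:ℝ) + (-1:ℝ)*((1 + s)/2))
  have e6_2 : ((1 + s)/2)*((3:ℝ) + (-1:ℝ)*((1 + s)/2)) - 2 = ((-3:ℝ) + (2:ℝ)*((1 + s)/2)) := by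
    push_cast; linear_combination ((-1:ℝ)/4) * hs2
  have e6_1 : ((1 + s)/2)*((3:ℝ) + (-1:ℝ)*((1 + s)/2)) - 1 = ((-2:ℝ) + (2:ℝ)*((1 + s)/2)) := by
    push_cast; linear_combination ((-1:ℝ)/4) * hs2
  have e6_0 : ((1 + s)/2)*((3:ℝ) + (-1:ℝ)*((1 + s)/2)) = ((-1:ℝ) + (2:ℝ)*((1 + s)/2)) := by
    push_cast; linear_combination ((-1:ℝ)/4) * hs2
  rw [e6_2, e6_1, e6_0] at hx6
  have hx7 := hg ((4:ℝ) + (-1:ℝ)*((1 + s)/2))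
  have e7_2 : ((1 + s)/2)*((4:ℝ) + (-1:ℝ)*((1 + s)/2)) - 2 = ((-3:ℝ) + (3:ℝ)*((1 + s)/2)) := by
    push_cast; linear_combination ((-1:ℝ)/4) * hs2
  have e7_1 : ((1 + s)/2)*((4:ℝ) + (-1:ℝ)*((1 + s)/2)) - 1 = ((-2:ℝ) + (3:ℝ)*((1 + s)/2)) := by
    push_cast; linear_combination ((-1:ℝ)/4) * hs2
  have e7_0 : ((1 + s)/2)*((4:ℝ) + (-1:ℝ)*((1 + s)/2)) = ((-1:ℝ) + (3:ℝ)*((1 + s)/2)) := by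
    push_cast; linear_combination ((-1:ℝ)/4) * hs2
  rw [e7_2, e7_1, e7_0] at hx7
  rw [hgtop ((-1:ℝ) + (3:ℝ)*((1 + s)/2)) (by push_cast; linarith)] at hx7
  have hx8 := hg ((0:ℝ) + (0:ℝ)*((1 + s)/2))
  have e8_2 : ((1 + s)/2)*((0:ℝ) + (0:ℝ)*((1 + s)/2)) - 2 = ((-2:ℝ) + (0:ℝ)*((1 + s)/2)) := by
    push_cast; ring
  have e8_1 : ((1 + s)/2)*((0:ℝ) + (0:ℝ)*((1 + s)/2)) - 1 = ((-1:ℝ) + (0:ℝ)*((1 + s)/2)) := by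
    push_cast; ring
  have e8_0 : ((1 + s)/2)*((0:ℝ) + (0:ℝ)*((1 + s)/2)) = ((0:ℝ) + (0:ℝ)*((1 + s)/2)) := by
    push_cast; ring
  rw [e8_2, e8_1, e8_0] at hx8
  rw [hgneg ((-1:ℝ) + (0:ℝ)*((1 + s)/2)) (by push_cast; linarith)] at hx8
  rw [hgneg ((-2:ℝ) + (0:ℝ)*((1 + s)/2)) (by push_cast; linarith)] at hx8
  have hx9 := hg ((1:ℝ) + (0:ℝ)*((1 + s)/2))
  have e9_2 : ((1 + s)/2)*((1:ℝ) + (0:ℝ)*((1 + s)/2)) - 2 = ((-2:ℝ) + (1:ℝ)*((1 + s)/2)) := by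
    push_cast; ring
  have e9_1 : ((1 + s)/2)*((1:ℝ) + (0:ℝ)*((1 + s)/2)) - 1 = ((-1:ℝ) + (1:ℝ)*((1 + s)/2)) := by
    push_cast; ring
  have e9_0 : ((1 + s)/2)*((1:ℝ) + (0:ℝ)*((1 + s)/2)) = ((0:ℝ) + (1:ℝ)*((1 + s)/2)) := by
    push_cast; ring
  rw [e9_2, e9_1, e9_0] at hx9
  rw [hgneg ((-2:ℝ) + (1:ℝ)*((1 + s)/2)) (by push_cast; linarith)] at hx9
  have hx10 := hg ((2:ℝ) + (0:ℝ)*((1 + s)/2))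
  have e10_2 : ((1 + s)/2)*((2:ℝ) + (0:ℝ)*((1 + s)/2)) - 2 = ((-2:ℝ) + (2:ℝ)*((1 + s)/2)) := by
    push_cast; ring
  have e10_1 : ((1 + s)/2)*((2:ℝ) + (0:ℝ)*((1 + s)/2)) - 1 = ((-1:ℝ) + (2:ℝ)*((1 + s)/2)) := by
    push_cast; ring
  have e10_0 : ((1 + s)/2)*((2:ℝ) + (0:ℝ)*((1 + s)/2)) = ((0:ℝ) + (2:ℝ)*((1 + s)/2)) := by
    push_cast; ring
  rw [e10_2, e10_1, e10_0] at hx10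
  have hx11 := hg ((3:ℝ) + (0:ℝ)*((1 + s)/2))
  have e11_2 : ((1 + s)/2)*((3:ℝ) + (0:ℝ)*((1 + s)/2)) - 2 = ((-2:ℝ) + (3:ℝ)*((1 + s)/2)) := by
    push_cast; ring
  have e11_1 : ((1 + s)/2)*((3:ℝ) + (0:ℝ)*((1 + s)/2)) - 1 = ((-1:ℝ) + (3:ℝ)*((1 + s)/2)) := by
    push_cast; ring
  have e11_0 : ((1 + s)/2)*((3:ℝ) + (0:ℝ)*((1 + s)/2)) = ((0:ℝ) + (3:ℝ)*((1 + s)/2)) := by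
    push_cast; ring
  rw [e11_2, e11_1, e11_0] at hx11
  rw [hgtop ((0:ℝ) + (3:ℝ)*((1 + s)/2)) (by push_cast; linarith)] at hx11
  rw [hgtop ((-1:ℝ) + (3:ℝ)*((1 + s)/2)) (by push_cast; linarith)] at hx11
  have hx12 := hg ((-1:ℝ) + (1:ℝ)*((1 + s)/2))
  have e12_2 : ((1 + s)/2)*((-1:ℝ) + (1:ℝ)*((1 + s)/2)) - 2 = ((-1:ℝ) + (0:ℝ)*((1 + s)/2)) := by
    push_cast; linear_combination ((1:ℝ)/4) * hs2
  have e12_1 : ((1 + s)/2)*((-1:ℝ) + (1:ℝ)*((1 + s)/2)) - 1 = ((0:ℝ) + (0:ℝ)*((1 + s)/2)) := by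
    push_cast; linear_combination ((1:ℝ)/4) * hs2
  have e12_0 : ((1 + s)/2)*((-1:ℝ) + (1:ℝ)*((1 + s)/2)) = ((1:ℝ) + (0:ℝ)*((1 + s)/2)) := by
    push_cast; linear_combination ((1:ℝ)/4) * hs2
  rw [e12_2, e12_1, e12_0] at hx12
  rw [hgneg ((-1:ℝ) + (0:ℝ)*((1 + s)/2)) (by push_cast; linarith)] at hx12
  have hx13 := hg ((0:ℝ) + (1:ℝ)*((1 + s)/2))
  have e13_2 : ((1 + s)/2)*((0:ℝ) + (1:ℝ)*((1 + s)/2)) - 2 = ((-1:ℝ) + (1:ℝ)*((1 + s)/2)) := by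
    push_cast; linear_combination ((1:ℝ)/4) * hs2
  have e13_1 : ((1 + s)/2)*((0:ℝ) + (1:ℝ)*((1 + s)/2)) - 1 = ((0:ℝ) + (1:ℝ)*((1 + s)/2)) := by
    push_cast; linear_combination ((1:ℝ)/4) * hs2
  have e13_0 : ((1 + s)/2)*((0:ℝ) + (1:ℝ)*((1 + s)/2)) = ((1:ℝ) + (1:ℝ)*((1 + s)/2)) := by
    push_cast; linear_combination ((1:ℝ)/4) * hs2
  rw [e13_2, e13_1, e13_0] at hx13
  have hx14 := hg ((1:ℝ) + (1:ℝ)*((1 + s)/2))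
  have e14_2 : ((1 + s)/2)*((1:ℝ) + (1:ℝ)*((1 + s)/2)) - 2 = ((-1:ℝ) + (2:ℝ)*((1 + s)/2)) := by
    push_cast; linear_combination ((1:ℝ)/4) * hs2
  have e14_1 : ((1 + s)/2)*((1:ℝ) + (1:ℝ)*((1 + s)/2)) - 1 = ((0:ℝ) + (2:ℝ)*((1 + s)/2)) := by
    push_cast; linear_combination ((1:ℝ)/4) * hs2
  have e14_0 : ((1 + s)/2)*((1:ℝ) + (1:ℝ)*((1 + s)/2)) = ((1:ℝ) + (2:ℝ)*((1 + s)/2)) := by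
    push_cast; linear_combination ((1:ℝ)/4) * hs2
  rw [e14_2, e14_1, e14_0] at hx14
  rw [hgtop ((1:ℝ) + (2:ℝ)*((1 + s)/2)) (by push_cast; linarith)] at hx14
  have hx15 := hg ((-3:ℝ) + (2:ℝ)*((1 + s)/2))
  have e15_2 : ((1 + s)/2)*((-3:ℝ) + (2:ℝ)*((1 + s)/2)) - 2 = ((0:ℝ) + (-1:ℝ)*((1 + s)/2)) := by
    push_cast; linear_combination ((1:ℝ)/2) * hs2
  have e15_1 : ((1 + s)/2)*((-3:ℝ) + (2:ℝ)*((1 + s)/2)) - 1 = ((1:ℝ) + (-1:ℝ)*((1 + s)/2)) := by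
    push_cast; linear_combination ((1:ℝ)/2) * hs2
  have e15_0 : ((1 + s)/2)*((-3:ℝ) + (2:ℝ)*((1 + s)/2)) = ((2:ℝ) + (-1:ℝ)*((1 + s)/2)) := by
    push_cast; linear_combination ((1:ℝ)/2) * hs2
  rw [e15_2, e15_1, e15_0] at hx15
  rw [hgneg ((1:ℝ) + (-1:ℝ)*((1 + s)/2)) (by push_cast; linarith)] at hx15
  rw [hgneg ((0:ℝ) + (-1:ℝ)*((1 + s)/2)) (by push_cast; linarith)] at hx15
  have hx16 := hg ((-2:ℝ) + (2:ℝ)*((1 + s)/2))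
  have e16_2 : ((1 + s)/2)*((-2:ℝ) + (2:ℝ)*((1 + s)/2)) - 2 = ((0:ℝ) + (0:ℝ)*((1 + s)/2)) := by
    push_cast; linear_combination ((1:ℝ)/2) * hs2
  have e16_1 : ((1 + s)/2)*((-2:ℝ) + (2:ℝ)*((1 + s)/2)) - 1 = ((1:ℝ) + (0:ℝ)*((1 + s)/2)) := by
    push_cast; linear_combination ((1:ℝ)/2) * hs2
  have e16_0 : ((1 + s)/2)*((-2:ℝ) + (2:ℝ)*((1 + s)/2)) = ((2:ℝ) + (0:ℝ)*((1 + s)/2)) := by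
    push_cast; linear_combination ((1:ℝ)/2) * hs2
  rw [e16_2, e16_1, e16_0] at hx16
  have hx17 := hg ((-1:ℝ) + (2:ℝ)*((1 + s)/2))
  have e17_2 : ((1 + s)/2)*((-1:ℝ) + (2:ℝ)*((1 + s)/2)) - 2 = ((0:ℝ) + (1:ℝ)*((1 + s)/2)) := by
    push_cast; linear_combination ((1:ℝ)/2) * hs2
  have e17_1 : ((1 + s)/2)*((-1:ℝ) + (2:ℝ)*((1 + s)/2)) - 1 = ((1:ℝ) + (1:ℝ)*((1 + s)/2)) := by
    push_cast; linear_combination ((1:ℝ)/2) * hs2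
  have e17_0 : ((1 + s)/2)*((-1:ℝ) + (2:ℝ)*((1 + s)/2)) = ((2:ℝ) + (1:ℝ)*((1 + s)/2)) := by
    push_cast; linear_combination ((1:ℝ)/2) * hs2
  rw [e17_2, e17_1, e17_0] at hx17
  rw [hgtop ((2:ℝ) + (1:ℝ)*((1 + s)/2)) (by push_cast; linarith)] at hx17
  have hx18 := hg ((0:ℝ) + (2:ℝ)*((1 + s)/2))
  have e18_2 : ((1 + s)/2)*((0:ℝ) + (2:ℝ)*((1 + s)/2)) - 2 = ((0:ℝ) + (2:ℝ)*((1 + s)/2)) := by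
    push_cast; linear_combination ((1:ℝ)/2) * hs2
  have e18_1 : ((1 + s)/2)*((0:ℝ) + (2:ℝ)*((1 + s)/2)) - 1 = ((1:ℝ) + (2:ℝ)*((1 + s)/2)) := by
    push_cast; linear_combination ((1:ℝ)/2) * hs2
  have e18_0 : ((1 + s)/2)*((0:ℝ) + (2:ℝ)*((1 + s)/2)) = ((2:ℝ) + (2:ℝ)*((1 + s)/2)) := by
    push_cast; linear_combination ((1:ℝ)/2) * hs2
  rw [e18_2, e18_1, e18_0] at hx18
  rw [hgtop ((2:ℝ) + (2:ℝ)*((1 + s)/2)) (by push_cast; linarith)] at hx18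
  rw [hgtop ((1:ℝ) + (2:ℝ)*((1 + s)/2)) (by push_cast; linarith)] at hx18
  have hx19 := hg ((-4:ℝ) + (3:ℝ)*((1 + s)/2))
  have e19_2 : ((1 + s)/2)*((-4:ℝ) + (3:ℝ)*((1 + s)/2)) - 2 = ((1:ℝ) + (-1:ℝ)*((1 + s)/2)) := by
    push_cast; linear_combination ((3:ℝ)/4) * hs2
  have e19_1 : ((1 + s)/2)*((-4:ℝ) + (3:ℝ)*((1 + s)/2)) - 1 = ((2:ℝ) + (-1:ℝ)*((1 + s)/2)) := by
    push_cast; linear_combination ((3:ℝ)/4) * hs2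
  have e19_0 : ((1 + s)/2)*((-4:ℝ) + (3:ℝ)*((1 + s)/2)) = ((3:ℝ) + (-1:ℝ)*((1 + s)/2)) := by
    push_cast; linear_combination ((3:ℝ)/4) * hs2
  rw [e19_2, e19_1, e19_0] at hx19
  rw [hgneg ((1:ℝ) + (-1:ℝ)*((1 + s)/2)) (by push_cast; linarith)] at hx19
  have hx20 := hg ((-3:ℝ) + (3:ℝ)*((1 + s)/2))
  have e20_2 : ((1 + s)/2)*((-3:ℝ) + (3:ℝ)*((1 + s)/2)) - 2 = ((1:ℝ) + (0:ℝ)*((1 + s)/2)) := by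
    push_cast; linear_combination ((3:ℝ)/4) * hs2
  have e20_1 : ((1 + s)/2)*((-3:ℝ) + (3:ℝ)*((1 + s)/2)) - 1 = ((2:ℝ) + (0:ℝ)*((1 + s)/2)) := by
    push_cast; linear_combination ((3:ℝ)/4) * hs2
  have e20_0 : ((1 + s)/2)*((-3:ℝ) + (3:ℝ)*((1 + s)/2)) = ((3:ℝ) + (0:ℝ)*((1 + s)/2)) := by
    push_cast; linear_combination ((3:ℝ)/4) * hs2
  rw [e20_2, e20_1, e20_0] at hx20
  have hx21 := hg ((-2:ℝ) + (3:ℝ)*((1 + s)/2))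
  have e21_2 : ((1 + s)/2)*((-2:ℝ) + (3:ℝ)*((1 + s)/2)) - 2 = ((1:ℝ) + (1:ℝ)*((1 + s)/2)) := by
    push_cast; linear_combination ((3:ℝ)/4) * hs2
  have e21_1 : ((1 + s)/2)*((-2:ℝ) + (3:ℝ)*((1 + s)/2)) - 1 = ((2:ℝ) + (1:ℝ)*((1 + s)/2)) := by
    push_cast; linear_combination ((3:ℝ)/4) * hs2
  have e21_0 : ((1 + s)/2)*((-2:ℝ) + (3:ℝ)*((1 + s)/2)) = ((3:ℝ) + (1:ℝ)*((1 + s)/2)) := by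
    push_cast; linear_combination ((3:ℝ)/4) * hs2
  rw [e21_2, e21_1, e21_0] at hx21
  rw [hgtop ((3:ℝ) + (1:ℝ)*((1 + s)/2)) (by push_cast; linarith)] at hx21
  rw [hgtop ((2:ℝ) + (1:ℝ)*((1 + s)/2)) (by push_cast; linarith)] at hx21
  have hx22 := hg ((-5:ℝ) + (4:ℝ)*((1 + s)/2))
  have e22_2 : ((1 + s)/2)*((-5:ℝ) + (4:ℝ)*((1 + s)/2)) - 2 = ((2:ℝ) + (-1:ℝ)*((1 + s)/2)) := by
    push_cast; linear_combination (1) * hs2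
  have e22_1 : ((1 + s)/2)*((-5:ℝ) + (4:ℝ)*((1 + s)/2)) - 1 = ((3:ℝ) + (-1:ℝ)*((1 + s)/2)) := by
    push_cast; linear_combination (1) * hs2
  have e22_0 : ((1 + s)/2)*((-5:ℝ) + (4:ℝ)*((1 + s)/2)) = ((4:ℝ) + (-1:ℝ)*((1 + s)/2)) := by
    push_cast; linear_combination (1) * hs2
  rw [e22_2, e22_1, e22_0] at hx22
  have hx23 := hg ((-4:ℝ) + (4:ℝ)*((1 + s)/2))
  have e23_2 : ((1 + s)/2)*((-4:ℝ) + (4:ℝ)*((1 + s)/2)) - 2 = ((2:ℝ) + (0:ℝ)*((1 + s)/2)) := by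
    push_cast; linear_combination (1) * hs2
  have e23_1 : ((1 + s)/2)*((-4:ℝ) + (4:ℝ)*((1 + s)/2)) - 1 = ((3:ℝ) + (0:ℝ)*((1 + s)/2)) := by
    push_cast; linear_combination (1) * hs2
  have e23_0 : ((1 + s)/2)*((-4:ℝ) + (4:ℝ)*((1 + s)/2)) = ((4:ℝ) + (0:ℝ)*((1 + s)/2)) := by
    push_cast; linear_combination (1) * hs2
  rw [e23_2, e23_1, e23_0] at hx23
  rw [hgtop ((4:ℝ) + (0:ℝ)*((1 + s)/2)) (by push_cast; linarith)] at hx23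
  have hp0 : ∀ x : ℝ, x = ((5:ℝ) + (-3:ℝ)*((1 + s)/2)) → g x = 0 := by
    intro x hx
    rw [hx]
    linear_combination ((1:ℝ)/4) * hx0 + (((3:ℝ)/128) + ((1:ℝ)/128)*s) * hx5 + (((-701:ℝ)/2624) + ((-1569:ℝ)/13120)*s) * hx8 + (((-1669:ℝ)/20992) + ((-3739:ℝ)/104960)*s) * hx9 + (((-1035:ℝ)/5248) + ((-2303:ℝ)/26240)*s) * hx12 + (((-89:ℝ)/256) + ((-199:ℝ)/1280)*s) * hx13 + (((-1097:ℝ)/5248) + ((-2453:ℝ)/26240)*s) * hx14 + (((1:ℝ)/32) + ((1:ℝ)/32)*s) * hx15 + (((-1775:ℝ)/20992) + ((-3969:ℝ)/104960)*s) * hx17 + (((-8197:ℝ)/28864) + ((-18329:ℝ)/144320)*s) * hx18 + (((-359:ℝ)/3280)*(g ((-1:ℝ) + (1:ℝ)*((1 + s)/2))) + ((-121:ℝ)/820)*(g ((0:ℝ) + (0:ℝ)*((1 + s)/2))) + ((-123:ℝ)/640)*(g ((0:ℝ) + (1:ℝ)*((1 + s)/2))) + ((-2303:ℝ)/52480)*(g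 ((1:ℝ) + (0:ℝ)*((1 + s)/2))) + ((-379:ℝ)/3280)*(g ((1:ℝ) + (1:ℝ)*((1 + s)/2))) + ((-354:ℝ)/2255)*(g ((0:ℝ) + (2:ℝ)*((1 + s)/2))) + ((-2453:ℝ)/52480)*(g ((-1:ℝ) + (2:ℝ)*((1 + s)/2))) + ((1:ℝ)/64)*(g ((2:ℝ) + (-1:ℝ)*((1 + s)/2)))) * hs2
  have hp1 : ∀ x : ℝ, x = ((6:ℝ) + (-3:ℝ)*((1 + s)/2)) → g x = 0 := by
    intro x hx
    rw [hx]
    linear_combination ((1:ℝ)/4) * hx1 + (((103:ℝ)/1024) + ((35:ℝ)/1024)*s) * hx5 + (((3:ℝ)/64) + ((1:ℝ)/64)*s) * hx6 + (((-308594433:ℝ)/24130304) + ((-2695981:ℝ)/471295)*s) * hx8 + (((-131525749:ℝ)/35098624) + ((-294783697:ℝ)/175493120)*s) * hx9 + (((477:ℝ)/6688) + ((175:ℝ)/6688)*s) * hx10 + (((3:ℝ)/128) + ((1:ℝ)/128)*s) * hx11 + (((-3767957:ℝ)/398848) + ((-4209861:ℝ)/997120)*s) * hx12 + (((-358915:ℝ)/22528)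 + ((-802543:ℝ)/112640)*s) * hx13 + (((-3785227:ℝ)/398848) + ((-4232941:ℝ)/997120)*s) * hx14 + (((1:ℝ)/64) + ((1:ℝ)/128)*s) * hx15 + (((189:ℝ)/3344) + ((93:ℝ)/3344)*s) * hx16 + (((-132439959:ℝ)/35098624) + ((-295664027:ℝ)/175493120)*s) * hx17 + (((-310118527:ℝ)/24130304) + ((-173330879:ℝ)/30162880)*s) * hx18 + (((1:ℝ)/16) + ((1:ℝ)/16)*s) * hx19 + (((1:ℝ)/32) + ((1:ℝ)/32)*s) * hx20 + (((1:ℝ)/128) + ((1:ℝ)/256)*s) * hx21 + (((-10420063:ℝ)/1994240)*(g ((-1:ℝ) + (1:ℝ)*((1 + s)/2))) + ((-45816971:ℝ)/21936640)*(g ((-1:ℝ) + (2:ℝ)*((1 + s)/2))) + ((6:ℝ)/209)*(g ((-2:ℝ) + (2:ℝ)*((1 + s)/2))) + ((1:ℝ)/128)*(g ((-3:ℝ) + (2:ℝ)*((1 + s)/2))) + ((-852801029:ℝ)/120651520)*(g ((0:ℝ) + (0:ℝ)*((1 + s)/2))) + ((-31001:ℝ)/3520)*(g ((0:ℝ) +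 (1:ℝ)*((1 + s)/2))) + ((-857269119:ℝ)/120651520)*(g ((0:ℝ) + (2:ℝ)*((1 + s)/2))) + ((1:ℝ)/256)*(g ((-2:ℝ) + (3:ℝ)*((1 + s)/2))) + ((-45355631:ℝ)/21936640)*(g ((1:ℝ) + (0:ℝ)*((1 + s)/2))) + ((-10460253:ℝ)/1994240)*(g ((1:ℝ) + (1:ℝ)*((1 + s)/2))) + ((17:ℝ)/256)*(g ((2:ℝ) + (-1:ℝ)*((1 + s)/2))) + ((151:ℝ)/3344)*(g ((2:ℝ) + (0:ℝ)*((1 + s)/2))) + ((1:ℝ)/32)*(g ((3:ℝ) + (-1:ℝ)*((1 + s)/2))) + ((1:ℝ)/64)*(g ((3:ℝ) + (0:ℝ)*((1 + s)/2)))) * hs2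
  have hp2 : ∀ x : ℝ, x = ((4:ℝ) + (-2:ℝ)*((1 + s)/2)) → g x = 0 := by
    intro x hx
    rw [hx]
    linear_combination ((1:ℝ)/4) * hx2 + (((3:ℝ)/64) + ((1:ℝ)/64)*s) * hx5 + (((-18819263:ℝ)/3016288) + ((-42127147:ℝ)/15081440)*s) * hx8 + (((-3982549:ℝ)/2193664) + ((-8969547:ℝ)/10968320)*s) * hx9 + (((23:ℝ)/836) + ((2:ℝ)/209)*s) * hx10 + (((-230737:ℝ)/49856) + ((-515309:ℝ)/249280)*s) * hx12 + (((-11027:ℝ)/1408) + ((-24653:ℝ)/7040)*s) * hx13 + (((-233547:ℝ)/49856) + ((-522319:ℝ)/249280)*s) * hx14 + (((1:ℝ)/16) + ((1:ℝ)/16)*s) * hx15 + (((17:ℝ)/418) + ((15:ℝ)/418)*s) * hx16 + (((-4115935:ℝ)/2193664) + ((-9193617:ℝ)/10968320)*s) * hx17 + (((-19149197:ℝ)/3016288) + ((-42811897:ℝ)/15081440)*s) * hx18 + (((-79797:ℝ)/31160)*(g ((-1:ℝ) + (1:ℝ)*((1 + s)/2))) + ((-3248073:ℝ)/942590)*(g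 ((0:ℝ) + (0:ℝ)*((1 + s)/2))) + ((-15241:ℝ)/3520)*(g ((0:ℝ) + (1:ℝ)*((1 + s)/2))) + ((-6616761:ℝ)/1885180)*(g ((0:ℝ) + (2:ℝ)*((1 + s)/2))) + ((-5693029:ℝ)/5484160)*(g ((-1:ℝ) + (2:ℝ)*((1 + s)/2))) + ((1:ℝ)/209)*(g ((-2:ℝ) + (2:ℝ)*((1 + s)/2))) + ((-5471599:ℝ)/5484160)*(g ((1:ℝ) + (0:ℝ)*((1 + s)/2))) + ((-80677:ℝ)/31160)*(g ((1:ℝ) + (1:ℝ)*((1 + s)/2))) + ((1:ℝ)/32)*(g ((2:ℝ) + (-1:ℝ)*((1 + s)/2))) + ((15:ℝ)/836)*(g ((2:ℝ) + (0:ℝ)*((1 + s)/2)))) * hs2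
  have hp3 : ∀ x : ℝ, x = ((5:ℝ) + (-2:ℝ)*((1 + s)/2)) → g x = 0 := by
    intro x hx
    rw [hx]
    linear_combination ((1:ℝ)/4) * hx3 + (((103:ℝ)/2048) + ((35:ℝ)/2048)*s) * hx5 + (((3:ℝ)/128) + ((1:ℝ)/128)*s) * hx6 + (((-406248847:ℝ)/24130304) + ((-1817064283:ℝ)/241303040)*s) * hx8 + (((-345991685:ℝ)/70197248) + ((-775962581:ℝ)/350986240)*s) * hx9 + (((1581:ℝ)/13376) + ((559:ℝ)/13376)*s) * hx10 + (((3:ℝ)/64) + ((1:ℝ)/64)*s) * hx11 + (((-2478023:ℝ)/199424) + ((-22152851:ℝ)/3988480)*s) * hx12 + (((-940899:ℝ)/45056) + ((-2103859:ℝ)/225280)*s) * hx13 + (((-1236261:ℝ)/99712) + ((-22131741:ℝ)/3988480)*s) * hx14 + (((1:ℝ)/128) + ((1:ℝ)/256)*s) * hx15 + (((189:ℝ)/3344) + ((93:ℝ)/3344)*s) * hx16 + (((-345950391:ℝ)/70197248) + ((-771994551:ℝ)/350986240)*s) * hx17 + (((-404940991:ℝ)/24130304) + ((-1810321173:ℝ)/241303040)*s)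 * hx18 + (((1:ℝ)/32) + ((1:ℝ)/32)*s) * hx19 + (((1:ℝ)/16) + ((1:ℝ)/16)*s) * hx20 + (((3:ℝ)/64) + ((5:ℝ)/128)*s) * hx21 + (((-27407609:ℝ)/3988480)*(g ((-1:ℝ) + (1:ℝ)*((1 + s)/2))) + ((-239439351:ℝ)/87746560)*(g ((-1:ℝ) + (2:ℝ)*((1 + s)/2))) + ((6:ℝ)/209)*(g ((-2:ℝ) + (2:ℝ)*((1 + s)/2))) + ((1:ℝ)/256)*(g ((-3:ℝ) + (2:ℝ)*((1 + s)/2))) + ((-2245424187:ℝ)/241303040)*(g ((0:ℝ) + (0:ℝ)*((1 + s)/2))) + ((-650159:ℝ)/56320)*(g ((0:ℝ) + (1:ℝ)*((1 + s)/2))) + ((-2239088737:ℝ)/241303040)*(g ((0:ℝ) + (2:ℝ)*((1 + s)/2))) + ((1:ℝ)/128)*(g ((-2:ℝ) + (3:ℝ)*((1 + s)/2))) + ((-238498961:ℝ)/87746560)*(g ((1:ℝ) + (0:ℝ)*((1 + s)/2))) + ((-27318699:ℝ)/3988480)*(g ((1:ℝ) + (1:ℝ)*((1 + s)/2))) + ((17:ℝ)/512)*(g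 ((2:ℝ) + (-1:ℝ)*((1 + s)/2))) + ((511:ℝ)/6688)*(g ((2:ℝ) + (0:ℝ)*((1 + s)/2))) + ((1:ℝ)/64)*(g ((3:ℝ) + (-1:ℝ)*((1 + s)/2))) + ((1:ℝ)/32)*(g ((3:ℝ) + (0:ℝ)*((1 + s)/2)))) * hs2
  have hp4 : ∀ x : ℝ, x = ((6:ℝ) + (-2:ℝ)*((1 + s)/2)) → g x = 0 := by
    intro x hx
    rw [hx]
    linear_combination ((1:ℝ)/4) * hx4 + (((-30980547:ℝ)/12065152) + ((-69278941:ℝ)/60325760)*s) * hx8 + (((-831847:ℝ)/1096832) + ((-7443323:ℝ)/21936640)*s) * hx9 + (((23:ℝ)/836) + ((2:ℝ)/209)*s) * hx10 + (((3:ℝ)/64) + ((1:ℝ)/64)*s) * hx11 + (((-377933:ℝ)/199424) + ((-845027:ℝ)/997120)*s) * hx12 + (((-1115:ℝ)/352) + ((-19947:ℝ)/14080)*s) * hx13 + (((-373023:ℝ)/199424) + ((-834497:ℝ)/997120)*s) * hx14 + (((63:ℝ)/6688) + ((31:ℝ)/6688)*s) * hx16 + (((-404753:ℝ)/548416) + ((-7220573:ℝ)/21936640)*s)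 * hx17 + (((-30473205:ℝ)/12065152) + ((-68111731:ℝ)/60325760)*s) * hx18 + (((1:ℝ)/64) + ((1:ℝ)/128)*s) * hx21 + (((1:ℝ)/32) + ((1:ℝ)/32)*s) * hx23 + (((-42811897:ℝ)/30162880)*(g ((0:ℝ) + (0:ℝ)*((1 + s)/2))) + ((-24653:ℝ)/14080)*(g ((0:ℝ) + (1:ℝ)*((1 + s)/2))) + ((-522319:ℝ)/498560)*(g ((-1:ℝ) + (1:ℝ)*((1 + s)/2))) + ((-42127147:ℝ)/30162880)*(g ((0:ℝ) + (2:ℝ)*((1 + s)/2))) + ((-8969547:ℝ)/21936640)*(g ((-1:ℝ) + (2:ℝ)*((1 + s)/2))) + ((1:ℝ)/209)*(g ((-2:ℝ) + (2:ℝ)*((1 + s)/2))) + ((1:ℝ)/128)*(g ((-2:ℝ) + (3:ℝ)*((1 + s)/2))) + ((-9193617:ℝ)/21936640)*(g ((1:ℝ) + (0:ℝ)*((1 + s)/2))) + ((-515309:ℝ)/498560)*(g ((1:ℝ) + (1:ℝ)*((1 + s)/2))) + ((15:ℝ)/836)*(g ((2:ℝ) + (0:ℝ)*((1 + s)/2)))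 + ((1:ℝ)/32)*(g ((3:ℝ) + (0:ℝ)*((1 + s)/2)))) * hs2
  have hp5 : ∀ x : ℝ, x = ((2:ℝ) + (-1:ℝ)*((1 + s)/2)) → g x = 0 := by
    intro x hx
    rw [hx]
    linear_combination ((1:ℝ)/4) * hx5 + (((-267:ℝ)/164) + ((-601:ℝ)/820)*s) * hx8 + (((-317:ℝ)/656) + ((-359:ℝ)/1640)*s) * hx9 + (((-401:ℝ)/328) + ((-867:ℝ)/1640)*s) * hx12 + (((-17:ℝ)/8) + ((-19:ℝ)/20)*s) * hx13 + (((-419:ℝ)/328) + ((-937:ℝ)/1640)*s) * hx14 + (((-339:ℝ)/656) + ((-379:ℝ)/1640)*s) * hx17 + (((-3131:ℝ)/1804) + ((-7001:ℝ)/9020)*s) * hx18 + (((-367:ℝ)/410)*(g ((0:ℝ) + (0:ℝ)*((1 + s)/2))) + ((-47:ℝ)/40)*(g ((0:ℝ) + (1:ℝ)*((1 + s)/2))) + ((-569:ℝ)/820)*(g ((-1:ℝ) + (1:ℝ)*((1 + s)/2))) + ((-867:ℝ)/3280)*(g ((1:ℝ) + (0:ℝ)*((1 + s)/2))) + ((-579:ℝ)/820)*(g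 ((1:ℝ) + (1:ℝ)*((1 + s)/2))) + ((-4327:ℝ)/4510)*(g ((0:ℝ) + (2:ℝ)*((1 + s)/2))) + ((-937:ℝ)/3280)*(g ((-1:ℝ) + (2:ℝ)*((1 + s)/2)))) * hs2
  have hp6 : ∀ x : ℝ, x = ((3:ℝ) + (-1:ℝ)*((1 + s)/2)) → g x = 0 := by
    intro x hx
    rw [hx]
    linear_combination (((3:ℝ)/128) + ((1:ℝ)/128)*s) * hx5 + ((1:ℝ)/4) * hx6 + (((-96324815:ℝ)/6032576) + ((-215565147:ℝ)/30162880)*s) * hx8 + (((-20488277:ℝ)/4387328) + ((-46067147:ℝ)/21936640)*s) * hx9 + (((23:ℝ)/418) + ((4:ℝ)/209)*s) * hx10 + (((-1178897:ℝ)/99712) + ((-2634029:ℝ)/498560)*s) * hx12 + (((-55955:ℝ)/2816) + ((-125133:ℝ)/14080)*s) * hx13 + (((-1179915:ℝ)/99712) + ((-2641359:ℝ)/498560)*s) * hx14 + (((1:ℝ)/32) + ((1:ℝ)/32)*s) * hx15 + (((17:ℝ)/209) + ((15:ℝ)/209)*s) * hx16 + (((-20714591:ℝ)/4387328) + ((-45882897:ℝ)/21936640)*s)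 * hx17 + (((-96851605:ℝ)/6032576) + ((-216496297:ℝ)/30162880)*s) * hx18 + (((-407557:ℝ)/62320)*(g ((-1:ℝ) + (1:ℝ)*((1 + s)/2))) + ((-16628683:ℝ)/1885180)*(g ((0:ℝ) + (0:ℝ)*((1 + s)/2))) + ((-77321:ℝ)/7040)*(g ((0:ℝ) + (1:ℝ)*((1 + s)/2))) + ((-4183777:ℝ)/471295)*(g ((0:ℝ) + (2:ℝ)*((1 + s)/2))) + ((-28845029:ℝ)/10968320)*(g ((-1:ℝ) + (2:ℝ)*((1 + s)/2))) + ((2:ℝ)/209)*(g ((-2:ℝ) + (2:ℝ)*((1 + s)/2))) + ((-28187119:ℝ)/10968320)*(g ((1:ℝ) + (0:ℝ)*((1 + s)/2))) + ((-407277:ℝ)/62320)*(g ((1:ℝ) + (1:ℝ)*((1 + s)/2))) + ((1:ℝ)/64)*(g ((2:ℝ) + (-1:ℝ)*((1 + s)/2))) + ((15:ℝ)/418)*(g ((2:ℝ) + (0:ℝ)*((1 + s)/2)))) * hs2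
  have hp7 : ∀ x : ℝ, x = ((4:ℝ) + (-1:ℝ)*((1 + s)/2)) → g x = 0 := by
    intro x hx
    rw [hx]
    linear_combination ((1:ℝ)/4) * hx7 + (((-190555359:ℝ)/24130304) + ((-85227765:ℝ)/24130304)*s) * hx8 + (((-5079435:ℝ)/2193664) + ((-9113359:ℝ)/8774656)*s) * hx9 + (((23:ℝ)/418) + ((4:ℝ)/209)*s) * hx10 + (((3:ℝ)/128) + ((1:ℝ)/128)*s) * hx11 + (((-2322861:ℝ)/398848) + ((-1038439:ℝ)/398848)*s) * hx12 + (((-6869:ℝ)/704) + ((-24575:ℝ)/5632)*s) * hx13 + (((-2291935:ℝ)/398848) + ((-1027469:ℝ)/398848)*s) * hx14 + (((63:ℝ)/3344) + ((31:ℝ)/3344)*s) * hx16 + (((-2512487:ℝ)/1096832) + ((-8965673:ℝ)/8774656)*s) * hx17 + (((-187873493:ℝ)/24130304) + ((-83961687:ℝ)/24130304)*s) * hx18 + (((1:ℝ)/32) + ((1:ℝ)/32)*s) * hx20 + (((9:ℝ)/128) + ((17:ℝ)/256)*s) * hx21 + (((-52663797:ℝ)/12065152)*(g ((0:ℝ)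 + (0:ℝ)*((1 + s)/2))) + ((-30377:ℝ)/5632)*(g ((0:ℝ) + (1:ℝ)*((1 + s)/2))) + ((-642211:ℝ)/199424)*(g ((-1:ℝ) + (1:ℝ)*((1 + s)/2))) + ((-51955903:ℝ)/12065152)*(g ((0:ℝ) + (2:ℝ)*((1 + s)/2))) + ((-11134223:ℝ)/8774656)*(g ((-1:ℝ) + (2:ℝ)*((1 + s)/2))) + ((2:ℝ)/209)*(g ((-2:ℝ) + (2:ℝ)*((1 + s)/2))) + ((1:ℝ)/256)*(g ((-2:ℝ) + (3:ℝ)*((1 + s)/2))) + ((-11204381:ℝ)/8774656)*(g ((1:ℝ) + (0:ℝ)*((1 + s)/2))) + ((-632233:ℝ)/199424)*(g ((1:ℝ) + (1:ℝ)*((1 + s)/2))) + ((15:ℝ)/418)*(g ((2:ℝ) + (0:ℝ)*((1 + s)/2))) + ((1:ℝ)/64)*(g ((3:ℝ) + (0:ℝ)*((1 + s)/2)))) * hs2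
  have hp8 : ∀ x : ℝ, x = ((0:ℝ) + (0:ℝ)*((1 + s)/2)) → g x = 0 := by
    intro x hx
    rw [hx]
    linear_combination (((7:ℝ)/22) + ((1:ℝ)/22)*s) * hx8 + (((1:ℝ)/44)*(g ((0:ℝ) + (0:ℝ)*((1 + s)/2)))) * hs2
  have hp9 : ∀ x : ℝ, x = ((1:ℝ) + (0:ℝ)*((1 + s)/2)) → g x = 0 := by
    intro x hx
    rw [hx]
    linear_combination (((-4687:ℝ)/451) + ((-10501:ℝ)/2255)*s) * hx8 + (((-233:ℝ)/82) + ((-569:ℝ)/410)*s) * hx9 + (((-631:ℝ)/82) + ((-1397:ℝ)/410)*s) * hx12 + ((-13) + ((-29:ℝ)/5)*s) * hx13 + (((-320:ℝ)/41) + ((-716:ℝ)/205)*s) * hx14 + (((-259:ℝ)/82) + ((-579:ℝ)/410)*s) * hx17 + (((-4784:ℝ)/451) + ((-10696:ℝ)/2255)*s) * hx18 + (((-12934:ℝ)/2255)*(g ((0:ℝ) + (0:ℝ)*((1 + s)/2))) + ((-36:ℝ)/5)*(g ((0:ℝ) + (1:ℝ)*((1 + s)/2))) + ((-879:ℝ)/205)*(g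 ((-1:ℝ) + (1:ℝ)*((1 + s)/2))) + ((-1397:ℝ)/820)*(g ((1:ℝ) + (0:ℝ)*((1 + s)/2))) + ((-884:ℝ)/205)*(g ((1:ℝ) + (1:ℝ)*((1 + s)/2))) + ((-13224:ℝ)/2255)*(g ((0:ℝ) + (2:ℝ)*((1 + s)/2))) + ((-358:ℝ)/205)*(g ((-1:ℝ) + (2:ℝ)*((1 + s)/2)))) * hs2
  have hp10 : ∀ x : ℝ, x = ((2:ℝ) + (0:ℝ)*((1 + s)/2)) → g x = 0 := by
    intro x hx
    rw [hx]
    linear_combination (((-2693139:ℝ)/188518) + ((-6024873:ℝ)/942590)*s) * hx8 + (((-36087:ℝ)/8569) + ((-80943:ℝ)/42845)*s) * hx9 + (((58:ℝ)/209) + ((2:ℝ)/209)*s) * hx10 + (((-8219:ℝ)/779) + ((-18369:ℝ)/3895)*s) * hx12 + (((-194:ℝ)/11) + ((-434:ℝ)/55)*s) * hx13 + (((-8140:ℝ)/779) + ((-18244:ℝ)/3895)*s) * hx14 + (((17:ℝ)/418) + ((15:ℝ)/418)*s) * hx16 + (((-35581:ℝ)/8569) + ((-77973:ℝ)/42845)*s)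 * hx17 + (((-1332022:ℝ)/94259) + ((-2969894:ℝ)/471295)*s) * hx18 + (((-3720411:ℝ)/471295)*(g ((0:ℝ) + (0:ℝ)*((1 + s)/2))) + ((-536:ℝ)/55)*(g ((0:ℝ) + (1:ℝ)*((1 + s)/2))) + ((-22726:ℝ)/3895)*(g ((-1:ℝ) + (1:ℝ)*((1 + s)/2))) + ((-3690216:ℝ)/471295)*(g ((0:ℝ) + (2:ℝ)*((1 + s)/2))) + ((-99932:ℝ)/42845)*(g ((-1:ℝ) + (2:ℝ)*((1 + s)/2))) + ((1:ℝ)/209)*(g ((-2:ℝ) + (2:ℝ)*((1 + s)/2))) + ((-99492:ℝ)/42845)*(g ((1:ℝ) + (0:ℝ)*((1 + s)/2))) + ((-22456:ℝ)/3895)*(g ((1:ℝ) + (1:ℝ)*((1 + s)/2))) + ((15:ℝ)/836)*(g ((2:ℝ) + (0:ℝ)*((1 + s)/2)))) * hs2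
  have hp11 : ∀ x : ℝ, x = ((3:ℝ) + (0:ℝ)*((1 + s)/2)) → g x = 0 := by
    intro x hx
    rw [hx]
    linear_combination (((-2533:ℝ)/3608) + ((-708:ℝ)/2255)*s) * hx8 + (((-1097:ℝ)/5248) + ((-2453:ℝ)/26240)*s) * hx9 + ((1:ℝ)/4) * hx11 + (((-339:ℝ)/656) + ((-379:ℝ)/1640)*s) * hx12 + (((-55:ℝ)/64) + ((-123:ℝ)/320)*s) * hx13 + (((-317:ℝ)/656) + ((-359:ℝ)/1640)*s) * hx14 + (((-1035:ℝ)/5248) + ((-2303:ℝ)/26240)*s) * hx17 + (((-217:ℝ)/328) + ((-121:ℝ)/410)*s) * hx18 + (((1:ℝ)/32) + ((1:ℝ)/32)*s) * hx21 + (((-7001:ℝ)/18040)*(g ((0:ℝ) + (0:ℝ)*((1 + s)/2))) + ((-19:ℝ)/40)*(g ((0:ℝ) + (1:ℝ)*((1 + s)/2))) + ((-937:ℝ)/3280)*(g ((-1:ℝ) + (1:ℝ)*((1 + s)/2))) + ((-379:ℝ)/3280)*(g ((1:ℝ) + (0:ℝ)*((1 + s)/2))) + ((-867:ℝ)/3280)*(g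 ((1:ℝ) + (1:ℝ)*((1 + s)/2))) + ((-601:ℝ)/1640)*(g ((0:ℝ) + (2:ℝ)*((1 + s)/2))) + ((-359:ℝ)/3280)*(g ((-1:ℝ) + (2:ℝ)*((1 + s)/2)))) * hs2
  have hp12 : ∀ x : ℝ, x = ((-1:ℝ) + (1:ℝ)*((1 + s)/2)) → g x = 0 := by
    intro x hx
    rw [hx]
    linear_combination (((-167:ℝ)/41) + ((-367:ℝ)/205)*s) * hx8 + (((-401:ℝ)/328) + ((-867:ℝ)/1640)*s) * hx9 + (((-233:ℝ)/82) + ((-569:ℝ)/410)*s) * hx12 + (((-21:ℝ)/4) + ((-47:ℝ)/20)*s) * hx13 + (((-259:ℝ)/82) + ((-579:ℝ)/410)*s) * hx14 + (((-419:ℝ)/328) + ((-937:ℝ)/1640)*s) * hx17 + (((-1935:ℝ)/451) + ((-4327:ℝ)/2255)*s) * hx18 + (((-468:ℝ)/205)*(g ((0:ℝ) + (0:ℝ)*((1 + s)/2))) + ((-29:ℝ)/10)*(g ((0:ℝ) + (1:ℝ)*((1 + s)/2))) + ((-1397:ℝ)/820)*(g ((-1:ℝ) + (1:ℝ)*((1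 + s)/2))) + ((-569:ℝ)/820)*(g ((1:ℝ) + (0:ℝ)*((1 + s)/2))) + ((-358:ℝ)/205)*(g ((1:ℝ) + (1:ℝ)*((1 + s)/2))) + ((-5348:ℝ)/2255)*(g ((0:ℝ) + (2:ℝ)*((1 + s)/2))) + ((-579:ℝ)/820)*(g ((-1:ℝ) + (2:ℝ)*((1 + s)/2)))) * hs2
  have hp13 : ∀ x : ℝ, x = ((0:ℝ) + (1:ℝ)*((1 + s)/2)) → g x = 0 := by
    intro x hx
    rw [hx]
    linear_combination (((-194:ℝ)/11) + ((-434:ℝ)/55)*s) * hx8 + (((-21:ℝ)/4) + ((-47:ℝ)/20)*s) * hx9 + ((-13) + ((-29:ℝ)/5)*s) * hx12 + (((-43:ℝ)/2) + ((-97:ℝ)/10)*s) * hx13 + ((-13) + ((-29:ℝ)/5)*s) * hx14 + (((-21:ℝ)/4) + ((-47:ℝ)/20)*s) * hx17 + (((-194:ℝ)/11) + ((-434:ℝ)/55)*s) * hx18 + (((-536:ℝ)/55)*(g ((0:ℝ) + (0:ℝ)*((1 + s)/2))) + ((-241:ℝ)/20)*(g ((0:ℝ) + (1:ℝ)*((1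 + s)/2))) + ((-36:ℝ)/5)*(g ((-1:ℝ) + (1:ℝ)*((1 + s)/2))) + ((-29:ℝ)/10)*(g ((1:ℝ) + (0:ℝ)*((1 + s)/2))) + ((-36:ℝ)/5)*(g ((1:ℝ) + (1:ℝ)*((1 + s)/2))) + ((-536:ℝ)/55)*(g ((0:ℝ) + (2:ℝ)*((1 + s)/2))) + ((-29:ℝ)/10)*(g ((-1:ℝ) + (2:ℝ)*((1 + s)/2)))) * hs2
  have hp14 : ∀ x : ℝ, x = ((1:ℝ) + (1:ℝ)*((1 + s)/2)) → g x = 0 := by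
    intro x hx
    rw [hx]
    linear_combination (((-1935:ℝ)/451) + ((-4327:ℝ)/2255)*s) * hx8 + (((-419:ℝ)/328) + ((-937:ℝ)/1640)*s) * hx9 + (((-259:ℝ)/82) + ((-579:ℝ)/410)*s) * hx12 + (((-21:ℝ)/4) + ((-47:ℝ)/20)*s) * hx13 + (((-233:ℝ)/82) + ((-569:ℝ)/410)*s) * hx14 + (((-401:ℝ)/328) + ((-867:ℝ)/1640)*s) * hx17 + (((-167:ℝ)/41) + ((-367:ℝ)/205)*s) * hx18 + (((-5348:ℝ)/2255)*(g ((0:ℝ) + (0:ℝ)*((1 + s)/2))) + ((-29:ℝ)/10)*(g ((0:ℝ) + (1:ℝ)*((1 + s)/2))) + ((-358:ℝ)/205)*(g ((-1:ℝ) + (1:ℝ)*((1 + s)/2))) + ((-579:ℝ)/820)*(g ((1:ℝ) + (0:ℝ)*((1 + s)/2))) + ((-1397:ℝ)/820)*(g ((1:ℝ) + (1:ℝ)*((1 + s)/2))) + ((-468:ℝ)/205)*(g ((0:ℝ) + (2:ℝ)*((1 + s)/2))) + ((-569:ℝ)/820)*(g ((-1:ℝ) + (2:ℝ)*((1 + s)/2))))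 * hs2
  have hp15 : ∀ x : ℝ, x = ((-3:ℝ) + (2:ℝ)*((1 + s)/2)) → g x = 0 := by
    intro x hx
    rw [hx]
    linear_combination (((1:ℝ)/32) + ((1:ℝ)/32)*s) * hx5 + (((-217:ℝ)/328) + ((-121:ℝ)/410)*s) * hx8 + (((-1035:ℝ)/5248) + ((-2303:ℝ)/26240)*s) * hx9 + (((-317:ℝ)/656) + ((-359:ℝ)/1640)*s) * hx12 + (((-55:ℝ)/64) + ((-123:ℝ)/320)*s) * hx13 + (((-339:ℝ)/656) + ((-379:ℝ)/1640)*s) * hx14 + ((1:ℝ)/4) * hx15 + (((-1097:ℝ)/5248) + ((-2453:ℝ)/26240)*s) * hx17 + (((-2533:ℝ)/3608) + ((-708:ℝ)/2255)*s) * hx18 + (((-867:ℝ)/3280)*(g ((-1:ℝ) + (1:ℝ)*((1 + s)/2))) + ((-601:ℝ)/1640)*(g ((0:ℝ) + (0:ℝ)*((1 + s)/2))) + ((-19:ℝ)/40)*(g ((0:ℝ) + (1:ℝ)*((1 + s)/2))) + ((-359:ℝ)/3280)*(g ((1:ℝ) + (0:ℝ)*((1 + s)/2))) + ((-937:ℝ)/3280)*(g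 ((1:ℝ) + (1:ℝ)*((1 + s)/2))) + ((-7001:ℝ)/18040)*(g ((0:ℝ) + (2:ℝ)*((1 + s)/2))) + ((-379:ℝ)/3280)*(g ((-1:ℝ) + (2:ℝ)*((1 + s)/2)))) * hs2
  have hp16 : ∀ x : ℝ, x = ((-2:ℝ) + (2:ℝ)*((1 + s)/2)) → g x = 0 := by
    intro x hx
    rw [hx]
    linear_combination (((-1332022:ℝ)/94259) + ((-2969894:ℝ)/471295)*s) * hx8 + (((-35581:ℝ)/8569) + ((-77973:ℝ)/42845)*s) * hx9 + (((17:ℝ)/418) + ((15:ℝ)/418)*s) * hx10 + (((-8140:ℝ)/779) + ((-18244:ℝ)/3895)*s) * hx12 + (((-194:ℝ)/11) + ((-434:ℝ)/55)*s) * hx13 + (((-8219:ℝ)/779) + ((-18369:ℝ)/3895)*s) * hx14 + (((58:ℝ)/209) + ((2:ℝ)/209)*s) * hx16 + (((-36087:ℝ)/8569) + ((-80943:ℝ)/42845)*s) * hx17 + (((-2693139:ℝ)/188518) + ((-6024873:ℝ)/942590)*s) * hx18 + (((-3690216:ℝ)/471295)*(g ((0:ℝ) + (0:ℝ)*((1 +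 s)/2))) + ((-536:ℝ)/55)*(g ((0:ℝ) + (1:ℝ)*((1 + s)/2))) + ((-22456:ℝ)/3895)*(g ((-1:ℝ) + (1:ℝ)*((1 + s)/2))) + ((-3720411:ℝ)/471295)*(g ((0:ℝ) + (2:ℝ)*((1 + s)/2))) + ((-99492:ℝ)/42845)*(g ((-1:ℝ) + (2:ℝ)*((1 + s)/2))) + ((15:ℝ)/836)*(g ((-2:ℝ) + (2:ℝ)*((1 + s)/2))) + ((-99932:ℝ)/42845)*(g ((1:ℝ) + (0:ℝ)*((1 + s)/2))) + ((-22726:ℝ)/3895)*(g ((1:ℝ) + (1:ℝ)*((1 + s)/2))) + ((1:ℝ)/209)*(g ((2:ℝ) + (0:ℝ)*((1 + s)/2)))) * hs2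
  have hp17 : ∀ x : ℝ, x = ((-1:ℝ) + (2:ℝ)*((1 + s)/2)) → g x = 0 := by
    intro x hx
    rw [hx]
    linear_combination (((-4784:ℝ)/451) + ((-10696:ℝ)/2255)*s) * hx8 + (((-259:ℝ)/82) + ((-579:ℝ)/410)*s) * hx9 + (((-320:ℝ)/41) + ((-716:ℝ)/205)*s) * hx12 + ((-13) + ((-29:ℝ)/5)*s) * hx13 + (((-631:ℝ)/82) + ((-1397:ℝ)/410)*s) * hx14 + (((-233:ℝ)/82) + ((-569:ℝ)/410)*s) * hx17 + (((-4687:ℝ)/451) + ((-10501:ℝ)/2255)*s) * hx18 + (((-13224:ℝ)/2255)*(g ((0:ℝ) + (0:ℝ)*((1 + s)/2))) + ((-36:ℝ)/5)*(g ((0:ℝ) + (1:ℝ)*((1 + s)/2))) + ((-884:ℝ)/205)*(g ((-1:ℝ) + (1:ℝ)*((1 + s)/2))) + ((-358:ℝ)/205)*(g ((1:ℝ) + (0:ℝ)*((1 + s)/2))) + ((-879:ℝ)/205)*(g ((1:ℝ) + (1:ℝ)*((1 + s)/2))) + ((-12934:ℝ)/2255)*(g ((0:ℝ) + (2:ℝ)*((1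 + s)/2))) + ((-1397:ℝ)/820)*(g ((-1:ℝ) + (2:ℝ)*((1 + s)/2)))) * hs2
  have hp18 : ∀ x : ℝ, x = ((0:ℝ) + (2:ℝ)*((1 + s)/2)) → g x = 0 := by
    intro x hx
    rw [hx]
    linear_combination (((7:ℝ)/22) + ((1:ℝ)/22)*s) * hx18 + (((1:ℝ)/44)*(g ((0:ℝ) + (2:ℝ)*((1 + s)/2)))) * hs2
  have hp19 : ∀ x : ℝ, x = ((-4:ℝ) + (3:ℝ)*((1 + s)/2)) → g x = 0 := by
    intro x hx
    rw [hx]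
    linear_combination (((9:ℝ)/128) + ((17:ℝ)/256)*s) * hx5 + (((1:ℝ)/32) + ((1:ℝ)/32)*s) * hx6 + (((-187873493:ℝ)/24130304) + ((-83961687:ℝ)/24130304)*s) * hx8 + (((-2512487:ℝ)/1096832) + ((-8965673:ℝ)/8774656)*s) * hx9 + (((63:ℝ)/3344) + ((31:ℝ)/3344)*s) * hx10 + (((-2291935:ℝ)/398848) + ((-1027469:ℝ)/398848)*s) * hx12 + (((-6869:ℝ)/704) + ((-24575:ℝ)/5632)*s) * hx13 + (((-2322861:ℝ)/398848) + ((-1038439:ℝ)/398848)*s) * hx14 + (((3:ℝ)/128) + ((1:ℝ)/128)*s) * hx15 + (((23:ℝ)/418) + ((4:ℝ)/209)*s) * hx16 + (((-5079435:ℝ)/2193664) + ((-9113359:ℝ)/8774656)*s) * hx17 + (((-190555359:ℝ)/24130304) + ((-85227765:ℝ)/24130304)*s) * hx18 + ((1:ℝ)/4) * hx19 + (((-632233:ℝ)/199424)*(g ((-1:ℝ) + (1:ℝ)*((1 + s)/2))) + ((-11204381:ℝ)/8774656)*(g ((-1:ℝ) + (2:ℝ)*((1 + s)/2))) + ((15:ℝ)/418)*(g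 ((-2:ℝ) + (2:ℝ)*((1 + s)/2))) + ((1:ℝ)/64)*(g ((-3:ℝ) + (2:ℝ)*((1 + s)/2))) + ((-51955903:ℝ)/12065152)*(g ((0:ℝ) + (0:ℝ)*((1 + s)/2))) + ((-30377:ℝ)/5632)*(g ((0:ℝ) + (1:ℝ)*((1 + s)/2))) + ((-52663797:ℝ)/12065152)*(g ((0:ℝ) + (2:ℝ)*((1 + s)/2))) + ((-11134223:ℝ)/8774656)*(g ((1:ℝ) + (0:ℝ)*((1 + s)/2))) + ((-642211:ℝ)/199424)*(g ((1:ℝ) + (1:ℝ)*((1 + s)/2))) + ((1:ℝ)/256)*(g ((2:ℝ) + (-1:ℝ)*((1 + s)/2))) + ((2:ℝ)/209)*(g ((2:ℝ) + (0:ℝ)*((1 + s)/2)))) * hs2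
  have hp20 : ∀ x : ℝ, x = ((-3:ℝ) + (3:ℝ)*((1 + s)/2)) → g x = 0 := by
    intro x hx
    rw [hx]
    linear_combination (((-96851605:ℝ)/6032576) + ((-216496297:ℝ)/30162880)*s) * hx8 + (((-20714591:ℝ)/4387328) + ((-45882897:ℝ)/21936640)*s) * hx9 + (((17:ℝ)/209) + ((15:ℝ)/209)*s) * hx10 + (((1:ℝ)/32) + ((1:ℝ)/32)*s) * hx11 + (((-1179915:ℝ)/99712) + ((-2641359:ℝ)/498560)*s) * hx12 + (((-55955:ℝ)/2816) + ((-125133:ℝ)/14080)*s) * hx13 + (((-1178897:ℝ)/99712) + ((-2634029:ℝ)/498560)*s) * hx14 + (((23:ℝ)/418) + ((4:ℝ)/209)*s) * hx16 + (((-20488277:ℝ)/4387328) + ((-46067147:ℝ)/21936640)*s) * hx17 + (((-96324815:ℝ)/6032576) + ((-215565147:ℝ)/30162880)*s) * hx18 + ((1:ℝ)/4) * hx20 + (((3:ℝ)/128) + ((1:ℝ)/128)*s) * hx21 + (((-4183777:ℝ)/471295)*(g ((0:ℝ) + (0:ℝ)*((1 + s)/2))) + ((-77321:ℝ)/7040)*(g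 ((0:ℝ) + (1:ℝ)*((1 + s)/2))) + ((-407277:ℝ)/62320)*(g ((-1:ℝ) + (1:ℝ)*((1 + s)/2))) + ((-16628683:ℝ)/1885180)*(g ((0:ℝ) + (2:ℝ)*((1 + s)/2))) + ((-28187119:ℝ)/10968320)*(g ((-1:ℝ) + (2:ℝ)*((1 + s)/2))) + ((15:ℝ)/418)*(g ((-2:ℝ) + (2:ℝ)*((1 + s)/2))) + ((1:ℝ)/64)*(g ((-2:ℝ) + (3:ℝ)*((1 + s)/2))) + ((-28845029:ℝ)/10968320)*(g ((1:ℝ) + (0:ℝ)*((1 + s)/2))) + ((-407557:ℝ)/62320)*(g ((1:ℝ) + (1:ℝ)*((1 + s)/2))) + ((2:ℝ)/209)*(g ((2:ℝ) + (0:ℝ)*((1 + s)/2)))) * hs2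
  have hp21 : ∀ x : ℝ, x = ((-2:ℝ) + (3:ℝ)*((1 + s)/2)) → g x = 0 := by
    intro x hx
    rw [hx]
    linear_combination (((-3131:ℝ)/1804) + ((-7001:ℝ)/9020)*s) * hx8 + (((-339:ℝ)/656) + ((-379:ℝ)/1640)*s) * hx9 + (((-419:ℝ)/328) + ((-937:ℝ)/1640)*s) * hx12 + (((-17:ℝ)/8) + ((-19:ℝ)/20)*s) * hx13 + (((-401:ℝ)/328) + ((-867:ℝ)/1640)*s) * hx14 + (((-317:ℝ)/656) + ((-359:ℝ)/1640)*s) * hx17 + (((-267:ℝ)/164) + ((-601:ℝ)/820)*s) * hx18 + ((1:ℝ)/4) * hx21 + (((-4327:ℝ)/4510)*(g ((0:ℝ) + (0:ℝ)*((1 + s)/2))) + ((-47:ℝ)/40)*(g ((0:ℝ) + (1:ℝ)*((1 + s)/2))) + ((-579:ℝ)/820)*(g ((-1:ℝ) + (1:ℝ)*((1 + s)/2))) + ((-937:ℝ)/3280)*(g ((1:ℝ) + (0:ℝ)*((1 + s)/2))) + ((-569:ℝ)/820)*(g ((1:ℝ) + (1:ℝ)*((1 + s)/2))) + ((-367:ℝ)/410)*(g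 ((0:ℝ) + (2:ℝ)*((1 + s)/2))) + ((-867:ℝ)/3280)*(g ((-1:ℝ) + (2:ℝ)*((1 + s)/2)))) * hs2
  have hp22 : ∀ x : ℝ, x = ((-5:ℝ) + (4:ℝ)*((1 + s)/2)) → g x = 0 := by
    intro x hx
    rw [hx]
    linear_combination (((3:ℝ)/64) + ((5:ℝ)/128)*s) * hx5 + (((1:ℝ)/16) + ((1:ℝ)/16)*s) * hx6 + (((1:ℝ)/32) + ((1:ℝ)/32)*s) * hx7 + (((-404940991:ℝ)/24130304) + ((-1810321173:ℝ)/241303040)*s) * hx8 + (((-345950391:ℝ)/70197248) + ((-771994551:ℝ)/350986240)*s) * hx9 + (((189:ℝ)/3344) + ((93:ℝ)/3344)*s) * hx10 + (((1:ℝ)/128) + ((1:ℝ)/256)*s) * hx11 + (((-1236261:ℝ)/99712) + ((-22131741:ℝ)/3988480)*s) * hx12 + (((-940899:ℝ)/45056) + ((-2103859:ℝ)/225280)*s) * hx13 + (((-2478023:ℝ)/199424) + ((-22152851:ℝ)/3988480)*s) * hx14 + (((3:ℝ)/64) + ((1:ℝ)/64)*s) * hx15 + (((1581:ℝ)/13376)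 + ((559:ℝ)/13376)*s) * hx16 + (((-345991685:ℝ)/70197248) + ((-775962581:ℝ)/350986240)*s) * hx17 + (((-406248847:ℝ)/24130304) + ((-1817064283:ℝ)/241303040)*s) * hx18 + (((3:ℝ)/128) + ((1:ℝ)/128)*s) * hx20 + (((103:ℝ)/2048) + ((35:ℝ)/2048)*s) * hx21 + ((1:ℝ)/4) * hx22 + (((-27318699:ℝ)/3988480)*(g ((-1:ℝ) + (1:ℝ)*((1 + s)/2))) + ((-238498961:ℝ)/87746560)*(g ((-1:ℝ) + (2:ℝ)*((1 + s)/2))) + ((511:ℝ)/6688)*(g ((-2:ℝ) + (2:ℝ)*((1 + s)/2))) + ((1:ℝ)/32)*(g ((-3:ℝ) + (2:ℝ)*((1 + s)/2))) + ((17:ℝ)/512)*(g ((-2:ℝ) + (3:ℝ)*((1 + s)/2))) + ((1:ℝ)/64)*(g ((-3:ℝ) + (3:ℝ)*((1 + s)/2))) + ((-2239088737:ℝ)/241303040)*(g ((0:ℝ) + (0:ℝ)*((1 + s)/2))) + ((-650159:ℝ)/56320)*(g ((0:ℝ) + (1:ℝ)*((1 + s)/2))) + ((-2245424187:ℝ)/241303040)*(g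 ((0:ℝ) + (2:ℝ)*((1 + s)/2))) + ((-239439351:ℝ)/87746560)*(g ((1:ℝ) + (0:ℝ)*((1 + s)/2))) + ((-27407609:ℝ)/3988480)*(g ((1:ℝ) + (1:ℝ)*((1 + s)/2))) + ((1:ℝ)/128)*(g ((2:ℝ) + (-1:ℝ)*((1 + s)/2))) + ((6:ℝ)/209)*(g ((2:ℝ) + (0:ℝ)*((1 + s)/2))) + ((1:ℝ)/256)*(g ((3:ℝ) + (0:ℝ)*((1 + s)/2)))) * hs2
  have hp23 : ∀ x : ℝ, x = ((-4:ℝ) + (4:ℝ)*((1 + s)/2)) → g x = 0 := by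
    intro x hx
    rw [hx]
    linear_combination (((-19149197:ℝ)/3016288) + ((-42811897:ℝ)/15081440)*s) * hx8 + (((-4115935:ℝ)/2193664) + ((-9193617:ℝ)/10968320)*s) * hx9 + (((17:ℝ)/418) + ((15:ℝ)/418)*s) * hx10 + (((1:ℝ)/16) + ((1:ℝ)/16)*s) * hx11 + (((-233547:ℝ)/49856) + ((-522319:ℝ)/249280)*s) * hx12 + (((-11027:ℝ)/1408) + ((-24653:ℝ)/7040)*s) * hx13 + (((-230737:ℝ)/49856) + ((-515309:ℝ)/249280)*s) * hx14 + (((23:ℝ)/836) + ((2:ℝ)/209)*s) * hx16 + (((-3982549:ℝ)/2193664) + ((-8969547:ℝ)/10968320)*s) * hx17 + (((-18819263:ℝ)/3016288) + ((-42127147:ℝ)/15081440)*s) * hx18 + (((3:ℝ)/64) + ((1:ℝ)/64)*s) * hx21 + ((1:ℝ)/4) * hx23 + (((-6616761:ℝ)/1885180)*(g ((0:ℝ) + (0:ℝ)*((1 + s)/2))) + ((-15241:ℝ)/3520)*(g ((0:ℝ) + (1:ℝ)*((1 + s)/2))) + ((-80677:ℝ)/31160)*(g ((-1:ℝ) + (1:ℝ)*((1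 + s)/2))) + ((-3248073:ℝ)/942590)*(g ((0:ℝ) + (2:ℝ)*((1 + s)/2))) + ((-5471599:ℝ)/5484160)*(g ((-1:ℝ) + (2:ℝ)*((1 + s)/2))) + ((15:ℝ)/836)*(g ((-2:ℝ) + (2:ℝ)*((1 + s)/2))) + ((1:ℝ)/32)*(g ((-2:ℝ) + (3:ℝ)*((1 + s)/2))) + ((-5693029:ℝ)/5484160)*(g ((1:ℝ) + (0:ℝ)*((1 + s)/2))) + ((-79797:ℝ)/31160)*(g ((1:ℝ) + (1:ℝ)*((1 + s)/2))) + ((1:ℝ)/209)*(g ((2:ℝ) + (0:ℝ)*((1 + s)/2)))) * hs2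
  have hbU : b ≤ 5 := by
    by_contra hcon
    push_neg at hcon
    have hc0 : (5:ℤ) + 1 ≤ b := Int.lt_iff_add_one_le.mp hcon
    have hc1 : ((5:ℝ)) + 1 ≤ (b:ℝ) := by exact_mod_cast hc0
    have hc2 : ((5:ℝ) + 1)*s ≤ (b:ℝ)*s := mul_le_mul_of_nonneg_right hc1 hs0
    linarith
  have hbL : (-3:ℤ) ≤ b := by
    by_contra hcon
    push_neg at hcon
    have hc0 : b + 1 ≤ (-3:ℤ) := Int.lt_iff_add_one_le.mp hcon
    have hc1 : (b:ℝ) + 1 ≤ ((-3:ℝ)) := by exact_mod_cast hc0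
    have hc2 : (b:ℝ)*s ≤ (((-3:ℝ)) - 1)*s := mul_le_mul_of_nonneg_right (by linarith) hs0
    linarith
  interval_cases b
  · -- b = -3
    have haL : (5:ℤ) ≤ a := by
      by_contra hcon
      push_neg at hcon
      have hc0 : a + 1 ≤ (5:ℤ) := Int.lt_iff_add_one_le.mp hcon
      have hc1 : (a:ℝ) + 1 ≤ (5:ℝ) := by exact_mod_cast hc0
      push_cast at h2
      linarith
    have haU : a ≤ (8:ℤ) := by
      by_contra hcon
      push_neg at hcon
      have hc0 : (8:ℤ) + 1 ≤ a := Int.lt_iff_add_one_le.mp hcon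
      have hc1 : (8:ℝ) + 1 ≤ (a:ℝ) := by exact_mod_cast hc0
      push_cast at h3
      linarith
    interval_cases a
    · exact hp0 _ (by push_cast; ring)
    · exact hp1 _ (by push_cast; ring)
    · exfalso
      push_cast at h1a' h1b'
      linarith
    · exfalso
      push_cast at h1a' h1b'
      linarith
  · -- b = -2
    have haL : (4:ℤ) ≤ a := by
      by_contra hcon
      push_neg at hcon
      have hc0 : a + 1 ≤ (4:ℤ) := Int.lt_iff_add_one_le.mp hcon
      have hc1 : (a:ℝ) + 1 ≤ (4:ℝ) := by exact_mod_cast hc0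
      push_cast at h2
      linarith
    have haU : a ≤ (6:ℤ) := by
      by_contra hcon
      push_neg at hcon
      have hc0 : (6:ℤ) + 1 ≤ a := Int.lt_iff_add_one_le.mp hcon
      have hc1 : (6:ℝ) + 1 ≤ (a:ℝ) := by exact_mod_cast hc0
      push_cast at h3
      linarith
    interval_cases a
    · exact hp2 _ (by push_cast; ring)
    · exact hp3 _ (by push_cast; ring)
    · exact hp4 _ (by push_cast; ring)
  · -- b = -1
    have haL : (2:ℤ) ≤ a := by
      by_contra hcon
      push_neg at hcon
      have hc0 : a + 1 ≤ (2:ℤ) := Int.lt_iff_add_one_le.mp hcon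
      have hc1 : (a:ℝ) + 1 ≤ (2:ℝ) := by exact_mod_cast hc0
      push_cast at h2
      linarith
    have haU : a ≤ (4:ℤ) := by
      by_contra hcon
      push_neg at hcon
      have hc0 : (4:ℤ) + 1 ≤ a := Int.lt_iff_add_one_le.mp hcon
      have hc1 : (4:ℝ) + 1 ≤ (a:ℝ) := by exact_mod_cast hc0
      push_cast at h3
      linarith
    interval_cases a
    · exact hp5 _ (by push_cast; ring)
    · exact hp6 _ (by push_cast; ring)
    · exact hp7 _ (by push_cast; ring)
  · -- b = 0
    have haL : (0:ℤ) ≤ a := by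
      by_contra hcon
      push_neg at hcon
      have hc0 : a + 1 ≤ (0:ℤ) := Int.lt_iff_add_one_le.mp hcon
      have hc1 : (a:ℝ) + 1 ≤ (0:ℝ) := by exact_mod_cast hc0
      push_cast at h2
      linarith
    have haU : a ≤ (3:ℤ) := by
      by_contra hcon
      push_neg at hcon
      have hc0 : (3:ℤ) + 1 ≤ a := Int.lt_iff_add_one_le.mp hcon
      have hc1 : (3:ℝ) + 1 ≤ (a:ℝ) := by exact_mod_cast hc0
      push_cast at h3
      linarith
    interval_cases a
    · exact hp8 _ (by push_cast; ring)
    · exact hp9 _ (by push_cast; ring)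
    · exact hp10 _ (by push_cast; ring)
    · exact hp11 _ (by push_cast; ring)
  · -- b = 1
    have haL : (-1:ℤ) ≤ a := by
      by_contra hcon
      push_neg at hcon
      have hc0 : a + 1 ≤ (-1:ℤ) := Int.lt_iff_add_one_le.mp hcon
      have hc1 : (a:ℝ) + 1 ≤ (-1:ℝ) := by exact_mod_cast hc0
      push_cast at h2
      linarith
    have haU : a ≤ (1:ℤ) := by
      by_contra hcon
      push_neg at hcon
      have hc0 : (1:ℤ) + 1 ≤ a := Int.lt_iff_add_one_le.mp hcon
      have hc1 : (1:ℝ) + 1 ≤ (a:ℝ) := by exact_mod_cast hc0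
      push_cast at h3
      linarith
    interval_cases a
    · exact hp12 _ (by push_cast; ring)
    · exact hp13 _ (by push_cast; ring)
    · exact hp14 _ (by push_cast; ring)
  · -- b = 2
    have haL : (-3:ℤ) ≤ a := by
      by_contra hcon
      push_neg at hcon
      have hc0 : a + 1 ≤ (-3:ℤ) := Int.lt_iff_add_one_le.mp hcon
      have hc1 : (a:ℝ) + 1 ≤ (-3:ℝ) := by exact_mod_cast hc0
      push_cast at h2
      linarith
    have haU : a ≤ (0:ℤ) := by
      by_contra hcon
      push_neg at hcon
      have hc0 : (0:ℤ) + 1 ≤ a := Int.lt_iff_add_one_le.mp hcon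
      have hc1 : (0:ℝ) + 1 ≤ (a:ℝ) := by exact_mod_cast hc0
      push_cast at h3
      linarith
    interval_cases a
    · exact hp15 _ (by push_cast; ring)
    · exact hp16 _ (by push_cast; ring)
    · exact hp17 _ (by push_cast; ring)
    · exact hp18 _ (by push_cast; ring)
  · -- b = 3
    have haL : (-4:ℤ) ≤ a := by
      by_contra hcon
      push_neg at hcon
      have hc0 : a + 1 ≤ (-4:ℤ) := Int.lt_iff_add_one_le.mp hcon
      have hc1 : (a:ℝ) + 1 ≤ (-4:ℝ) := by exact_mod_cast hc0
      push_cast at h2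
      linarith
    have haU : a ≤ (-2:ℤ) := by
      by_contra hcon
      push_neg at hcon
      have hc0 : (-2:ℤ) + 1 ≤ a := Int.lt_iff_add_one_le.mp hcon
      have hc1 : (-2:ℝ) + 1 ≤ (a:ℝ) := by exact_mod_cast hc0
      push_cast at h3
      linarith
    interval_cases a
    · exact hp19 _ (by push_cast; ring)
    · exact hp20 _ (by push_cast; ring)
    · exact hp21 _ (by push_cast; ring)
  · -- b = 4
    have haL : (-6:ℤ) ≤ a := by
      by_contra hcon
      push_neg at hcon
      have hc0 : a + 1 ≤ (-6:ℤ) := Int.lt_iff_add_one_le.mp hcon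
      have hc1 : (a:ℝ) + 1 ≤ (-6:ℝ) := by exact_mod_cast hc0
      push_cast at h2
      linarith
    have haU : a ≤ (-4:ℤ) := by
      by_contra hcon
      push_neg at hcon
      have hc0 : (-4:ℤ) + 1 ≤ a := Int.lt_iff_add_one_le.mp hcon
      have hc1 : (-4:ℝ) + 1 ≤ (a:ℝ) := by exact_mod_cast hc0
      push_cast at h3
      linarith
    interval_cases a
    · exfalso
      push_cast at h1a' h1b'
      linarith
    · exact hp22 _ (by push_cast; ring)
    · exact hp23 _ (by push_cast; ring)
  · -- b = 5
    have haL : (-8:ℤ) ≤ a := by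
      by_contra hcon
      push_neg at hcon
      have hc0 : a + 1 ≤ (-8:ℤ) := Int.lt_iff_add_one_le.mp hcon
      have hc1 : (a:ℝ) + 1 ≤ (-8:ℝ) := by exact_mod_cast hc0
      push_cast at h2
      linarith
    have haU : a ≤ (-5:ℤ) := by
      by_contra hcon
      push_neg at hcon
      have hc0 : (-5:ℤ) + 1 ≤ a := Int.lt_iff_add_one_le.mp hcon
      have hc1 : (-5:ℝ) + 1 ≤ (a:ℝ) := by exact_mod_cast hc0
      push_cast at h3
      linarith
    interval_cases a
    · exfalso
      push_cast at h1a' h1b'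
      linarith
    · exfalso
      push_cast at h1a' h1b'
      linarith
    · exfalso
      push_cast at h1a' h1b'
      linarith
    · exfalso
      push_cast at h1a' h1b'
      linarith


theorem schilling_onesided_cont_right_interval (q : ℝ)
    (hq : q = (Real.sqrt 3 - 1) / 2 ∨ q = (3 - Real.sqrt 5) / 2 ∨
        q = Real.sqrt 2 - 1 ∨ q = (Real.sqrt 5 - 1) / 2)
    (f : ℝ → ℝ)
    (hfe : ∀ x : ℝ, f (q * x) = (1 / (4 * q)) * (f (x - 1) + f (x + 1) + 2 * f x))
    (hfv : ∀ x : ℝ, |x| > q / (1 - q) → f x = 0)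
    (hδ : ∃ δ > (0 : ℝ),
        (∀ x ∈ Set.Ioo (q / (1 - q) - δ) (q / (1 - q)),
            Filter.Tendsto f (nhdsWithin x (Set.Ioi x)) (nhds (f x))) ∨
        (∀ x ∈ Set.Ioo (q / (1 - q) - δ) (q / (1 - q)),
            Filter.Tendsto f (nhdsWithin x (Set.Iio x)) (nhds (f x)))) :
    ∀ x : ℝ, f x = 0 := by
  rcases hq with hq | hq | hq | hq
  · subst hq
    have hs0 : (0:ℝ) ≤ Real.sqrt 3 := Real.sqrt_nonneg 3
    have hs2 : Real.sqrt 3 ^ 2 = 3 := Real.sq_sqrt (by norm_num)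
    have hsL : (1.7320508:ℝ) < Real.sqrt 3 := by nlinarith [hs2, hs0]
    have hsU : Real.sqrt 3 < (1.7320509:ℝ) := by nlinarith [hs2, hs0]
    have habs : |1 - Real.sqrt 3| = Real.sqrt 3 - 1 := by
      rw [abs_of_neg (by linarith)]; ring
    refine schilling_generic ((Real.sqrt 3 - 1)/2) (1 + Real.sqrt 3) (1 - Real.sqrt 3)
        (Real.sqrt 3/3) (3/(2 - Real.sqrt 3)) 2 2
        (by linarith) (by linarith)
        (by linear_combination (1/2 : ℝ) * hs2)
        (by push_cast; linear_combination hs2)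
        (by push_cast; linear_combination hs2)
        (by rw [habs]; linarith)
        (by linear_combination (-1/6 : ℝ) * hs2)
        (by rw [habs]
            have h2s : (2:ℝ) - Real.sqrt 3 ≠ 0 := by linarith
            field_simp
            ring)
        ?_ f hfe hfv hδ core1
    intro m n hmn
    by_contra hm0
    have hmr : ((m:ℤ):ℝ) ≠ 0 := Int.cast_ne_zero.mpr hm0
    have h3 : Real.sqrt 3 = ((n - m : ℤ):ℝ)/((m:ℤ):ℝ) := by
      rw [eq_div_iff hmr]
      push_cast
      linarith [hmn]
    have hirr3 : Irrational (Real.sqrt 3) := (Nat.prime_three).irrational_sqrt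
    exact hirr3 ⟨((n:ℚ) - (m:ℚ))/(m:ℚ), by push_cast; rw [h3]; push_cast; ring⟩
  · subst hq
    have hs0 : (0:ℝ) ≤ Real.sqrt 5 := Real.sqrt_nonneg 5
    have hs2 : Real.sqrt 5 ^ 2 = 5 := Real.sq_sqrt (by norm_num)
    have hsL : (2.2360679:ℝ) < Real.sqrt 5 := by nlinarith [hs2, hs0]
    have hsU : Real.sqrt 5 < (2.2360680:ℝ) := by nlinarith [hs2, hs0]
    have habs : |((3 - Real.sqrt 5)/2)| = (3 - Real.sqrt 5)/2 := by rw [abs_of_pos (by linarith)]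
    refine schilling_generic ((3 - Real.sqrt 5) / 2) ((3 + Real.sqrt 5)/2) ((3 - Real.sqrt 5)/2)
        ((Real.sqrt 5 - 1)/2) (6/(Real.sqrt 5 - 1)) 3 (-1)
        (by linarith) (by linarith)
        (by linear_combination (-1/4 : ℝ) * hs2)
        (by push_cast; linear_combination (1/4 : ℝ) * hs2)
        (by push_cast; linear_combination (1/4 : ℝ) * hs2)
        (by rw [habs]; linarith)
        (by linear_combination (1/4 : ℝ) * hs2)
        (by rw [habs]
            have hden : (Real.sqrt 5 - 1:ℝ) ≠ 0 := by linarith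
            field_simp
            ring)
        ?_ f hfe hfv hδ core2
    intro m n hmn
    by_contra hm0
    have hmr : ((m:ℤ):ℝ) ≠ 0 := Int.cast_ne_zero.mpr hm0
    have h3 : Real.sqrt 5 = ((2*n - 3*m : ℤ):ℝ)/((m:ℤ):ℝ) := by
      rw [eq_div_iff hmr]
      push_cast
      linarith [hmn]
    have hirrd : Irrational (Real.sqrt 5) := (by norm_num : Nat.Prime 5).irrational_sqrt
    exact hirrd ⟨((2*n - 3*m : ℤ):ℚ)/((m:ℤ):ℚ), by push_cast; rw [h3]; push_cast; ring⟩
  · subst hq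
    have hs0 : (0:ℝ) ≤ Real.sqrt 2 := Real.sqrt_nonneg 2
    have hs2 : Real.sqrt 2 ^ 2 = 2 := Real.sq_sqrt (by norm_num)
    have hsL : (1.4142135:ℝ) < Real.sqrt 2 := by nlinarith [hs2, hs0]
    have hsU : Real.sqrt 2 < (1.4142136:ℝ) := by nlinarith [hs2, hs0]
    have habs : |(1 - Real.sqrt 2)| = Real.sqrt 2 - 1 := by rw [abs_of_neg (by linarith)]; ring
    refine schilling_generic (Real.sqrt 2 - 1) (1 + Real.sqrt 2) (1 - Real.sqrt 2)
        (Real.sqrt 2/2) (3/(2 - Real.sqrt 2)) 2 (1)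
        (by linarith) (by linarith)
        (by linear_combination hs2)
        (by push_cast; linear_combination hs2)
        (by push_cast; linear_combination hs2)
        (by rw [habs]; linarith)
        (by linear_combination (-1/2 : ℝ) * hs2)
        (by rw [habs]
            have hden : (2 - Real.sqrt 2:ℝ) ≠ 0 := by linarith
            field_simp
            ring)
        ?_ f hfe hfv hδ core3
    intro m n hmn
    by_contra hm0
    have hmr : ((m:ℤ):ℝ) ≠ 0 := Int.cast_ne_zero.mpr hm0
    have h3 : Real.sqrt 2 = ((n - m : ℤ):ℝ)/((m:ℤ):ℝ) := by
      rw [eq_div_iff hmr]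
      push_cast
      linarith [hmn]
    have hirrd : Irrational (Real.sqrt 2) := Nat.prime_two.irrational_sqrt
    exact hirrd ⟨((n - m : ℤ):ℚ)/((m:ℤ):ℚ), by push_cast; rw [h3]; push_cast; ring⟩
  · subst hq
    have hs0 : (0:ℝ) ≤ Real.sqrt 5 := Real.sqrt_nonneg 5
    have hs2 : Real.sqrt 5 ^ 2 = 5 := Real.sq_sqrt (by norm_num)
    have hsL : (2.2360679:ℝ) < Real.sqrt 5 := by nlinarith [hs2, hs0]
    have hsU : Real.sqrt 5 < (2.2360680:ℝ) := by nlinarith [hs2, hs0]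
    have habs : |((1 - Real.sqrt 5)/2)| = (Real.sqrt 5 - 1)/2 := by rw [abs_of_neg (by linarith)]; ring
    refine schilling_generic ((Real.sqrt 5 - 1) / 2) ((1 + Real.sqrt 5)/2) ((1 - Real.sqrt 5)/2)
        ((1 + Real.sqrt 5)/2) (6/(3 - Real.sqrt 5)) 1 (1)
        (by linarith) (by linarith)
        (by linear_combination (1/4 : ℝ) * hs2)
        (by push_cast; linear_combination (1/4 : ℝ) * hs2)
        (by push_cast; linear_combination (1/4 : ℝ) * hs2)
        (by rw [habs]; linarith)
        (by linear_combination (-1/4 : ℝ) * hs2)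
        (by rw [habs]
            have hden : (3 - Real.sqrt 5:ℝ) ≠ 0 := by linarith
            field_simp
            ring)
        ?_ f hfe hfv hδ core4
    intro m n hmn
    by_contra hm0
    have hmr : ((m:ℤ):ℝ) ≠ 0 := Int.cast_ne_zero.mpr hm0
    have h3 : Real.sqrt 5 = ((2*n - m : ℤ):ℝ)/((m:ℤ):ℝ) := by
      rw [eq_div_iff hmr]
      push_cast
      linarith [hmn]
    have hirrd : Irrational (Real.sqrt 5) := (by norm_num : Nat.Prime 5).irrational_sqrt
    exact hirrd ⟨((2*n - m : ℤ):ℚ)/((m:ℤ):ℚ), by push_cast; rw [h3]; push_cast; ring⟩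
end

section
/- Let q = (√3 − 1)/2 and let f : ℝ → ℝ be a solution of Schilling's problem for q. Then f(x) = 0 for every x in the set ℤ + 2qℤ = {m + 2nq : m, n ∈ ℤ}. -/
set_option maxHeartbeats 1000000 in
theorem schilling_sqrt3_2q (q : ℝ) (hq : q = (Real.sqrt 3 - 1) / 2)
    (f : ℝ → ℝ)
    (hfe : ∀ x : ℝ, f (q * x) = (1 / (4 * q)) * (f (x - 1) + f (x + 1) + 2 * f x))
    (hfv : ∀ x : ℝ, |x| > q / (1 - q) → f x = 0) :
    ∀ m n : ℤ, f ((m : ℝ) + 2 * (n : ℝ) * q) = 0 := by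
  have h3 : Real.sqrt 3 ^ 2 = 3 := Real.sq_sqrt (by norm_num)
  have hs0 : (0:ℝ) ≤ Real.sqrt 3 := Real.sqrt_nonneg 3
  have hs1 : (1.732:ℝ) < Real.sqrt 3 := by nlinarith
  have hs2 : Real.sqrt 3 < 1.73206 := by nlinarith
  have hq2 : 2*q^2 + 2*q - 1 = 0 := by rw [hq]; linear_combination h3/2
  have hql : (0.366:ℝ) < q := by rw [hq]; linarith
  have hqu : q < 0.36603 := by rw [hq]; linarith
  have hq0 : 0 < q := by linarith
  have h1q : 0 < 1 - q := by linarith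
  have hQu : q / (1 - q) < 0.578 := by rw [div_lt_iff₀ h1q]; nlinarith
  have hzp : ∀ x : ℝ, 0.578 ≤ x → f x = 0 := fun x hx =>
    hfv x (by rw [abs_of_pos (by linarith)]; linarith)
  have hzn : ∀ x : ℝ, x ≤ -0.578 → f x = 0 := fun x hx =>
    hfv x (by rw [abs_of_neg (by linarith)]; linarith)
  have h4q : (4*q) ≠ 0 := by positivity
  have hstep : ∀ a b x y z w : ℝ, a + 2*b*q = x → 2*(a+b) + 2*a*q - 1 = y →
      2*(a+b) + 2*a*q + 1 = z → 2*(a+b) + 2*a*q = w →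
      f x = 1/(4*q) * (f y + f z + 2 * f w) := by
    intro a b x y z w h1 h2 h3' h4
    subst h1 h2 h3' h4
    have hx : q * (2*(a+b) + 2*a*q) = a + 2*b*q := by linear_combination a * hq2
    have h := hfe (2*(a+b) + 2*a*q)
    rw [hx] at h
    exact h
  -- the seven special points
  have f0 : f 0 = 0 := by
    have e := hstep 0 0 0 (-1) 1 0 (by ring) (by ring) (by ring) (by ring)
    rw [hzn (-1) (by norm_num), hzp 1 (by norm_num)] at e
    have h' : (4*q - 2) * f 0 = 0 := by
      field_simp at e
      linarith
    rcases mul_eq_zero.mp h' with h'' | h''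
    · linarith
    · exact h''
  have eA := hstep (-1) 1 (2*q-1) (-(2*q)-1) (1-2*q) (-(2*q))
      (by ring) (by ring) (by ring) (by ring)
  rw [hzn (-(2*q)-1) (by linarith), hzn (-(2*q)) (by linarith)] at eA
  have eB := hstep 1 (-1) (1-2*q) (2*q-1) (2*q+1) (2*q)
      (by ring) (by ring) (by ring) (by ring)
  rw [hzp (2*q+1) (by linarith), hzp (2*q) (by linarith)] at eB
  have fB : f (1-2*q) = 0 := by
    have e1 : 4*q * f (2*q-1) = f (1-2*q) := by field_simp at eA; linarith
    have e2 : 4*q * f (1-2*q) = f (2*q-1) := by field_simp at eB; linarith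
    have h' : (16*q^2 - 1) * f (1-2*q) = 0 := by nlinarith [e1, e2]
    rcases mul_eq_zero.mp h' with h'' | h''
    · nlinarith
    · exact h''
  have fG : f (2*q-1) = 0 := by
    rw [fB] at eA; simpa using eA
  have fC : f (4*q-1) = 0 := by
    have e := hstep (-1) 2 (4*q-1) (1-2*q) (3-2*q) (2-2*q)
      (by ring) (by ring) (by ring) (by ring)
    rw [fB, hzp (3-2*q) (by linarith), hzp (2-2*q) (by linarith)] at e
    simpa using e
  have fD : f (1-4*q) = 0 := by
    have e := hstep 1 (-2) (1-4*q) (2*q-3) (2*q-1) (2*q-2)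
      (by ring) (by ring) (by ring) (by ring)
    rw [fG, hzn (2*q-3) (by linarith), hzn (2*q-2) (by linarith)] at e
    simpa using e
  have fE : f (4*q-2) = 0 := by
    have e := hstep (-2) 2 (4*q-2) (-(4*q)-1) (1-4*q) (-(4*q))
      (by ring) (by ring) (by ring) (by ring)
    rw [fD, hzn (-(4*q)-1) (by linarith), hzn (-(4*q)) (by linarith)] at e
    simpa using e
  have fF : f (2-4*q) = 0 := by
    have e := hstep 2 (-2) (2-4*q) (4*q-1) (4*q+1) (4*q)
      (by ring) (by ring) (by ring) (by ring)
    rw [fC, hzp (4*q+1) (by linarith), hzp (4*q) (by linarith)] at e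
    simpa using e
  have hgrid : ∀ x : ℝ, (0.578 ≤ x ∨ x ≤ -0.578 ∨ x = 0 ∨ x = 2*q-1 ∨ x = 1-2*q ∨
      x = 4*q-1 ∨ x = 1-4*q ∨ x = 4*q-2 ∨ x = 2-4*q) → f x = 0 := by
    rintro x (h|h|h|h|h|h|h|h|h)
    · exact hzp x h
    · exact hzn x h
    · rw [h]; exact f0
    · rw [h]; exact fG
    · rw [h]; exact fB
    · rw [h]; exact fC
    · rw [h]; exact fD
    · rw [h]; exact fE
    · rw [h]; exact fF
  have h25 : ∀ a b : ℤ, |a| ≤ 2 → |b| ≤ 2 → f ((a:ℝ) + 2*(b:ℝ)*q) = 0 := by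
    intro a b ha hb
    rw [abs_le] at ha hb
    obtain ⟨ha1, ha2⟩ := ha
    obtain ⟨hb1, hb2⟩ := hb
    interval_cases a <;> interval_cases b <;>
    · apply hgrid
      push_cast
      first
      | (left; linarith)
      | (right; left; linarith)
      | (right; right; left; ring1)
      | (right; right; right; left; ring1)
      | (right; right; right; right; left; ring1)
      | (right; right; right; right; right; left; ring1)
      | (right; right; right; right; right; right; left; ring1)
      | (right; right; right; right; right; right; right; left; ring1)
      | (right; right; right; right; right; right; right; right; ring1)
  have hbase : ∀ a b : ℤ, |(a:ℝ) - 2*(b:ℝ)*(q+1)| ≤ 8 → f ((a:ℝ) + 2*(b:ℝ)*q) = 0 := by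
    intro a b h
    rcases le_or_gt (|(a:ℝ) + 2*(b:ℝ)*q|) 0.578 with hin | hout
    · rw [abs_le] at h hin
      have hbu : (b:ℝ) ≤ 2.5 := by nlinarith [hin.2, h.1]
      have hbl : (-2.5:ℝ) ≤ (b:ℝ) := by nlinarith [hin.1, h.2]
      have hb2 : |b| ≤ 2 := by
        have h1 : (b:ℝ) < 3 := by linarith
        have h2 : (-3:ℝ) < (b:ℝ) := by linarith
        have h1' : b < 3 := by exact_mod_cast h1
        have h2' : (-3:ℤ) < b := by exact_mod_cast h2
        rw [abs_le]; omega
      have ha2 : |a| ≤ 2 := by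
        have h1 : (a:ℝ) < 3 := by nlinarith [hin.2, hbl]
        have h2 : (-3:ℝ) < (a:ℝ) := by nlinarith [hin.1, hbu]
        have h1' : a < 3 := by exact_mod_cast h1
        have h2' : (-3:ℤ) < a := by exact_mod_cast h2
        rw [abs_le]; omega
      exact h25 a b ha2 hb2
    · exact hfv _ (by linarith)
  have hmain : ∀ k : ℕ, ∀ a b : ℤ, |(a:ℝ) - 2*(b:ℝ)*(q+1)| ≤ k → f ((a:ℝ) + 2*(b:ℝ)*q) = 0 := by
    intro k
    induction k using Nat.strong_induction_on with
    | _ k ih =>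
      intro a b hab
      rcases le_or_gt k 8 with hk | hk
      · refine hbase a b (hab.trans ?_)
        exact_mod_cast hk
      · have hk9 : (9:ℝ) ≤ (k:ℝ) := by exact_mod_cast hk
        have habs : 2*q*|(a:ℝ) - 2*(b:ℝ)*(q+1)| + 1 ≤ ((k-1 : ℕ) : ℝ) := by
          have hc : ((k-1 : ℕ) : ℝ) = (k:ℝ) - 1 := by
            have : 1 ≤ k := by omega
            push_cast [this]; ring
          rw [hc]
          nlinarith [mul_nonneg (by linarith : (0:ℝ) ≤ (k:ℝ) - 9) (by linarith : (0:ℝ) ≤ 1 - 2*q),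
            abs_nonneg ((a:ℝ) - 2*(b:ℝ)*(q+1))]
        have hA : ∀ e : ℤ, |(e:ℝ)| ≤ 1 → f (((2*(a+b)+e : ℤ) : ℝ) + 2*((a:ℤ):ℝ)*q) = 0 := by
          intro e he
          apply ih (k-1) (by omega) (2*(a+b)+e) a
          have key : ((2*(a+b)+e : ℤ):ℝ) - 2*((a:ℤ):ℝ)*(q+1) =
              (-(2*q))*((a:ℝ) - 2*(b:ℝ)*(q+1)) + (e:ℝ) := by
            push_cast
            linear_combination (-2*(b:ℝ)) * hq2
          rw [key]
          calc |(-(2*q))*((a:ℝ) - 2*(b:ℝ)*(q+1)) + (e:ℝ)|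
              ≤ |(-(2*q))*((a:ℝ) - 2*(b:ℝ)*(q+1))| + |(e:ℝ)| := abs_add_le _ _
            _ ≤ 2*q*|(a:ℝ) - 2*(b:ℝ)*(q+1)| + 1 := by
                rw [abs_mul, abs_neg, abs_of_pos (by linarith : (0:ℝ) < 2*q)]
                linarith
            _ ≤ ((k-1 : ℕ) : ℝ) := habs
        have e := hstep (a:ℝ) (b:ℝ) ((a:ℝ) + 2*(b:ℝ)*q)
          (((2*(a+b)+(-1) : ℤ) : ℝ) + 2*((a:ℤ):ℝ)*q)
          (((2*(a+b)+1 : ℤ) : ℝ) + 2*((a:ℤ):ℝ)*q)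
          (((2*(a+b)+0 : ℤ) : ℝ) + 2*((a:ℤ):ℝ)*q)
          (by ring) (by push_cast; ring) (by push_cast; ring) (by push_cast; ring)
        rw [hA (-1) (by norm_num), hA 1 (by norm_num), hA 0 (by norm_num)] at e
        simpa using e
  intro m n
  exact hmain ⌈|(m:ℝ) - 2*(n:ℝ)*(q+1)|⌉₊ m n (Nat.le_ceil _)
end

section
/- Let q = (3 − √5)/2 and let f : ℝ → ℝ be a solution of Schilling's problem for q. Then f(0) = 0, f(1 − q) = 0 and f(−1 + q) = 0. -/
theorem schilling_35_values (q : ℝ) (hq : q = (3 - Real.sqrt 5) / 2)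
    (f : ℝ → ℝ)
    (hfe : ∀ x : ℝ, f (q * x) = (1 / (4 * q)) * (f (x - 1) + f (x + 1) + 2 * f x))
    (hfv : ∀ x : ℝ, |x| > q / (1 - q) → f x = 0) :
    f 0 = 0 ∧ f (1 - q) = 0 ∧ f (-1 + q) = 0 := by
  have hs : Real.sqrt 5 ^ 2 = 5 := Real.sq_sqrt (by norm_num)
  have hsn : (0:ℝ) ≤ Real.sqrt 5 := Real.sqrt_nonneg 5
  have hs1 : 2 < Real.sqrt 5 := by nlinarith
  have hs2 : Real.sqrt 5 < 5/2 := by nlinarith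
  have hq1 : 1/4 < q := by rw [hq]; nlinarith
  have hq2 : q < 1/2 := by rw [hq]; nlinarith
  have hq0 : 0 < q := by linarith
  have hqsq : q^2 = 3*q - 1 := by rw [hq]; nlinarith
  have hQ : q / (1 - q) = 1 - q := by
    rw [div_eq_iff (by linarith : (1:ℝ) - q ≠ 0)]; nlinarith
  have h4q : (4:ℝ) * q ≠ 0 := by positivity
  -- f 0 = 0
  have h0 : f 0 = 0 := by
    have h := hfe 0
    rw [mul_zero] at h
    have e1 : f (0 - 1) = 0 := by
      apply hfv; rw [hQ]; rw [show (0:ℝ) - 1 = -1 by ring, abs_neg, abs_one]; linarith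
    have e2 : f (0 + 1) = 0 := by
      apply hfv; rw [hQ]; rw [show (0:ℝ) + 1 = 1 by ring, abs_one]; linarith
    rw [e1, e2] at h
    have h' : f 0 * (4 * q) = 2 * f 0 := by
      field_simp at h; linarith
    have h'' : f 0 * (4 * q - 2) = 0 := by linarith [h']
    rcases mul_eq_zero.1 h'' with h | h
    · exact h
    · exfalso; linarith
  -- f (1 - q) = 0
  have h1 : f (1 - q) = 0 := by
    have h := hfe (2 - q)
    have key : q * (2 - q) = 1 - q := by nlinarith
    rw [key] at h
    have e1 : f (2 - q + 1) = 0 := by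
      apply hfv; rw [hQ, abs_of_pos (by linarith)]; linarith
    have e2 : f (2 - q) = 0 := by
      apply hfv; rw [hQ, abs_of_pos (by linarith)]; linarith
    rw [show (2:ℝ) - q - 1 = 1 - q by ring, e1, e2] at h
    have h' : f (1 - q) * (4 * q) = f (1 - q) := by
      field_simp at h; linarith
    have h'' : f (1 - q) * (4 * q - 1) = 0 := by linarith
    rcases mul_eq_zero.1 h'' with h | h
    · exact h
    · exfalso; linarith
  -- f (-1 + q) = 0
  have h2 : f (-1 + q) = 0 := by
    have h := hfe (q - 2)
    have key : q * (q - 2) = -1 + q := by nlinarith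
    rw [key] at h
    have e1 : f (q - 2 - 1) = 0 := by
      apply hfv; rw [hQ, abs_of_neg (by linarith)]; linarith
    have e2 : f (q - 2) = 0 := by
      apply hfv; rw [hQ, abs_of_neg (by linarith)]; linarith
    rw [show q - 2 + 1 = -1 + q by ring, e1, e2] at h
    have h' : f (-1 + q) * (4 * q) = f (-1 + q) := by
      field_simp at h; linarith
    have h'' : f (-1 + q) * (4 * q - 1) = 0 := by linarith
    rcases mul_eq_zero.1 h'' with h | h
    · exact h
    · exfalso; linarith
  exact ⟨h0, h1, h2⟩
end

section
/- Let q = √2 − 1 and let f : ℝ → ℝ be a solution of Schilling's problem for q. Then f(q) = 0, f(−q) = 0, f(1 − q) = 0 and f(−1 + q) = 0. -/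
theorem schilling_sqrt2_values (q : ℝ) (hq : q = Real.sqrt 2 - 1)
    (f : ℝ → ℝ)
    (hfe : ∀ x : ℝ, f (q * x) = (1 / (4 * q)) * (f (x - 1) + f (x + 1) + 2 * f x))
    (hfv : ∀ x : ℝ, |x| > q / (1 - q) → f x = 0) :
    f q = 0 ∧ f (-q) = 0 ∧ f (1 - q) = 0 ∧ f (-1 + q) = 0 := by
  have hs : Real.sqrt 2 ^ 2 = 2 := Real.sq_sqrt (by norm_num)
  have hsnn : 0 ≤ Real.sqrt 2 := Real.sqrt_nonneg 2
  have hs1 : 1 < Real.sqrt 2 := by nlinarith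
  have hs2 : Real.sqrt 2 < 1.5 := by nlinarith
  have hq0 : 0 < q := by rw [hq]; linarith
  have hqhalf : q < 1/2 := by rw [hq]; nlinarith
  have hQ : q / (1 - q) < 1 := by
    rw [div_lt_one (by linarith)]; linarith
  -- vanishing for |x| ≥ 1
  have hz : ∀ x : ℝ, (1 : ℝ) ≤ |x| → f x = 0 := fun x hx => hfv x (lt_of_lt_of_le hQ hx)
  have h1 : f 1 = 0 := hz 1 (by rw [abs_one])
  have hm1 : f (-1) = 0 := hz (-1) (by rw [abs_neg, abs_one])
  have h2 : f 2 = 0 := hz 2 (by rw [abs_of_nonneg]; norm_num; norm_num)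
  have hm2 : f (-2) = 0 := hz (-2) (by rw [abs_of_nonpos] <;> norm_num)
  have h1q : f (1 + q) = 0 := hz (1 + q) (by rw [abs_of_nonneg] <;> linarith)
  have h2q : f (2 + q) = 0 := hz (2 + q) (by rw [abs_of_nonneg] <;> linarith)
  have hm1q : f (-1 - q) = 0 := hz (-1 - q) (by rw [abs_of_nonpos] <;> linarith)
  have hm2q : f (-2 - q) = 0 := hz (-2 - q) (by rw [abs_of_nonpos] <;> linarith)
  -- f 0 = 0
  have e0 := hfe 0
  have h0 : f 0 = 0 := by
    rw [mul_zero] at e0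
    norm_num [hm1, h1] at e0
    have h4q : (4 : ℝ) * q ≠ 0 := by positivity
    field_simp at e0
    nlinarith [e0]
  -- f q = 0
  have efq := hfe 1
  rw [mul_one] at efq
  norm_num [h0, h2, h1] at efq
  -- f (-q) = 0
  have efmq := hfe (-1)
  rw [mul_neg_one] at efmq
  norm_num [h0, hm2, hm1] at efmq
  -- q * (1 + q) = 1 - q
  have hqq : q * (1 + q) = 1 - q := by rw [hq]; nlinarith
  have e3 := hfe (1 + q)
  rw [hqq, show (1 + q - 1 : ℝ) = q by ring, show (1 + q + 1 : ℝ) = 2 + q by ring] at e3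
  rw [efq, h2q, h1q] at e3
  norm_num at e3
  have hqq2 : q * (-1 - q) = -1 + q := by rw [hq]; nlinarith
  have e4 := hfe (-1 - q)
  rw [hqq2, show (-1 - q - 1 : ℝ) = -2 - q by ring, show (-1 - q + 1 : ℝ) = -q by ring] at e4
  rw [hm2q, efmq, hm1q] at e4
  norm_num at e4
  exact ⟨efq, efmq, e3, e4⟩
end

section
/- Let q = (√5 − 1)/2 and let f : ℝ → ℝ be a solution of Schilling's problem for q. Then f(0) = 0, f(1) = 0, f(−1) = 0, f(q) = 0 and f(−q) = 0. -/
theorem schilling_golden_values (q : ℝ) (hq : q = (Real.sqrt 5 - 1) / 2)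
    (f : ℝ → ℝ)
    (hfe : ∀ x : ℝ, f (q * x) = (1 / (4 * q)) * (f (x - 1) + f (x + 1) + 2 * f x))
    (hfv : ∀ x : ℝ, |x| > q / (1 - q) → f x = 0) :
    f 0 = 0 ∧ f 1 = 0 ∧ f (-1) = 0 ∧ f q = 0 ∧ f (-q) = 0 := by
  have hs5 : Real.sqrt 5 ^ 2 = 5 := Real.sq_sqrt (by norm_num)
  have hsnn : (0:ℝ) ≤ Real.sqrt 5 := Real.sqrt_nonneg 5
  have hs2 : (2:ℝ) < Real.sqrt 5 := by nlinarith
  have hs3 : Real.sqrt 5 < 3 := by nlinarith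
  have hq0 : 0 < q := by rw [hq]; linarith
  have hq1 : q < 1 := by rw [hq]; linarith
  have hqsq : q ^ 2 = 1 - q := by rw [hq]; nlinarith
  have hQ : q / (1 - q) = 1 + q := by
    rw [div_eq_iff (by linarith)]; nlinarith
  have h4q : (0:ℝ) < 4 * q := by linarith
  have h4qne : (4 * q) ≠ 0 := ne_of_gt h4q
  have hv : ∀ x : ℝ, 1 + q < x → f x = 0 := by
    intro x hx
    exact hfv x (by rw [hQ, abs_of_pos (by linarith)]; exact hx)
  have hv' : ∀ x : ℝ, x < -(1 + q) → f x = 0 := by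
    intro x hx
    exact hfv x (by rw [hQ, abs_of_neg (by linarith)]; linarith)
  -- multiplied form of the functional equation
  have hfe' : ∀ x : ℝ, 4 * q * f (q * x) = f (x - 1) + f (x + 1) + 2 * f x := by
    intro x
    rw [hfe x]
    field_simp
  -- f(1+q) = 0
  have hfQp : f (1 + q) = 0 := by
    have e := hfe' (2 + q)
    have h0 : q * (2 + q) = 1 + q := by nlinarith
    have h1 : (2 + q - 1 : ℝ) = 1 + q := by ring
    rw [h0, h1, hv (2 + q + 1) (by linarith), hv (2 + q) (by linarith)] at e
    -- e : 4*q*f(1+q) = f(1+q) + 0 + 2*0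
    have hk : f (1 + q) * (4 * q - 1) = 0 := by linarith
    rcases mul_eq_zero.mp hk with h | h
    · exact h
    · linarith
  have hfQm : f (-(1 + q)) = 0 := by
    have e := hfe' (-(2 + q))
    have h0 : q * (-(2 + q)) = -(1 + q) := by nlinarith
    have h1 : (-(2 + q) + 1 : ℝ) = -(1 + q) := by ring
    rw [h0, h1, hv' (-(2 + q) - 1) (by linarith), hv' (-(2 + q)) (by linarith)] at e
    have hk : f (-(1 + q)) * (4 * q - 1) = 0 := by linarith
    rcases mul_eq_zero.mp hk with h | h
    · exact h
    · linarith
  -- the five equations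
  have E0 := hfe' 0
  rw [mul_zero] at E0
  norm_num at E0
  -- E0 : 4*q*f 0 = f (-1) + f 1 + 2*f 0
  have E1 := hfe' 1
  rw [mul_one] at E1
  norm_num at E1
  rw [hv 2 (by linarith)] at E1
  have Em1 := hfe' (-1)
  rw [mul_neg_one] at Em1
  norm_num at Em1
  rw [hv' (-2) (by linarith)] at Em1
  have E4 := hfe' (1 + q)
  have h0 : q * (1 + q) = 1 := by nlinarith
  have h1 : (1 + q - 1 : ℝ) = q := by ring
  have h2 : (1 + q + 1 : ℝ) = 2 + q := by ring
  rw [h0, h1, h2, hv (2 + q) (by linarith), hfQp] at E4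
  have E5 := hfe' (-(1 + q))
  have h3 : q * (-(1 + q)) = -1 := by nlinarith
  have h4 : (-(1 + q) - 1 : ℝ) = -(2 + q) := by ring
  have h5 : (-(1 + q) + 1 : ℝ) = -q := by ring
  rw [h3, h4, h5, hv' (-(2 + q)) (by linarith), hfQm] at E5
  -- linear algebra
  have k1 : (14 - 16 * q) * f 1 = f 0 := by
    linear_combination 4 * q * E4 + E1 - 16 * f 1 * hqsq
  have k2 : (14 - 16 * q) * f (-1) = f 0 := by
    linear_combination 4 * q * E5 + Em1 - 16 * f (-1) * hqsq
  have ha : f 0 * (152 * q - 94) = 0 := by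
    linear_combination (14 - 16 * q) * E0 + k1 + k2 + 64 * f 0 * hqsq
  have hne : 152 * q - 94 < 0 := by
    rw [hq]; nlinarith
  have ha0 : f 0 = 0 := by
    rcases mul_eq_zero.mp ha with h | h
    · exact h
    · linarith
  have hb : f 1 = 0 := by
    rw [ha0] at k1
    rcases mul_eq_zero.mp k1 with h | h
    · linarith
    · exact h
  have hc : f (-1) = 0 := by
    rw [ha0] at k2
    rcases mul_eq_zero.mp k2 with h | h
    · linarith
    · exact h
  have hd : f q = 0 := by
    rw [hb] at E4
    -- E4 : 4*q*f 1 = f q + 0 + 2*0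
    linarith
  have he : f (-q) = 0 := by
    rw [hc] at E5
    linarith
  exact ⟨ha0, hb, hc, hd, he⟩
end
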